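/- arXiv:2201.06155 — 4 statements merged into one kernel-verified Lean document; each statement's English description precedes it below -/
import Mathlib

section
/- (Corollary 3.2, Claim 1: non-occurrence of the Lavrentiev phenomenon for the one end point problem.) Assume Λ satisfies Condition (S) and that for every K > 0: Ψ is bounded on I×B_K; for every z ∈ B_K the map s ↦ Ψ(s,z) is continuous on I; there is m_{K,Ψ} > 0 such that Ψ(s,z) ≥ m_{K,Ψ} for all s ∈ I, z ∈ B_K; and there is ν₀ > 0 such that Λ is bounded on I×B_K×B_{ν₀}. Then for every X ∈ ℝⁿ, inf{ F(y) : y ∈ W^{1,p}(I;ℝⁿ), y(t)=X } = inf{ F(y) : y Lipschitz I → ℝⁿ, y(t)=X }. -/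
open MeasureTheory Set Filter ENNReal NNReal Metric Topology

set_option linter.unusedSectionVars false
set_option maxHeartbeats 1000000

noncomputable section

namespace LavAux

variable {t T : ℝ} {m : ℝ → ℝ}

/-- The time dilation `ρ`. -/
def rho (t : ℝ) (m : ℝ → ℝ) (s : ℝ) : ℝ := t + ∫ u in t..s, m u

/-- The inverse reparametrization `σ`. -/
def sig (t T : ℝ) (m : ℝ → ℝ) (τ : ℝ) : ℝ :=
  sSup (insert t {s ∈ Set.Icc t T | rho t m s ≤ τ})

section basic

variable (ht : t ≤ T) (hm_meas : Measurable m) (hm1 : ∀ s, 1 ≤ m s)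
  (hmint : IntegrableOn m (Set.Icc t T) volume)
  (hm_one : ∀ s, s ∉ Set.Icc t T → m s = 1)

include hm_meas hm1 hmint hm_one

lemma m_locint : ∀ a b : ℝ, IntervalIntegrable m volume a b := by
  intro a b
  have h1 : Integrable ((Set.Icc t T).indicator (fun s => m s - 1)) volume := by
    rw [integrable_indicator_iff measurableSet_Icc]
    exact hmint.sub (integrableOn_const measure_Icc_lt_top.ne)
  have h2 : m = fun s => (Set.Icc t T).indicator (fun s => m s - 1) s + 1 := by
    funext s
    by_cases hs : s ∈ Set.Icc t T
    · simp [Set.indicator_of_mem hs]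
    · simp [Set.indicator_of_notMem hs, hm_one s hs]
  rw [h2]
  exact ((h1.integrableOn).intervalIntegrable).add intervalIntegrable_const

lemma rho_sub (a b : ℝ) : rho t m b - rho t m a = ∫ u in a..b, m u := by
  simp only [rho, add_sub_add_left_eq_sub]
  rw [← intervalIntegral.integral_interval_sub_left (m_locint hm_meas hm1 hmint hm_one t b)
    (m_locint hm_meas hm1 hmint hm_one t a)]

lemma rho_sub_ge {a b : ℝ} (hab : a ≤ b) : b - a ≤ rho t m b - rho t m a := by
  rw [rho_sub hm_meas hm1 hmint hm_one]
  calc b - a = ∫ _ in a..b, (1:ℝ) := by simp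
  _ ≤ ∫ u in a..b, m u := by
      apply intervalIntegral.integral_mono_on hab intervalIntegrable_const
        (m_locint hm_meas hm1 hmint hm_one a b)
      intro x _; exact hm1 x

lemma rho_strictMono : StrictMono (rho t m) := by
  intro a b hab
  have := rho_sub_ge hm_meas hm1 hmint hm_one hab.le
  linarith

omit hm_meas hm1 hmint hm_one in
lemma rho_t : rho t m t = t := by simp [rho]

lemma le_rho {s : ℝ} (hs : t ≤ s) : s ≤ rho t m s := by
  have := rho_sub_ge hm_meas hm1 hmint hm_one hs
  rw [rho_t] at this
  linarith

omit hm_meas hm1 hm_one in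
include ht in
lemma rho_contOn : ContinuousOn (rho t m) (Set.Icc t T) := by
  have h : ContinuousOn (fun x => ∫ u in t..x, m u) (Set.uIcc t T) :=
    intervalIntegral.continuousOn_primitive_interval (by rwa [Set.uIcc_of_le ht])
  rw [Set.uIcc_of_le ht] at h
  exact continuousOn_const.add h

end basic

section sig

variable (ht : t ≤ T) (hm_meas : Measurable m) (hm1 : ∀ s, 1 ≤ m s)
  (hmint : IntegrableOn m (Set.Icc t T) volume)
  (hm_one : ∀ s, s ∉ Set.Icc t T → m s = 1)

include ht hm_meas hm1 hmint hm_one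

lemma sig_mem_Icc (τ : ℝ) : sig t T m τ ∈ Set.Icc t T := by
  have hsub : insert t {s ∈ Set.Icc t T | rho t m s ≤ τ} ⊆ Set.Icc t T := by
    rintro s (rfl | hs)
    · exact ⟨le_refl _, ht⟩
    · exact hs.1
  have hbdd : BddAbove (insert t {s ∈ Set.Icc t T | rho t m s ≤ τ}) :=
    (bddAbove_Icc).mono hsub
  constructor
  · exact le_csSup hbdd (Set.mem_insert _ _)
  · exact csSup_le (Set.insert_nonempty _ _) (fun x hx => (hsub hx).2)

lemma sig_mono : Monotone (sig t T m) := by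
  intro τ₁ τ₂ h
  have hsub : insert t {s ∈ Set.Icc t T | rho t m s ≤ τ₂} ⊆ Set.Icc t T := by
    rintro s (rfl | hs)
    · exact ⟨le_refl _, ht⟩
    · exact hs.1
  exact csSup_le_csSup (bddAbove_Icc.mono hsub) (Set.insert_nonempty _ _)
    (Set.insert_subset_insert (fun s hs => ⟨hs.1, hs.2.trans h⟩))

lemma sig_rho {s : ℝ} (hs : s ∈ Set.Icc t T) : sig t T m (rho t m s) = s := by
  have hset : insert t {s' ∈ Set.Icc t T | rho t m s' ≤ rho t m s} = Set.Icc t s := by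
    ext s'
    constructor
    · rintro (rfl | hs')
      · exact ⟨le_refl _, hs.1⟩
      · exact ⟨hs'.1.1, ((rho_strictMono hm_meas hm1 hmint hm_one).le_iff_le).1 hs'.2⟩
    · intro hs'
      right
      exact ⟨⟨hs'.1, hs'.2.trans hs.2⟩,
        (rho_strictMono hm_meas hm1 hmint hm_one).monotone hs'.2⟩
  rw [sig, hset, csSup_Icc hs.1]

lemma sig_t : sig t T m t = t := by
  have := sig_rho ht hm_meas hm1 hmint hm_one (Set.left_mem_Icc.2 ht)
  rwa [rho_t] at this

lemma rho_sig {τ : ℝ} (hτ : τ ∈ Set.Icc t (rho t m T)) : rho t m (sig t T m τ) = τ := by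
  have htτ : t ≤ τ := hτ.1
  have hins : insert t {s ∈ Set.Icc t T | rho t m s ≤ τ} =
      {s ∈ Set.Icc t T | rho t m s ≤ τ} := by
    apply Set.insert_eq_self.2
    exact ⟨Set.left_mem_Icc.2 ht, by rw [rho_t]; exact htτ⟩
  have hclosed : IsClosed {s ∈ Set.Icc t T | rho t m s ≤ τ} := by
    have : {s ∈ Set.Icc t T | rho t m s ≤ τ} =
        Set.Icc t T ∩ rho t m ⁻¹' (Set.Iic τ) := rfl
    rw [this]
    exact ContinuousOn.preimage_isClosed_of_isClosed
      (rho_contOn ht hmint) isClosed_Icc isClosed_Iic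
  have hne : {s ∈ Set.Icc t T | rho t m s ≤ τ}.Nonempty :=
    ⟨t, Set.left_mem_Icc.2 ht, by rw [rho_t]; exact htτ⟩
  have hbdd : BddAbove {s ∈ Set.Icc t T | rho t m s ≤ τ} :=
    (bddAbove_Icc).mono (fun s hs => hs.1)
  have hmem : sig t T m τ ∈ {s ∈ Set.Icc t T | rho t m s ≤ τ} := by
    rw [sig, hins]
    exact hclosed.csSup_mem hne hbdd
  rcases hmem with ⟨hmemI, hle⟩
  rcases lt_or_eq_of_le hle with hlt | heq
  · exfalso
    have hsT : sig t T m τ < T := by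
      rcases lt_or_eq_of_le hmemI.2 with h | h
      · exact h
      · exfalso; rw [h] at hlt; exact absurd hτ.2 (not_le.2 hlt)
    have hIVT : τ ∈ Set.Icc (rho t m (sig t T m τ)) (rho t m T) := ⟨hlt.le, hτ.2⟩
    have hcont : ContinuousOn (rho t m) (Set.Icc (sig t T m τ) T) :=
      (rho_contOn ht hmint).mono (Set.Icc_subset_Icc hmemI.1 le_rfl)
    obtain ⟨s', hs'mem, hs'⟩ := intermediate_value_Icc hsT.le hcont hIVT
    have hs'in : s' ∈ {s ∈ Set.Icc t T | rho t m s ≤ τ} :=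
      ⟨⟨hmemI.1.trans hs'mem.1, hs'mem.2⟩, le_of_eq hs'⟩
    have : s' ≤ sig t T m τ := by
      rw [sig, hins]; exact le_csSup hbdd hs'in
    have : rho t m s' ≤ rho t m (sig t T m τ) :=
      (rho_strictMono hm_meas hm1 hmint hm_one).monotone this
    rw [hs'] at this
    exact absurd hlt (not_lt.2 this)
  · exact heq

lemma sig_le_iff {τ s : ℝ} (hτ : τ ∈ Set.Icc t (rho t m T)) (hs : s ∈ Set.Icc t T) :
    sig t T m τ ≤ s ↔ τ ≤ rho t m s := by
  constructor
  · intro h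
    have := (rho_strictMono hm_meas hm1 hmint hm_one).monotone h
    rwa [rho_sig ht hm_meas hm1 hmint hm_one hτ] at this
  · intro h
    have := sig_mono ht hm_meas hm1 hmint hm_one h
    rwa [sig_rho ht hm_meas hm1 hmint hm_one hs] at this

lemma sig_measurable : Measurable (sig t T m) :=
  (sig_mono ht hm_meas hm1 hmint hm_one).measurable

lemma integral_Icc_m {b : ℝ} (hb : t ≤ b) :
    ∫ s in Set.Icc t b, m s = rho t m b - t := by
  have h1 : (∫ s in Set.Icc t b, m s) = ∫ s in Set.Ioc t b, m s := integral_Icc_eq_integral_Ioc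
  have h2 : (∫ u in t..b, m u) = ∫ s in Set.Ioc t b, m s := intervalIntegral.integral_of_le hb
  have h3 := rho_sub hm_meas hm1 hmint hm_one t b
  rw [rho_t] at h3
  rw [h1, ← h2, ← h3]

lemma map_sig {x : ℝ} (hx : x ∈ Set.Icc t (rho t m T)) :
    Measure.map (sig t T m) (volume.restrict (Set.Icc t x)) =
      (volume.withDensity (fun s => ENNReal.ofReal (m s))).restrict
        (Set.Icc t (sig t T m x)) := by
  have hσmeas := sig_measurable ht hm_meas hm1 hmint hm_one
  have hσx := sig_mem_Icc ht hm_meas hm1 hmint hm_one x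
  have hrsx : rho t m (sig t T m x) = x := rho_sig ht hm_meas hm1 hmint hm_one hx
  haveI : IsFiniteMeasure (Measure.map (sig t T m) (volume.restrict (Set.Icc t x))) := by
    haveI : IsFiniteMeasure (volume.restrict (Set.Icc t x)) :=
      ⟨by rw [Measure.restrict_apply_univ]; exact measure_Icc_lt_top⟩
    exact Measure.isFiniteMeasure_map _ _
  apply Measure.ext_of_Iic
  intro u
  rw [Measure.map_apply hσmeas measurableSet_Iic,
    Measure.restrict_apply (hσmeas measurableSet_Iic),
    Measure.restrict_apply measurableSet_Iic]
  by_cases hu : u < t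
  · have h1 : sig t T m ⁻¹' Set.Iic u ∩ Set.Icc t x = ∅ := by
      apply Set.eq_empty_of_forall_notMem
      intro τ ⟨hτ1, _⟩
      exact absurd (le_trans (sig_mem_Icc ht hm_meas hm1 hmint hm_one τ).1 hτ1) (not_le.2 hu)
    have h2 : Set.Iic u ∩ Set.Icc t (sig t T m x) = ∅ := by
      apply Set.eq_empty_of_forall_notMem
      intro τ ⟨hτ1, hτ2⟩
      exact absurd (le_trans hτ2.1 hτ1) (not_le.2 hu)
    rw [h1, h2]; simp
  · push_neg at hu
    set u' := min u T with hu'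
    have hu'mem : u' ∈ Set.Icc t T := ⟨le_min hu ht, min_le_right _ _⟩
    have hru' : t ≤ rho t m u' :=
      hu'mem.1.trans (le_rho hm_meas hm1 hmint hm_one hu'mem.1)
    have hset : sig t T m ⁻¹' Set.Iic u ∩ Set.Icc t x =
        Set.Icc t (min x (rho t m u')) := by
      ext τ
      constructor
      · rintro ⟨hτ1, hτ2⟩
        have hτR : τ ∈ Set.Icc t (rho t m T) := ⟨hτ2.1, hτ2.2.trans hx.2⟩
        have h1 : sig t T m τ ≤ u' :=
          le_min hτ1 (sig_mem_Icc ht hm_meas hm1 hmint hm_one τ).2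
        have h2 : τ ≤ rho t m u' :=
          (sig_le_iff ht hm_meas hm1 hmint hm_one hτR hu'mem).1 h1
        exact ⟨hτ2.1, le_min hτ2.2 h2⟩
      · rintro ⟨hτ1, hτ2⟩
        have hτx : τ ≤ x := hτ2.trans (min_le_left _ _)
        have hτR : τ ∈ Set.Icc t (rho t m T) := ⟨hτ1, hτx.trans hx.2⟩
        have h2 : sig t T m τ ≤ u' :=
          (sig_le_iff ht hm_meas hm1 hmint hm_one hτR hu'mem).2
            (hτ2.trans (min_le_right _ _))
        exact ⟨h2.trans (min_le_left _ _), hτ1, hτx⟩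
    have hset2 : Set.Iic u ∩ Set.Icc t (sig t T m x) =
        Set.Icc t (min (sig t T m x) u) := by
      ext τ
      simp only [Set.mem_inter_iff, Set.mem_Iic, Set.mem_Icc, le_min_iff, min_le_iff]
      constructor
      · rintro ⟨h1, h2, h3⟩; exact ⟨h2, h3, h1⟩
      · rintro ⟨h2, h3, h1⟩; exact ⟨h1, h2, h3⟩
    rw [hset, hset2, Real.volume_Icc,
      withDensity_apply _ measurableSet_Icc]
    have hminT : min (sig t T m x) u ≤ T := (min_le_left _ _).trans hσx.2
    have hint : IntegrableOn m (Set.Icc t (min (sig t T m x) u)) volume :=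
      hmint.mono_set (Set.Icc_subset_Icc le_rfl hminT)
    have hnn : 0 ≤ᵐ[volume.restrict (Set.Icc t (min (sig t T m x) u))] m :=
      Filter.Eventually.of_forall (fun s => le_trans zero_le_one (hm1 s))
    rw [← ofReal_integral_eq_lintegral_ofReal hint hnn]
    congr 1
    by_cases hbt : t ≤ min (sig t T m x) u
    · rw [integral_Icc_m ht hm_meas hm1 hmint hm_one hbt]
      have : rho t m (min (sig t T m x) u) = min x (rho t m u') := by
        rcases le_or_gt T u with hTu | huT
        · have h1 : min (sig t T m x) u = sig t T m x :=
            min_eq_left (hσx.2.trans hTu)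
          have h2 : u' = T := min_eq_right hTu
          rw [h1, hrsx, h2]
          exact (min_eq_left hx.2).symm
        · have h2 : u' = u := min_eq_left huT.le
          rw [(rho_strictMono hm_meas hm1 hmint hm_one).monotone.map_min, hrsx, h2]
      rw [this]
    · push_neg at hbt
      have h0 : min (sig t T m x) u - t ≤ 0 := by linarith
      have h1 : Set.Icc t (min (sig t T m x) u) = ∅ := Set.Icc_eq_empty (not_le.2 hbt)
      rw [h1]
      exfalso
      rcases min_lt_iff.1 hbt with h | h
      · exact absurd hσx.1 (not_le.2 h)
      · exact absurd hu (not_le.2 h)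

lemma lintegral_sig {x : ℝ} (hx : x ∈ Set.Icc t (rho t m T)) {H : ℝ → ℝ≥0∞}
    (hH : Measurable H) :
    ∫⁻ τ in Set.Icc t x, H (sig t T m τ) =
      ∫⁻ s in Set.Icc t (sig t T m x), ENNReal.ofReal (m s) * H s := by
  have h1 := lintegral_map (μ := volume.restrict (Set.Icc t x)) hH
    (sig_measurable ht hm_meas hm1 hmint hm_one)
  rw [← h1, map_sig ht hm_meas hm1 hmint hm_one hx,
    restrict_withDensity measurableSet_Icc,
    lintegral_withDensity_eq_lintegral_mul _ hm_meas.ennreal_ofReal hH]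
  simp only [Pi.mul_apply]

lemma ae_sig {x : ℝ} (hx : x ∈ Set.Icc t (rho t m T)) {P : ℝ → Prop}
    (hP : ∀ᵐ s ∂(volume.restrict (Set.Icc t T)), P s) :
    ∀ᵐ τ ∂(volume.restrict (Set.Icc t x)), P (sig t T m τ) := by
  apply ae_of_ae_map (sig_measurable ht hm_meas hm1 hmint hm_one).aemeasurable
  rw [map_sig ht hm_meas hm1 hmint hm_one hx]
  have hac : (volume.withDensity (fun s => ENNReal.ofReal (m s))).restrict
      (Set.Icc t (sig t T m x)) ≪ volume.restrict (Set.Icc t T) := by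
    have h1 := (withDensity_absolutelyContinuous volume
      (fun s => ENNReal.ofReal (m s))).restrict (Set.Icc t (sig t T m x))
    refine h1.trans (Measure.absolutelyContinuous_of_le ?_)
    exact Measure.restrict_mono
      (Set.Icc_subset_Icc le_rfl (sig_mem_Icc ht hm_meas hm1 hmint hm_one x).2) le_rfl
  exact hP.filter_mono hac.ae_le

lemma integral_sig {E : Type*} [NormedAddCommGroup E] [NormedSpace ℝ E]
    [MeasurableSpace E] [BorelSpace E] [SecondCountableTopology E]
    {x : ℝ} (hx : x ∈ Set.Icc t (rho t m T)) {w : ℝ → E} (hw : Measurable w) :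
    ∫ τ in Set.Icc t x, w (sig t T m τ) =
      ∫ s in Set.Icc t (sig t T m x), m s • w s := by
  have hσmeas := sig_measurable ht hm_meas hm1 hmint hm_one
  have h1 : ∫ τ in Set.Icc t x, w (sig t T m τ) =
      ∫ s, w s ∂(Measure.map (sig t T m) (volume.restrict (Set.Icc t x))) := by
    rw [integral_map hσmeas.aemeasurable hw.stronglyMeasurable.aestronglyMeasurable]
  rw [h1, map_sig ht hm_meas hm1 hmint hm_one hx]
  have h2 : (fun s => ENNReal.ofReal (m s)) =
      fun s => ((Real.toNNReal (m s) : ℝ≥0) : ℝ≥0∞) := rfl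
  rw [h2, restrict_withDensity measurableSet_Icc,
    integral_withDensity_eq_integral_smul (hm_meas.real_toNNReal) w]
  apply setIntegral_congr_fun measurableSet_Icc
  intro s _
  simp only [NNReal.smul_def, Real.coe_toNNReal _ (zero_le_one.trans (hm1 s))]

end sig

section phi

variable {n : ℕ}

/-- Countable approximation of `sup` of `Ψ(·, yc s)` over a window of radius `δ` around `s`. -/
def Phi (t T δ : ℝ) (Ψ : ℝ → EuclideanSpace ℝ (Fin n) → ℝ≥0∞)
    (yc : ℝ → EuclideanSpace ℝ (Fin n)) (s : ℝ) : ℝ≥0∞ :=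
  ⨆ q : ℚ, if |(q : ℝ)| ≤ 1 then Ψ (max t (min (s + q * δ) T)) (yc s) else 0

variable {t T δ K : ℝ} {Ψ : ℝ → EuclideanSpace ℝ (Fin n) → ℝ≥0∞}
  {yc : ℝ → EuclideanSpace ℝ (Fin n)}

lemma clamp_mem (ht : t ≤ T) (x : ℝ) : max t (min x T) ∈ Set.Icc t T :=
  ⟨le_max_left _ _, max_le ht (min_le_right _ _)⟩

lemma clamp_eq {x : ℝ} (hx : x ∈ Set.Icc t T) : max t (min x T) = x := by
  rw [min_eq_left hx.2, max_eq_right hx.1]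

lemma clamp_dist {s : ℝ} (hs : s ∈ Set.Icc t T) (x : ℝ) :
    |max t (min x T) - s| ≤ |x - s| := by
  conv_lhs => rw [← clamp_eq hs]
  calc |max t (min x T) - max t (min s T)| = |max (min x T) t - max (min s T) t| := by
        rw [max_comm t (min x T), max_comm t (min s T)]
  _ ≤ |min x T - min s T| := abs_max_sub_max_le_abs _ _ _
  _ ≤ max |x - s| |T - T| := abs_min_sub_min_le_max _ _ _ _
  _ ≤ |x - s| := by simp

lemma phi_meas (hΨm : Measurable fun q : ℝ × EuclideanSpace ℝ (Fin n) => Ψ q.1 q.2)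
    (hyc : Continuous yc) : Measurable (Phi t T δ Ψ yc) := by
  apply Measurable.iSup
  intro q
  by_cases hq : |(q : ℝ)| ≤ 1
  · simp only [if_pos hq]
    exact hΨm.comp ((continuous_const.max ((continuous_id.add continuous_const).min
      continuous_const)).measurable.prodMk hyc.measurable)
  · simp only [if_neg hq]
    exact measurable_const

lemma phi_le (ht : t ≤ T) (hδ : 0 ≤ δ) {M : ℝ≥0}
    (hM : ∀ s ∈ Set.Icc t T, ∀ z ∈ Metric.closedBall (0 : EuclideanSpace ℝ (Fin n)) K,
      Ψ s z ≤ M)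
    (hycK : ∀ s, yc s ∈ Metric.closedBall (0 : EuclideanSpace ℝ (Fin n)) K) (s : ℝ) :
    Phi t T δ Ψ yc s ≤ M := by
  apply iSup_le
  intro q
  by_cases hq : |(q : ℝ)| ≤ 1
  · rw [if_pos hq]
    exact hM _ (clamp_mem ht _) _ (hycK s)
  · rw [if_neg hq]; exact bot_le

lemma phi_ge (ht : t ≤ T) (hδ : 0 ≤ δ)
    (hΨcont : ∀ z ∈ Metric.closedBall (0 : EuclideanSpace ℝ (Fin n)) K,
      ContinuousOn (fun s => Ψ s z) (Set.Icc t T))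
    (hycK : ∀ s, yc s ∈ Metric.closedBall (0 : EuclideanSpace ℝ (Fin n)) K)
    {s : ℝ} (hs : s ∈ Set.Icc t T) {τ : ℝ}
    (hτ : τ ∈ Set.Icc (s - δ) (s + δ) ∩ Set.Icc t T) :
    Ψ τ (yc s) ≤ Phi t T δ Ψ yc s := by
  rcases eq_or_lt_of_le hδ with hδ0 | hδpos
  · -- δ = 0, so τ = s
    have hτs : τ = s := by
      rcases hτ.1 with ⟨h1, h2⟩
      rw [← hδ0] at h1 h2
      linarith
    subst hτs
    refine le_trans ?_ (le_iSup _ (0 : ℚ))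
    simp only [Rat.cast_zero, abs_zero, zero_mul, add_zero, if_pos zero_le_one,
      clamp_eq hs, le_refl]
  · -- approximate (τ - s)/δ by rationals in [-1,1]
    set d : ℝ := (τ - s) / δ with hd
    have hd1 : |d| ≤ 1 := by
      rw [abs_div, abs_of_pos hδpos, div_le_one hδpos]
      rw [abs_le]
      constructor <;> [linarith [hτ.1.1]; linarith [hτ.1.2]]
    -- rational sequence
    have hex : ∀ k : ℕ, ∃ q : ℚ, |d - (q:ℝ)| < 1 / (k + 1) := by
      intro k
      obtain ⟨q, hq⟩ := exists_rat_near d (by positivity : (0:ℝ) < 1 / (k+1))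
      exact ⟨q, hq⟩
    choose r hr using hex
    set q : ℕ → ℚ := fun k => max (-1) (min 1 (r k)) with hq
    have hq1 : ∀ k, |((q k : ℚ) : ℝ)| ≤ 1 := by
      intro k
      have : ((q k : ℚ) : ℝ) = max (-1) (min 1 ((r k : ℚ) : ℝ)) := by push_cast [hq]; ring_nf
      rw [this, abs_le]
      constructor
      · exact le_max_left _ _
      · exact max_le (by norm_num) (min_le_left _ _)
    have hrd : Tendsto (fun k => ((r k : ℚ) : ℝ)) atTop (𝓝 d) := by
      rw [tendsto_iff_dist_tendsto_zero]
      have h0 : Tendsto (fun k : ℕ => 1 / ((k:ℝ) + 1)) atTop (𝓝 0) :=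
        tendsto_one_div_add_atTop_nhds_zero_nat
      apply squeeze_zero (g := fun k : ℕ => 1 / ((k:ℝ) + 1)) (fun k => dist_nonneg)
        (fun k => ?_) h0
      rw [Real.dist_eq, abs_sub_comm]
      exact (hr k).le
    have hqd : Tendsto (fun k => ((q k : ℚ) : ℝ)) atTop (𝓝 d) := by
      have : ∀ k, ((q k : ℚ) : ℝ) = max (-1) (min 1 ((r k : ℚ) : ℝ)) := by
        intro k; push_cast [hq]; ring_nf
      simp only [this]
      have hdd : d = max (-1) (min 1 d) := by
        rcases abs_le.1 hd1 with ⟨h1, h2⟩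
        rw [min_eq_right h2, max_eq_right h1]
      rw [hdd]
      exact (tendsto_const_nhds.max (tendsto_const_nhds.min hrd)).congr (fun k => rfl)
    -- the clamped points tend to τ within Icc t T
    have hτs : s + d * δ = τ := by rw [hd, div_mul_cancel₀ _ hδpos.ne']; ring
    have hpt : Tendsto (fun k => max t (min (s + (q k : ℝ) * δ) T)) atTop (𝓝 τ) := by
      have h1 : Tendsto (fun k => s + ((q k : ℚ) : ℝ) * δ) atTop (𝓝 (s + d * δ)) :=
        tendsto_const_nhds.add (hqd.mul tendsto_const_nhds)
      rw [hτs] at h1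
      have h2 : Tendsto (fun k => max t (min (s + ((q k : ℚ) : ℝ) * δ) T)) atTop
          (𝓝 (max t (min τ T))) :=
        tendsto_const_nhds.max (h1.min tendsto_const_nhds)
      rwa [clamp_eq hτ.2] at h2
    have hcont := (hΨcont (yc s) (hycK s)) τ hτ.2
    have htend : Tendsto (fun k => Ψ (max t (min (s + (q k : ℝ) * δ) T)) (yc s)) atTop
        (𝓝 (Ψ τ (yc s))) := by
      apply hcont.tendsto.comp
      rw [tendsto_nhdsWithin_iff]
      exact ⟨hpt, Filter.Eventually.of_forall (fun k => clamp_mem ht _)⟩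
    apply le_of_tendsto htend
    apply Filter.Eventually.of_forall
    intro k
    refine le_trans ?_ (le_iSup _ (q k))
    rw [if_pos (hq1 k)]

lemma phi_tendsto (ht : t ≤ T) {δseq : ℕ → ℝ} (hδ0 : ∀ j, 0 ≤ δseq j)
    (hδto : Tendsto δseq atTop (𝓝 0)) {M : ℝ≥0}
    (hM : ∀ s ∈ Set.Icc t T, ∀ z ∈ Metric.closedBall (0 : EuclideanSpace ℝ (Fin n)) K,
      Ψ s z ≤ M)
    (hΨcont : ∀ z ∈ Metric.closedBall (0 : EuclideanSpace ℝ (Fin n)) K,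
      ContinuousOn (fun s => Ψ s z) (Set.Icc t T))
    (hycK : ∀ s, yc s ∈ Metric.closedBall (0 : EuclideanSpace ℝ (Fin n)) K)
    {s : ℝ} (hs : s ∈ Set.Icc t T) :
    Tendsto (fun j => Phi t T (δseq j) Ψ yc s) atTop (𝓝 (Ψ s (yc s))) := by
  have hge : ∀ j, Ψ s (yc s) ≤ Phi t T (δseq j) Ψ yc s := by
    intro j
    refine le_trans ?_ (le_iSup _ (0 : ℚ))
    simp only [Rat.cast_zero, abs_zero, zero_mul, add_zero, if_pos zero_le_one,
      clamp_eq hs, le_refl]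
  have hfin : Ψ s (yc s) ≠ ⊤ :=
    ne_top_of_le_ne_top coe_ne_top (hM s hs _ (hycK s))
  rw [tendsto_order]
  constructor
  · intro a ha
    exact Filter.Eventually.of_forall (fun j => lt_of_lt_of_le ha (hge j))
  · intro a ha
    obtain ⟨r, hr0, hra⟩ := ENNReal.lt_iff_exists_add_pos_lt.1 ha
    -- continuity gives a window where Ψ is ≤ Ψ s (yc s) + r
    have hcont := (hΨcont (yc s) (hycK s)) s hs
    have hmem : Set.Iio (Ψ s (yc s) + r) ∈ 𝓝 (Ψ s (yc s)) :=
      Iio_mem_nhds (ENNReal.lt_add_right hfin (by exact_mod_cast hr0.ne'))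
    have hmem' := Filter.mem_map.1 (hcont hmem)
    rw [Metric.mem_nhdsWithin_iff] at hmem'
    obtain ⟨d, hd0, hsub⟩ := hmem'
    have hev : ∀ᶠ j in atTop, δseq j < d := by
      have := hδto.eventually (eventually_lt_nhds hd0)
      simpa using this
    filter_upwards [hev] with j hj
    have hsup : Phi t T (δseq j) Ψ yc s ≤ Ψ s (yc s) + r := by
      apply iSup_le
      intro q
      by_cases hq : |(q : ℝ)| ≤ 1
      · rw [if_pos hq]
        have hmem2 : max t (min (s + q * δseq j) T) ∈ Metric.ball s d ∩ Set.Icc t T := by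
          constructor
          · rw [Metric.mem_ball, Real.dist_eq]
            calc |max t (min (s + q * δseq j) T) - s| ≤ |s + q * δseq j - s| :=
                clamp_dist hs _
            _ = |(q:ℝ)| * |δseq j| := by rw [add_sub_cancel_left, abs_mul]
            _ ≤ 1 * |δseq j| := by
                apply mul_le_mul_of_nonneg_right hq (abs_nonneg _)
            _ < d := by rw [one_mul, abs_of_nonneg (hδ0 j)]; exact hj
          · exact clamp_mem ht _
        exact le_of_lt (hsub hmem2)
      · rw [if_neg hq]; exact bot_le
    exact lt_of_le_of_lt hsup hra

end phi

end LavAux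


/-- Euclidean space `ℝⁿ`. -/
abbrev EN (n : ℕ) := EuclideanSpace ℝ (Fin n)

/-- `y` belongs to `W^{1,p}([t,T];ℝⁿ)` with derivative `y'`: it is absolutely continuous,
given by the integral of `y'`, and both `y` and `y'` are in `L^p` on `[t,T]`. -/
def MemW1p {n : ℕ} (t T p : ℝ) (y y' : ℝ → EN n) : Prop :=
  IntervalIntegrable y' volume t T ∧
  (∀ x ∈ Set.Icc t T, y x = y t + ∫ s in t..x, y' s) ∧
  MemLp y (ENNReal.ofReal p) (volume.restrict (Set.Icc t T)) ∧
  MemLp y' (ENNReal.ofReal p) (volume.restrict (Set.Icc t T))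

/-- The functional `F(y) = ∫_t^T Λ(s,y(s),y'(s)) Ψ(s,y(s)) ds`. -/
def Func {n : ℕ} (t T : ℝ) (Λ : ℝ → EN n → EN n → ℝ≥0∞) (Ψ : ℝ → EN n → ℝ≥0∞)
    (y y' : ℝ → EN n) : ℝ≥0∞ :=
  ∫⁻ s in Set.Icc t T, Λ s (y s) (y' s) * Ψ s (y s)

/-- Condition (S): a local Lipschitz-type condition on the time variable of `Λ`. -/
def ConditionS {n : ℕ} (t T p : ℝ) (Λ : ℝ → EN n → EN n → ℝ≥0∞) : Prop :=
  ∀ K : ℝ, 0 ≤ K → ∃ κ β : ℝ, 0 ≤ κ ∧ 0 ≤ β ∧ ∃ γ : ℝ → ℝ,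
    IntegrableOn γ (Set.Icc t T) volume ∧ ∃ ε : ℝ, 0 < ε ∧
      ∀ᵐ s ∂(volume.restrict (Set.Icc t T)),
        ∀ s₁ ∈ Set.Icc (s - ε) (s + ε) ∩ Set.Icc t T,
        ∀ s₂ ∈ Set.Icc (s - ε) (s + ε) ∩ Set.Icc t T,
        ∀ z ∈ Metric.closedBall (0 : EN n) K, ∀ v : EN n,
          Λ s z v < ⊤ →
          (Λ s₂ z v - Λ s₁ z v) ⊔ (Λ s₁ z v - Λ s₂ z v) ≤
            (ENNReal.ofReal κ * Λ s z v + ENNReal.ofReal (β * ‖v‖ ^ p + γ s)) *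
              ENNReal.ofReal |s₂ - s₁|

lemma lav_key_estimate {n : ℕ}
    (t T : ℝ) (ht : t ≤ T) (p : ℝ) (hp : 1 ≤ p)
    (Λ : ℝ → EN n → EN n → ℝ≥0∞) (Ψ : ℝ → EN n → ℝ≥0∞)
    (hΛm : Measurable fun q : ℝ × EN n × EN n => Λ q.1 q.2.1 q.2.2)
    (hΨm : Measurable fun q : ℝ × EN n => Ψ q.1 q.2)
    (X : EN n) (y g : ℝ → EN n) (hgmeas : Measurable g)
    (hW : MemW1p t T p y g) (hyt : y t = X)
    (yc : ℝ → EN n) (hyc : yc = fun s => y (max t (min s T)))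
    (hyccont : Continuous yc)
    (K : ℝ) (hK : 0 < K) (hycK : ∀ s, yc s ∈ Metric.closedBall (0 : EN n) K)
    (hΨcont : ∀ z ∈ Metric.closedBall (0 : EN n) K,
      ContinuousOn (fun s => Ψ s z) (Set.Icc t T))
    (κ β : ℝ) (hκ : 0 ≤ κ) (hβ : 0 ≤ β) (γ : ℝ → ℝ) (hγmeas : Measurable γ)
    (ε₀ : ℝ) (hε₀ : 0 < ε₀)
    (hSae : ∀ᵐ s ∂(volume.restrict (Set.Icc t T)),
        ∀ s₁ ∈ Set.Icc (s - ε₀) (s + ε₀) ∩ Set.Icc t T,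
        ∀ s₂ ∈ Set.Icc (s - ε₀) (s + ε₀) ∩ Set.Icc t T,
        ∀ z ∈ Metric.closedBall (0 : EN n) K, ∀ v : EN n,
          Λ s z v < ⊤ →
          (Λ s₂ z v - Λ s₁ z v) ⊔ (Λ s₁ z v - Λ s₂ z v) ≤
            (ENNReal.ofReal κ * Λ s z v + ENNReal.ofReal (β * ‖v‖ ^ p + γ s)) *
              ENNReal.ofReal |s₂ - s₁|)
    (ν₀ : ℝ) (hν₀ : 0 < ν₀) (M_Λ M_Ψ : ℝ≥0)
    (hMΛ : ∀ s ∈ Set.Icc t T, ∀ z ∈ Metric.closedBall (0 : EN n) K,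
      ∀ v ∈ Metric.closedBall (0 : EN n) ν₀, Λ s z v ≤ M_Λ)
    (hMΨ : ∀ s ∈ Set.Icc t T, ∀ z ∈ Metric.closedBall (0 : EN n) K, Ψ s z ≤ M_Ψ)
    (hΛfin : ∀ᵐ s ∂(volume.restrict (Set.Icc t T)), Λ s (yc s) (g s) ≠ ⊤)
    (ν : ℝ) (hνν₀ : ν₀ ≤ ν) (hν1 : 1 ≤ ν)
    (δ : ℝ) (hδdef : δ = ∫ s in Set.Icc t T, (if ν < ‖g s‖ then ‖g s‖ / ν₀ else 0))
    (hδε : δ ≤ ε₀) :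
    sInf {c : ℝ≥0∞ | ∃ y y' : ℝ → EN n, MemW1p t T p y y' ∧
        (∃ C : ℝ≥0, LipschitzOnWith C y (Set.Icc t T)) ∧ y t = X ∧
        c = Func t T Λ Ψ y y'} ≤
      (M_Λ : ℝ≥0∞) * (M_Ψ : ℝ≥0∞) * ENNReal.ofReal δ
        + (1 + ENNReal.ofReal κ * ENNReal.ofReal δ) *
            (∫⁻ s in Set.Icc t T, Λ s (yc s) (g s) * LavAux.Phi t T δ Ψ yc s)
        + ENNReal.ofReal δ * (M_Ψ : ℝ≥0∞) *
            (∫⁻ s in Set.Icc t T, ENNReal.ofReal (β * ‖g s‖ ^ p + |γ s|)) := by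
  classical
  haveI hfinmeas : IsFiniteMeasure (volume.restrict (Set.Icc t T)) :=
    ⟨by rw [Measure.restrict_apply_univ]; exact measure_Icc_lt_top⟩
  -- the bad-set indicator integrand
  set bad : ℝ → ℝ := fun s => if ν < ‖g s‖ then ‖g s‖ / ν₀ else 0 with hbad

  classical
  haveI hfinmeas : IsFiniteMeasure (volume.restrict (Set.Icc t T)) :=
    ⟨by rw [Measure.restrict_apply_univ]; exact measure_Icc_lt_top⟩
  have hνpos : (0:ℝ) < ν := lt_of_lt_of_le zero_lt_one hν1
  have hCL : (0:ℝ) ≤ max ν ν₀ := le_max_of_le_left hνpos.le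
  -- integrability of g
  have hgint : IntegrableOn g (Set.Icc t T) volume := by
    apply hW.2.2.2.integrable
    rw [← ENNReal.ofReal_one]
    exact ENNReal.ofReal_le_ofReal hp
  -- the bad-set indicator integrand
  set bad : ℝ → ℝ := fun s => if ν < ‖g s‖ then ‖g s‖ / ν₀ else 0 with hbad
  have hbad_nonneg : ∀ s, 0 ≤ bad s := by
    intro s; rw [hbad]; dsimp only; split_ifs with h
    · positivity
    · exact le_refl 0
  have hδ0 : 0 ≤ δ := by
    rw [hδdef]; exact setIntegral_nonneg measurableSet_Icc (fun s _ => hbad_nonneg s)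
  have hBmeas : MeasurableSet {s : ℝ | ν < ‖g s‖} :=
    measurableSet_lt measurable_const hgmeas.norm
  have hbad_meas : Measurable bad :=
    Measurable.ite hBmeas (hgmeas.norm.div_const ν₀) measurable_const
  have hbad_int : IntegrableOn bad (Set.Icc t T) volume := by
    apply Integrable.mono' (hgint.norm.div_const ν₀) hbad_meas.aestronglyMeasurable
    apply Filter.Eventually.of_forall
    intro s
    rw [Real.norm_eq_abs, abs_of_nonneg (hbad_nonneg s), hbad]
    dsimp only; split_ifs with h
    · exact le_refl _
    · positivity
  -- the speed function m
  set m : ℝ → ℝ := fun s => if s ∈ Set.Icc t T ∧ ν < ‖g s‖ then ‖g s‖ / ν₀ else 1 with hm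
  have hm_meas : Measurable m :=
    Measurable.ite (measurableSet_Icc.inter hBmeas) (hgmeas.norm.div_const ν₀)
      measurable_const
  have hm1 : ∀ s, 1 ≤ m s := by
    intro s; rw [hm]; dsimp only; split_ifs with h
    · rw [le_div_iff₀ hν₀, one_mul]
      exact hνν₀.trans h.2.le
    · exact le_refl 1
  have hm_pos : ∀ s, 0 < m s := fun s => lt_of_lt_of_le zero_lt_one (hm1 s)
  have hm_one : ∀ s, s ∉ Set.Icc t T → m s = 1 := by
    intro s hs; rw [hm]; dsimp only; rw [if_neg (fun hc => hs hc.1)]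
  have hmIcc : ∀ s ∈ Set.Icc t T, m s - 1 ≤ bad s := by
    intro s hs; rw [hm, hbad]; dsimp only
    by_cases h : ν < ‖g s‖
    · rw [if_pos ⟨hs, h⟩, if_pos h]; linarith
    · rw [if_neg (fun hc => h hc.2), if_neg h]; linarith
  have hmbad : ∀ s ∈ Set.Icc t T, m s ≤ 1 + bad s := by
    intro s hs; linarith [hmIcc s hs]
  have hmint : IntegrableOn m (Set.Icc t T) volume := by
    apply Integrable.mono' ((integrable_const (1:ℝ)).add hbad_int)
      hm_meas.aestronglyMeasurable
    apply (ae_restrict_mem measurableSet_Icc).mono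
    intro s hs
    rw [Real.norm_eq_abs, abs_of_pos (hm_pos s)]
    exact hmbad s hs
  -- reparametrization
  set σf := LavAux.sig t T m with hσf
  set ρf := LavAux.rho t m with hρf
  have hTR : T ≤ ρf T := LavAux.le_rho hm_meas hm1 hmint hm_one ht
  have hTmem : T ∈ Set.Icc t (ρf T) := ⟨ht, hTR⟩
  have hσmeas : Measurable σf := LavAux.sig_measurable ht hm_meas hm1 hmint hm_one
  have hσIcc : ∀ τ, σf τ ∈ Set.Icc t T := LavAux.sig_mem_Icc ht hm_meas hm1 hmint hm_one
  have hσt : σf t = t := LavAux.sig_t ht hm_meas hm1 hmint hm_one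
  have hσρT : σf (ρf T) = T := by
    have := LavAux.sig_rho (m := m) ht hm_meas hm1 hmint hm_one (Set.right_mem_Icc.2 ht)
    exact this
  -- ρ s - s ≤ δ on Icc t T
  have hρle : ∀ s ∈ Set.Icc t T, ρf s - s ≤ δ := by
    intro s hs
    have hII : ∀ a b : ℝ, IntervalIntegrable (fun u => m u - 1) volume a b :=
      fun a b => (LavAux.m_locint hm_meas hm1 hmint hm_one a b).sub
        intervalIntegrable_const
    have h1 : ρf s - s = ∫ u in t..s, (m u - 1) := by
      have h2 := LavAux.rho_sub hm_meas hm1 hmint hm_one t s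
      rw [LavAux.rho_t] at h2
      rw [intervalIntegral.integral_sub (LavAux.m_locint hm_meas hm1 hmint hm_one t s)
        intervalIntegrable_const, intervalIntegral.integral_const, smul_eq_mul, mul_one,
        ← h2]
      ring
    have h2 : ∫ u in t..s, (m u - 1) ≤ ∫ u in t..T, (m u - 1) := by
      have hadd := intervalIntegral.integral_add_adjacent_intervals (hII t s) (hII s T)
      have hnn : 0 ≤ ∫ u in s..T, (m u - 1) :=
        intervalIntegral.integral_nonneg hs.2 (fun u _ => by linarith [hm1 u])
      linarith
    have h3 : ∫ u in t..T, (m u - 1) ≤ δ := by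
      rw [hδdef, intervalIntegral.integral_of_le ht, ← integral_Icc_eq_integral_Ioc]
      apply setIntegral_mono_on (hmint.sub (integrableOn_const
        measure_Icc_lt_top.ne)) hbad_int measurableSet_Icc
      intro u hu
      exact hmIcc u hu
    linarith
  -- velocity bound
  have hgm : ∀ u ∈ Set.Icc t T, ‖g u‖ ≤ max ν ν₀ * m u := by
    intro u hu
    rw [hm]; dsimp only
    by_cases h : ν < ‖g u‖
    · rw [if_pos ⟨hu, h⟩]
      have h1 : ν₀ * (‖g u‖ / ν₀) = ‖g u‖ := by field_simp
      calc ‖g u‖ = ν₀ * (‖g u‖ / ν₀) := h1.symm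
      _ ≤ max ν ν₀ * (‖g u‖ / ν₀) := by
          apply mul_le_mul_of_nonneg_right (le_max_right _ _) (by positivity)
    · rw [if_neg (fun hc => h hc.2), mul_one]
      exact (not_lt.1 h).trans (le_max_left _ _)
  set w : ℝ → EN n := fun s => (m s)⁻¹ • g s with hw
  have hw_meas : Measurable w := (hm_meas.inv).smul hgmeas
  have hw_bd : ∀ s ∈ Set.Icc t T, ‖w s‖ ≤ max ν ν₀ := by
    intro s hs
    rw [hw]; dsimp only
    rw [norm_smul, Real.norm_eq_abs, abs_of_pos (inv_pos.2 (hm_pos s))]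
    calc (m s)⁻¹ * ‖g s‖ ≤ (m s)⁻¹ * (max ν ν₀ * m s) :=
        mul_le_mul_of_nonneg_left (hgm s hs) (inv_nonneg.2 (hm_pos s).le)
    _ = max ν ν₀ := by field_simp [(hm_pos s).ne']
  set z : ℝ → EN n := fun τ => yc (σf τ) with hz
  set z' : ℝ → EN n := fun τ => w (σf τ) with hz'
  have hcl : ∀ s ∈ Set.Icc t T, yc s = y s := by
    intro s hs; rw [hyc]; dsimp only; rw [LavAux.clamp_eq hs]
  have hzt : z t = X := by
    rw [hz]; dsimp only; rw [hσt, hcl t (Set.left_mem_Icc.2 ht), hyt]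
  have hydiff : ∀ a b : ℝ, a ∈ Set.Icc t T → b ∈ Set.Icc t T →
      y b - y a = ∫ u in a..b, g u := by
    intro a b ha hb
    have hIIx : ∀ x : ℝ, x ∈ Set.Icc t T → IntervalIntegrable g volume t x := by
      intro x hx
      apply (hgint.mono_set ?_).intervalIntegrable
      rw [Set.uIcc_of_le hx.1]
      exact Set.Icc_subset_Icc le_rfl hx.2
    rw [hW.2.1 b hb, hW.2.1 a ha]
    rw [← intervalIntegral.integral_interval_sub_left (hIIx b hb) (hIIx a ha)]
    abel
  -- Lipschitz property
  have hmainlip : ∀ a b : ℝ, a ∈ Set.Icc t T → b ∈ Set.Icc t T → a ≤ b →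
      ‖z b - z a‖ ≤ max ν ν₀ * (b - a) := by
    intro a b ha hb hab
    have hσab : σf a ≤ σf b := LavAux.sig_mono ht hm_meas hm1 hmint hm_one hab
    have hsub : Set.uIcc (σf a) (σf b) ⊆ Set.Icc t T := by
      rw [Set.uIcc_of_le hσab]
      exact Set.Icc_subset_Icc (hσIcc a).1 (hσIcc b).2
    have h1 : z b - z a = ∫ u in σf a..σf b, g u := by
      rw [hz]; dsimp only
      rw [hcl _ (hσIcc b), hcl _ (hσIcc a)]
      exact hydiff _ _ (hσIcc a) (hσIcc b)
    have hamem : a ∈ Set.Icc t (ρf T) := ⟨ha.1, ha.2.trans hTR⟩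
    have hbmem : b ∈ Set.Icc t (ρf T) := ⟨hb.1, hb.2.trans hTR⟩
    rw [h1]
    calc ‖∫ u in σf a..σf b, g u‖ ≤ ∫ u in σf a..σf b, ‖g u‖ :=
        intervalIntegral.norm_integral_le_integral_norm hσab
    _ ≤ ∫ u in σf a..σf b, max ν ν₀ * m u := by
        apply intervalIntegral.integral_mono_on hσab
          (IntegrableOn.intervalIntegrable ((hgint.mono_set hsub).norm))
          (((hmint.mono_set hsub).intervalIntegrable).const_mul _)
        intro u hu
        exact hgm u (hsub (by rwa [Set.uIcc_of_le hσab]))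
    _ = max ν ν₀ * ∫ u in σf a..σf b, m u := by
        rw [intervalIntegral.integral_const_mul]
    _ = max ν ν₀ * (ρf (σf b) - ρf (σf a)) := by
        rw [hρf, ← LavAux.rho_sub hm_meas hm1 hmint hm_one]
    _ = max ν ν₀ * (b - a) := by
        rw [hρf, hσf, LavAux.rho_sig ht hm_meas hm1 hmint hm_one hbmem,
          LavAux.rho_sig ht hm_meas hm1 hmint hm_one hamem]
  have hlip : LipschitzOnWith (Real.toNNReal (max ν ν₀)) z (Set.Icc t T) := by
    rw [lipschitzOnWith_iff_dist_le_mul]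
    intro τ₁ h1 τ₂ h2
    rw [dist_eq_norm, Real.dist_eq, Real.coe_toNNReal _ hCL]
    rcases le_total τ₁ τ₂ with h | h
    · rw [norm_sub_rev, abs_of_nonpos (by linarith)]
      have := hmainlip τ₁ τ₂ h1 h2 h
      linarith
    · rw [abs_of_nonneg (by linarith)]
      exact hmainlip τ₂ τ₁ h2 h1 h
  -- z' bound and measurability
  have hz'_bd : ∀ τ, ‖z' τ‖ ≤ max ν ν₀ := fun τ => hw_bd (σf τ) (hσIcc τ)
  have hz'_meas : Measurable z' := hw_meas.comp hσmeas
  have hz_meas : Measurable z := hyccont.measurable.comp hσmeas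
  have hzK : ∀ τ, ‖z τ‖ ≤ K := by
    intro τ
    have := hycK (σf τ)
    rwa [Metric.mem_closedBall, dist_zero_right] at this
  -- MemW1p z z'
  have hWz : MemW1p t T p z z' := by
    refine ⟨?_, ?_, ?_, ?_⟩
    · rw [intervalIntegrable_iff, Set.uIoc_of_le ht]
      apply Integrable.mono' (integrableOn_const (C := max ν ν₀) measure_Ioc_lt_top.ne)
        hz'_meas.aestronglyMeasurable
      exact Filter.Eventually.of_forall hz'_bd
    · intro x hx
      have hxmem : x ∈ Set.Icc t (ρf T) := ⟨hx.1, hx.2.trans hTR⟩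
      have h1 : ∫ s in t..x, z' s = ∫ s in Set.Icc t x, w (σf s) := by
        rw [intervalIntegral.integral_of_le hx.1, ← integral_Icc_eq_integral_Ioc]
      have h2 := LavAux.integral_sig ht hm_meas hm1 hmint hm_one hxmem hw_meas
      have h3 : ∫ s in Set.Icc t (σf x), m s • w s = ∫ s in Set.Icc t (σf x), g s := by
        apply setIntegral_congr_fun measurableSet_Icc
        intro s _
        rw [hw]; dsimp only
        rw [smul_smul, mul_inv_cancel₀ (hm_pos s).ne', one_smul]
      have h4 : ∫ s in Set.Icc t (σf x), g s = ∫ s in t..σf x, g s := by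
        rw [intervalIntegral.integral_of_le (hσIcc x).1, integral_Icc_eq_integral_Ioc]
      rw [h1, h2, h3, h4]
      have h5 := hW.2.1 (σf x) (hσIcc x)
      have h6 : z x = y (σf x) := by rw [hz]; dsimp only; rw [hcl _ (hσIcc x)]
      have h7 : z t = y t := by rw [hzt, hyt]
      rw [h6, h7, h5]
    · apply MemLp.of_bound hz_meas.aestronglyMeasurable K
      exact Filter.Eventually.of_forall hzK
    · apply MemLp.of_bound hz'_meas.aestronglyMeasurable (max ν ν₀)
      exact Filter.Eventually.of_forall hz'_bd
  -- measurable integrand pieces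
  have hΛc : Measurable fun s => Λ s (yc s) (g s) :=
    hΛm.comp (measurable_id.prodMk (hyccont.measurable.prodMk hgmeas))
  have hPhimeas : Measurable (LavAux.Phi t T δ Ψ yc) := LavAux.phi_meas hΨm hyccont
  have hpow_meas : Measurable fun s : ℝ => β * ‖g s‖ ^ p + γ s :=
    ((hgmeas.norm.pow_const p).const_mul β).add hγmeas
  -- the majorant H
  set H : ℝ → ℝ≥0∞ := fun s =>
    if ν < ‖g s‖ then (M_Λ : ℝ≥0∞) * (M_Ψ : ℝ≥0∞) else
      ((1 + ENNReal.ofReal κ * ENNReal.ofReal δ) * Λ s (yc s) (g s)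
        + ENNReal.ofReal (β * ‖g s‖ ^ p + γ s) * ENNReal.ofReal δ)
        * LavAux.Phi t T δ Ψ yc s with hH
  have hHmeas : Measurable H := by
    apply Measurable.ite hBmeas measurable_const
    exact ((measurable_const.mul hΛc).add
      (hpow_meas.ennreal_ofReal.mul measurable_const)).mul hPhimeas
  -- the pointwise a.e. bound
  have hP : ∀ᵐ s ∂(volume.restrict (Set.Icc t T)),
      (∀ s₁ ∈ Set.Icc (s - ε₀) (s + ε₀) ∩ Set.Icc t T,
        ∀ s₂ ∈ Set.Icc (s - ε₀) (s + ε₀) ∩ Set.Icc t T,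
        ∀ zz ∈ Metric.closedBall (0 : EN n) K, ∀ v : EN n,
          Λ s zz v < ⊤ →
          (Λ s₂ zz v - Λ s₁ zz v) ⊔ (Λ s₁ zz v - Λ s₂ zz v) ≤
            (ENNReal.ofReal κ * Λ s zz v + ENNReal.ofReal (β * ‖v‖ ^ p + γ s)) *
              ENNReal.ofReal |s₂ - s₁|) ∧ Λ s (yc s) (g s) ≠ ⊤ := hSae.and hΛfin
  have hPσ := LavAux.ae_sig ht hm_meas hm1 hmint hm_one hTmem hP
  have hpt : ∀ᵐ τ ∂(volume.restrict (Set.Icc t T)),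
      Λ τ (z τ) (z' τ) * Ψ τ (z τ) ≤ H (σf τ) := by
    filter_upwards [ae_restrict_mem measurableSet_Icc, hPσ] with τ hτIcc hPs
    set s := σf τ with hsdef
    have hsIcc : s ∈ Set.Icc t T := hσIcc τ
    have hτρ : ρf s = τ :=
      LavAux.rho_sig ht hm_meas hm1 hmint hm_one ⟨hτIcc.1, hτIcc.2.trans hTR⟩
    have hsτ : s ≤ τ := by
      have := LavAux.le_rho hm_meas hm1 hmint hm_one hsIcc.1
      rw [← hρf] at this
      rwa [hτρ] at this
    have hτδ : τ - s ≤ δ := by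
      have := hρle s hsIcc
      rwa [hτρ] at this
    have hzτ : z τ = yc s := rfl
    have hz'τ : z' τ = w s := rfl
    rw [hzτ, hz'τ, hH]
    dsimp only
    by_cases hb : ν < ‖g s‖
    · rw [if_pos hb]
      have hms : m s = ‖g s‖ / ν₀ := by rw [hm]; dsimp only; rw [if_pos ⟨hsIcc, hb⟩]
      have hgs0 : ‖g s‖ ≠ 0 := (lt_of_le_of_lt hνpos.le hb).ne'
      have hws : ‖w s‖ = ν₀ := by
        rw [hw]; dsimp only
        rw [norm_smul, Real.norm_eq_abs, abs_of_pos (inv_pos.2 (hm_pos s)), hms]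
        field_simp
      have hwball : w s ∈ Metric.closedBall (0 : EN n) ν₀ := by
        rw [Metric.mem_closedBall, dist_zero_right, hws]
      exact mul_le_mul' (hMΛ τ hτIcc _ (hycK s) _ hwball) (hMΨ τ hτIcc _ (hycK s))
    · rw [if_neg hb]
      have hms : m s = 1 := by
        rw [hm]; dsimp only; rw [if_neg (fun hc => hb hc.2)]
      have hws : w s = g s := by rw [hw]; dsimp only; rw [hms, inv_one, one_smul]
      rw [hws]
      have hsmem : s ∈ Set.Icc (s - ε₀) (s + ε₀) ∩ Set.Icc t T :=
        ⟨⟨by linarith, by linarith⟩, hsIcc⟩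
      have hτmem : τ ∈ Set.Icc (s - ε₀) (s + ε₀) ∩ Set.Icc t T :=
        ⟨⟨by linarith, by linarith⟩, hτIcc⟩
      have hfin : Λ s (yc s) (g s) < ⊤ := lt_top_iff_ne_top.2 hPs.2
      have hS1 := hPs.1 s hsmem τ hτmem (yc s) (hycK s) (g s) hfin
      have h2 : Λ τ (yc s) (g s) - Λ s (yc s) (g s) ≤
          (ENNReal.ofReal κ * Λ s (yc s) (g s) +
            ENNReal.ofReal (β * ‖g s‖ ^ p + γ s)) * ENNReal.ofReal |τ - s| :=
        le_trans le_sup_left hS1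
      have h3 : Λ τ (yc s) (g s) ≤
          (ENNReal.ofReal κ * Λ s (yc s) (g s) +
            ENNReal.ofReal (β * ‖g s‖ ^ p + γ s)) * ENNReal.ofReal |τ - s|
            + Λ s (yc s) (g s) := tsub_le_iff_right.1 h2
      have h4 : ENNReal.ofReal |τ - s| ≤ ENNReal.ofReal δ := by
        apply ENNReal.ofReal_le_ofReal
        rw [abs_of_nonneg (by linarith)]
        exact hτδ
      have h5 : Λ τ (yc s) (g s) ≤
          (1 + ENNReal.ofReal κ * ENNReal.ofReal δ) * Λ s (yc s) (g s)
            + ENNReal.ofReal (β * ‖g s‖ ^ p + γ s) * ENNReal.ofReal δ := by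
        calc Λ τ (yc s) (g s) ≤
            (ENNReal.ofReal κ * Λ s (yc s) (g s) +
              ENNReal.ofReal (β * ‖g s‖ ^ p + γ s)) * ENNReal.ofReal δ
              + Λ s (yc s) (g s) := by
              refine le_trans h3 (add_le_add_left (mul_le_mul_right h4 _) _)
        _ = (1 + ENNReal.ofReal κ * ENNReal.ofReal δ) * Λ s (yc s) (g s)
              + ENNReal.ofReal (β * ‖g s‖ ^ p + γ s) * ENNReal.ofReal δ := by
              ring
      have h6 : Ψ τ (yc s) ≤ LavAux.Phi t T δ Ψ yc s := by
        apply LavAux.phi_ge ht hδ0 hΨcont hycK hsIcc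
        exact ⟨⟨by linarith, by linarith⟩, hτIcc⟩
      exact mul_le_mul' h5 h6
  -- the main estimate chain
  have hEst : Func t T Λ Ψ z z' ≤
      (M_Λ : ℝ≥0∞) * (M_Ψ : ℝ≥0∞) * ENNReal.ofReal δ
        + ((1 + ENNReal.ofReal κ * ENNReal.ofReal δ) *
            (∫⁻ s in Set.Icc t T, Λ s (yc s) (g s) * LavAux.Phi t T δ Ψ yc s)
          + ENNReal.ofReal δ * (M_Ψ : ℝ≥0∞) *
            (∫⁻ s in Set.Icc t T, ENNReal.ofReal (β * ‖g s‖ ^ p + |γ s|))) := by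
    have step1 : Func t T Λ Ψ z z' ≤ ∫⁻ τ in Set.Icc t T, H (σf τ) :=
      lintegral_mono_ae hpt
    have step2 : (∫⁻ τ in Set.Icc t T, H (σf τ)) ≤ ∫⁻ τ in Set.Icc t (ρf T), H (σf τ) :=
      lintegral_mono_set (Set.Icc_subset_Icc le_rfl hTR)
    have step3 : (∫⁻ τ in Set.Icc t (ρf T), H (σf τ)) =
        ∫⁻ s in Set.Icc t T, ENNReal.ofReal (m s) * H s := by
      have := LavAux.lintegral_sig ht hm_meas hm1 hmint hm_one
        (Set.right_mem_Icc.2 (ht.trans hTR)) hHmeas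
      rw [← hρf, ← hσf] at this
      rwa [hσρT] at this
    have step4 : (∫⁻ s in Set.Icc t T, ENNReal.ofReal (m s) * H s) =
        (∫⁻ s in Set.Icc t T ∩ {s : ℝ | ν < ‖g s‖}, ENNReal.ofReal (m s) * H s)
          + ∫⁻ s in Set.Icc t T \ {s : ℝ | ν < ‖g s‖}, ENNReal.ofReal (m s) * H s :=
      (lintegral_inter_add_diff _ _ hBmeas).symm
    -- the bad part
    have stepB : (∫⁻ s in Set.Icc t T ∩ {s : ℝ | ν < ‖g s‖},
        ENNReal.ofReal (m s) * H s) = (M_Λ : ℝ≥0∞) * (M_Ψ : ℝ≥0∞) * ENNReal.ofReal δ := by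
      have hmeasIB : MeasurableSet (Set.Icc t T ∩ {s : ℝ | ν < ‖g s‖}) :=
        measurableSet_Icc.inter hBmeas
      have h1 : (∫⁻ s in Set.Icc t T ∩ {s : ℝ | ν < ‖g s‖},
          ENNReal.ofReal (m s) * H s) =
          ∫⁻ s in Set.Icc t T ∩ {s : ℝ | ν < ‖g s‖},
            ENNReal.ofReal (bad s) * ((M_Λ : ℝ≥0∞) * (M_Ψ : ℝ≥0∞)) := by
        apply setLIntegral_congr_fun hmeasIB
        intro s hs
        have hs2 : ν < ‖g s‖ := hs.2
        have e1 : m s = ‖g s‖ / ν₀ := by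
          rw [hm]; dsimp only; rw [if_pos ⟨hs.1, hs2⟩]
        have e2 : H s = (M_Λ : ℝ≥0∞) * (M_Ψ : ℝ≥0∞) := by
          rw [hH]; dsimp only; rw [if_pos hs2]
        have e3 : bad s = ‖g s‖ / ν₀ := by
          rw [hbad]; dsimp only; rw [if_pos hs2]
        dsimp only
        rw [e1, e2, e3]
      have h2 : (∫⁻ s in Set.Icc t T ∩ {s : ℝ | ν < ‖g s‖},
          ENNReal.ofReal (bad s) * ((M_Λ : ℝ≥0∞) * (M_Ψ : ℝ≥0∞))) =
          (∫⁻ s in Set.Icc t T ∩ {s : ℝ | ν < ‖g s‖}, ENNReal.ofReal (bad s))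
            * ((M_Λ : ℝ≥0∞) * (M_Ψ : ℝ≥0∞)) :=
        lintegral_mul_const _ hbad_meas.ennreal_ofReal
      have h3 : (∫⁻ s in Set.Icc t T ∩ {s : ℝ | ν < ‖g s‖}, ENNReal.ofReal (bad s)) =
          ENNReal.ofReal δ := by
        rw [← ofReal_integral_eq_lintegral_ofReal
          (hbad_int.mono_set Set.inter_subset_left)
          (Filter.Eventually.of_forall hbad_nonneg)]
        congr 1
        rw [hδdef]
        have hbad_ind : ∀ s : ℝ, bad s = Set.indicator {u : ℝ | ν < ‖g u‖}
            (fun u => ‖g u‖ / ν₀) s := by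
          intro s
          rw [Set.indicator_apply, hbad]
          simp only [Set.mem_setOf_eq]
        have e4 : ∫ s in Set.Icc t T, bad s =
            ∫ s in Set.Icc t T ∩ {s : ℝ | ν < ‖g s‖}, bad s := by
          calc ∫ s in Set.Icc t T, bad s =
              ∫ s in Set.Icc t T, Set.indicator {u : ℝ | ν < ‖g u‖}
                (fun u => ‖g u‖ / ν₀) s :=
              setIntegral_congr_fun measurableSet_Icc (fun s _ => hbad_ind s)
          _ = ∫ s in Set.Icc t T ∩ {s : ℝ | ν < ‖g s‖}, ‖g s‖ / ν₀ :=
              setIntegral_indicator hBmeas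
          _ = ∫ s in Set.Icc t T ∩ {s : ℝ | ν < ‖g s‖}, bad s := by
              apply setIntegral_congr_fun hmeasIB
              intro s hs
              have hs2 : ν < ‖g s‖ := hs.2
              rw [hbad]; dsimp only; rw [if_pos hs2]
        exact e4.symm
      rw [h1, h2, h3, mul_comm]
    -- the good part
    have stepG : (∫⁻ s in Set.Icc t T \ {s : ℝ | ν < ‖g s‖},
        ENNReal.ofReal (m s) * H s) ≤
        (1 + ENNReal.ofReal κ * ENNReal.ofReal δ) *
            (∫⁻ s in Set.Icc t T, Λ s (yc s) (g s) * LavAux.Phi t T δ Ψ yc s)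
          + ENNReal.ofReal δ * (M_Ψ : ℝ≥0∞) *
            (∫⁻ s in Set.Icc t T, ENNReal.ofReal (β * ‖g s‖ ^ p + |γ s|)) := by
      have hmeasG : MeasurableSet (Set.Icc t T \ {s : ℝ | ν < ‖g s‖}) :=
        measurableSet_Icc.diff hBmeas
      have h1 : (∫⁻ s in Set.Icc t T \ {s : ℝ | ν < ‖g s‖},
          ENNReal.ofReal (m s) * H s) =
          ∫⁻ s in Set.Icc t T \ {s : ℝ | ν < ‖g s‖},
            ((1 + ENNReal.ofReal κ * ENNReal.ofReal δ) *
              (Λ s (yc s) (g s) * LavAux.Phi t T δ Ψ yc s)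
            + ENNReal.ofReal (β * ‖g s‖ ^ p + γ s) * ENNReal.ofReal δ *
                LavAux.Phi t T δ Ψ yc s) := by
        apply setLIntegral_congr_fun hmeasG
        intro s hs
        have hnb : ¬ ν < ‖g s‖ := hs.2
        rw [hH, hm]; dsimp only
        rw [if_neg hnb, if_neg (fun hc => hnb hc.2), ENNReal.ofReal_one, one_mul]
        ring
      rw [h1]
      have h2 : (∫⁻ s in Set.Icc t T \ {s : ℝ | ν < ‖g s‖},
          ((1 + ENNReal.ofReal κ * ENNReal.ofReal δ) *
            (Λ s (yc s) (g s) * LavAux.Phi t T δ Ψ yc s)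
          + ENNReal.ofReal (β * ‖g s‖ ^ p + γ s) * ENNReal.ofReal δ *
              LavAux.Phi t T δ Ψ yc s)) ≤
          ∫⁻ s in Set.Icc t T,
          ((1 + ENNReal.ofReal κ * ENNReal.ofReal δ) *
            (Λ s (yc s) (g s) * LavAux.Phi t T δ Ψ yc s)
          + ENNReal.ofReal (β * ‖g s‖ ^ p + γ s) * ENNReal.ofReal δ *
              LavAux.Phi t T δ Ψ yc s) :=
        lintegral_mono_set Set.diff_subset
      apply le_trans h2
      rw [lintegral_add_left (f := fun s => (1 + ENNReal.ofReal κ * ENNReal.ofReal δ) *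
        (Λ s (yc s) (g s) * LavAux.Phi t T δ Ψ yc s)) (measurable_const.mul (hΛc.mul hPhimeas))]
      apply add_le_add
      · rw [lintegral_const_mul (f := fun s => Λ s (yc s) (g s) * LavAux.Phi t T δ Ψ yc s) _
          (hΛc.mul hPhimeas)]
      · have h3 : ∀ s ∈ Set.Icc t T,
            ENNReal.ofReal (β * ‖g s‖ ^ p + γ s) * ENNReal.ofReal δ *
              LavAux.Phi t T δ Ψ yc s ≤
            ENNReal.ofReal δ * (M_Ψ : ℝ≥0∞) *
              ENNReal.ofReal (β * ‖g s‖ ^ p + |γ s|) := by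
          intro s hs
          have ha : ENNReal.ofReal (β * ‖g s‖ ^ p + γ s) ≤
              ENNReal.ofReal (β * ‖g s‖ ^ p + |γ s|) :=
            ENNReal.ofReal_le_ofReal (by linarith [le_abs_self (γ s)])
          have hb2 : LavAux.Phi t T δ Ψ yc s ≤ (M_Ψ : ℝ≥0∞) :=
            LavAux.phi_le ht hδ0 hMΨ hycK s
          calc ENNReal.ofReal (β * ‖g s‖ ^ p + γ s) * ENNReal.ofReal δ *
              LavAux.Phi t T δ Ψ yc s
              = ENNReal.ofReal δ * (ENNReal.ofReal (β * ‖g s‖ ^ p + γ s) *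
                  LavAux.Phi t T δ Ψ yc s) := by ring
          _ ≤ ENNReal.ofReal δ * (ENNReal.ofReal (β * ‖g s‖ ^ p + |γ s|) *
                (M_Ψ : ℝ≥0∞)) := mul_le_mul_right (mul_le_mul' ha hb2) _
          _ = ENNReal.ofReal δ * (M_Ψ : ℝ≥0∞) *
                ENNReal.ofReal (β * ‖g s‖ ^ p + |γ s|) := by ring
        have h4 : (∫⁻ s in Set.Icc t T,
            ENNReal.ofReal (β * ‖g s‖ ^ p + γ s) * ENNReal.ofReal δ *
              LavAux.Phi t T δ Ψ yc s) ≤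
            ∫⁻ s in Set.Icc t T, ENNReal.ofReal δ * (M_Ψ : ℝ≥0∞) *
              ENNReal.ofReal (β * ‖g s‖ ^ p + |γ s|) := by
          apply lintegral_mono_ae
          filter_upwards [ae_restrict_mem measurableSet_Icc] with s hs
          exact h3 s hs
        have hmeas2 : Measurable fun s : ℝ =>
            ENNReal.ofReal (β * ‖g s‖ ^ p + |γ s|) :=
          (((hgmeas.norm.pow_const p).const_mul β).add hγmeas.abs).ennreal_ofReal
        rw [← lintegral_const_mul _ hmeas2]
        exact h4
    calc Func t T Λ Ψ z z' ≤ ∫⁻ τ in Set.Icc t T, H (σf τ) := step1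
    _ ≤ ∫⁻ τ in Set.Icc t (ρf T), H (σf τ) := step2
    _ = ∫⁻ s in Set.Icc t T, ENNReal.ofReal (m s) * H s := step3
    _ = _ + _ := step4
    _ ≤ _ := by
        rw [stepB]
        exact add_le_add_right stepG _
  -- conclude
  have hmem : Func t T Λ Ψ z z' ∈ {c : ℝ≥0∞ | ∃ y y' : ℝ → EN n, MemW1p t T p y y' ∧
      (∃ C : ℝ≥0, LipschitzOnWith C y (Set.Icc t T)) ∧ y t = X ∧
      c = Func t T Λ Ψ y y'} :=
    ⟨z, z', hWz, ⟨Real.toNNReal (max ν ν₀), hlip⟩, hzt, rfl⟩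
  refine le_trans (sInf_le hmem) (le_trans hEst (le_of_eq ?_))
  ring

/-- **Corollary 3.2, Claim 1** (non-occurrence of the Lavrentiev phenomenon for the one
end point problem ($\mathcal P_X$)). -/
theorem nonoccurrence_phenomenon_one_endpoint {n : ℕ} (hn : 1 ≤ n) (t T : ℝ) (ht : t < T)
    (p : ℝ) (hp : 1 ≤ p)
    (Λ : ℝ → EN n → EN n → ℝ≥0∞) (Ψ : ℝ → EN n → ℝ≥0∞)
    (hΛm : Measurable fun q : ℝ × EN n × EN n => Λ q.1 q.2.1 q.2.2)
    (hΨm : Measurable fun q : ℝ × EN n => Ψ q.1 q.2)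
    (hS : ConditionS t T p Λ)
    -- (B_Ψ): for every `K > 0`, `Ψ` is bounded on `I × B_K`
    (hΨbd : ∀ K : ℝ, 0 < K → ∃ M : ℝ≥0, ∀ s ∈ Set.Icc t T,
      ∀ z ∈ Metric.closedBall (0 : EN n) K, Ψ s z ≤ M)
    -- (C_Ψ): for every `K > 0` and `z ∈ B_K`, `Ψ(·,z)` is continuous on `I`
    (hΨc : ∀ K : ℝ, 0 < K → ∀ z ∈ Metric.closedBall (0 : EN n) K,
      ContinuousOn (fun s => Ψ s z) (Set.Icc t T))
    -- (P_Ψ): for every `K > 0` there is `m_{K,Ψ} > 0` with `Ψ ≥ m_{K,Ψ}` on `I × B_K`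
    (hΨpos : ∀ K : ℝ, 0 < K → ∃ m : ℝ, 0 < m ∧ ∀ s ∈ Set.Icc t T,
      ∀ z ∈ Metric.closedBall (0 : EN n) K, ENNReal.ofReal m ≤ Ψ s z)
    -- (B_Λ): for every `K > 0` there is `ν₀ > 0` with `Λ` bounded on `I × B_K × B_{ν₀}`
    (hΛbd : ∀ K : ℝ, 0 < K → ∃ ν₀ : ℝ, 0 < ν₀ ∧ ∃ M : ℝ≥0, ∀ s ∈ Set.Icc t T,
      ∀ z ∈ Metric.closedBall (0 : EN n) K, ∀ v ∈ Metric.closedBall (0 : EN n) ν₀,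
        Λ s z v ≤ M)
    (X : EN n) :
    sInf {c : ℝ≥0∞ | ∃ y y' : ℝ → EN n, MemW1p t T p y y' ∧ y t = X ∧
        c = Func t T Λ Ψ y y'} =
    sInf {c : ℝ≥0∞ | ∃ y y' : ℝ → EN n, MemW1p t T p y y' ∧
        (∃ C : ℝ≥0, LipschitzOnWith C y (Set.Icc t T)) ∧ y t = X ∧
        c = Func t T Λ Ψ y y'} := by
  classical
  apply le_antisymm
  · apply sInf_le_sInf
    rintro c ⟨y, y', h1, h2, h3, h4⟩
    exact ⟨y, y', h1, h3, h4⟩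
  · apply le_sInf
    rintro c ⟨y, y'0, hW0, hyt, rfl⟩
    have htT : t ≤ T := ht.le
    haveI hfinmeas : IsFiniteMeasure (volume.restrict (Set.Icc t T)) :=
      ⟨by rw [Measure.restrict_apply_univ]; exact measure_Icc_lt_top⟩
    -- measurable representative g of y'
    obtain ⟨g, hgmeas, hgae⟩ : ∃ g : ℝ → EN n, Measurable g ∧
        y'0 =ᵐ[volume.restrict (Set.Icc t T)] g := by
      have h := hW0.2.2.2.1
      exact ⟨h.mk y'0, h.stronglyMeasurable_mk.measurable, h.ae_eq_mk⟩
    have hgae' : ∀ x ∈ Set.Icc t T, ∀ᵐ s ∂volume, s ∈ Set.uIoc t x → y'0 s = g s := by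
      intro x hx
      have hsub : Set.Ioc t x ⊆ Set.Icc t T := fun u hu => ⟨hu.1.le, hu.2.trans hx.2⟩
      have h1 : y'0 =ᵐ[volume.restrict (Set.Ioc t x)] g :=
        ae_restrict_of_ae_restrict_of_subset hsub hgae
      rw [Set.uIoc_of_le hx.1]
      exact (ae_restrict_iff' measurableSet_Ioc).1 h1
    have hW : MemW1p t T p y g := by
      refine ⟨?_, ?_, hW0.2.2.1, hW0.2.2.2.ae_eq hgae⟩
      · have h1 := hW0.1
        rw [intervalIntegrable_iff] at h1 ⊢
        apply h1.congr
        rw [Set.uIoc_of_le htT]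
        exact ae_restrict_of_ae_restrict_of_subset Set.Ioc_subset_Icc_self hgae
      · intro x hx
        rw [hW0.2.1 x hx]
        congr 1
        exact intervalIntegral.integral_congr_ae (hgae' x hx)
    have hFeq : Func t T Λ Ψ y y'0 = Func t T Λ Ψ y g := by
      apply lintegral_congr_ae
      filter_upwards [hgae] with s h
      rw [h]
    rw [hFeq]
    by_cases hfin : Func t T Λ Ψ y g = ⊤
    · rw [hfin]; exact le_top
    -- continuity of y on Icc
    have hgIntIcc : IntegrableOn g (Set.Icc t T) volume := by
      apply hW.2.2.2.integrable
      rw [← ENNReal.ofReal_one]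
      exact ENNReal.ofReal_le_ofReal hp
    have hycont : ContinuousOn y (Set.Icc t T) := by
      have hcont0 : ContinuousOn (fun x => y t + ∫ u in t..x, g u) (Set.Icc t T) := by
        apply continuousOn_const.add
        have := intervalIntegral.continuousOn_primitive_interval
          (a := t) (b := T) (μ := volume) (f := g) (by rwa [Set.uIcc_of_le htT])
        rwa [Set.uIcc_of_le htT] at this
      exact hcont0.congr (fun x hx => hW.2.1 x hx)
    set yc : ℝ → EN n := fun s => y (max t (min s T)) with hyc
    have hyccont : Continuous yc := by
      apply hycont.comp_continuous
        (continuous_const.max (continuous_id.min continuous_const))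
      exact fun s => LavAux.clamp_mem htT s
    obtain ⟨K₀, hK₀⟩ := isCompact_Icc.exists_bound_of_continuousOn hycont
    set K := max K₀ 1 with hKdef
    have hK : 0 < K := lt_of_lt_of_le zero_lt_one (le_max_right _ _)
    have hycK : ∀ s, yc s ∈ Metric.closedBall (0 : EN n) K := by
      intro s
      rw [Metric.mem_closedBall, dist_zero_right]
      exact le_trans (hK₀ _ (LavAux.clamp_mem htT s)) (le_max_left _ _)
    obtain ⟨κ, β, hκ, hβ, γ₀, hγ₀int, ε₀, hε₀, hSae₀⟩ := hS K hK.le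
    obtain ⟨γ, hγmeas, hγae⟩ : ∃ γ : ℝ → ℝ, Measurable γ ∧
        γ₀ =ᵐ[volume.restrict (Set.Icc t T)] γ := by
      have h := hγ₀int.aestronglyMeasurable
      exact ⟨h.mk γ₀, h.stronglyMeasurable_mk.measurable, h.ae_eq_mk⟩
    have hγint : IntegrableOn γ (Set.Icc t T) volume := hγ₀int.congr hγae
    have hSae : ∀ᵐ s ∂(volume.restrict (Set.Icc t T)),
        ∀ s₁ ∈ Set.Icc (s - ε₀) (s + ε₀) ∩ Set.Icc t T,
        ∀ s₂ ∈ Set.Icc (s - ε₀) (s + ε₀) ∩ Set.Icc t T,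
        ∀ z ∈ Metric.closedBall (0 : EN n) K, ∀ v : EN n,
          Λ s z v < ⊤ →
          (Λ s₂ z v - Λ s₁ z v) ⊔ (Λ s₁ z v - Λ s₂ z v) ≤
            (ENNReal.ofReal κ * Λ s z v + ENNReal.ofReal (β * ‖v‖ ^ p + γ s)) *
              ENNReal.ofReal |s₂ - s₁| := by
      filter_upwards [hSae₀, hγae] with s h1 h2
      intro s₁ hs₁ s₂ hs₂ z hz v hv
      rw [← h2]
      exact h1 s₁ hs₁ s₂ hs₂ z hz v hv
    obtain ⟨ν₀, hν₀, M_Λ, hMΛ⟩ := hΛbd K hK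
    obtain ⟨M_Ψ, hMΨ⟩ := hΨbd K hK
    obtain ⟨mK, hmK, hmKle⟩ := hΨpos K hK
    have hcl : ∀ s ∈ Set.Icc t T, yc s = y s := by
      intro s hs; rw [hyc]; dsimp only; rw [LavAux.clamp_eq hs]
    have hFyc : Func t T Λ Ψ y g =
        ∫⁻ s in Set.Icc t T, Λ s (yc s) (g s) * Ψ s (yc s) := by
      apply setLIntegral_congr_fun measurableSet_Icc
      intro s hs
      dsimp only
      rw [hcl s hs]
    set c := ∫⁻ s in Set.Icc t T, Λ s (yc s) (g s) * Ψ s (yc s) with hcdef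
    have hcfin : c ≠ ⊤ := by rw [← hFyc]; exact hfin
    have hΛc : Measurable (fun s => Λ s (yc s) (g s)) :=
      hΛm.comp (measurable_id.prodMk (hyccont.measurable.prodMk hgmeas))
    have hΛint : (∫⁻ s in Set.Icc t T, Λ s (yc s) (g s)) ≠ ⊤ := by
      intro htop
      have hmono : ∀ᵐ s ∂(volume.restrict (Set.Icc t T)),
          ENNReal.ofReal mK * Λ s (yc s) (g s) ≤ Λ s (yc s) (g s) * Ψ s (yc s) := by
        filter_upwards [ae_restrict_mem measurableSet_Icc] with s hs
        rw [mul_comm]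
        exact mul_le_mul_right (hmKle s hs _ (hycK s)) _
      have h1 : ENNReal.ofReal mK * ∫⁻ s in Set.Icc t T, Λ s (yc s) (g s) ≤ c := by
        rw [← lintegral_const_mul _ hΛc]
        exact lintegral_mono_ae hmono
      rw [htop, ENNReal.mul_top (by simpa using hmK)] at h1
      exact hcfin (top_le_iff.1 h1)
    have hΛfin : ∀ᵐ s ∂(volume.restrict (Set.Icc t T)), Λ s (yc s) (g s) ≠ ⊤ :=
      (ae_lt_top hΛc hΛint).mono (fun s h => h.ne)
    -- ∫ ‖g‖^p integrable
    have hgp : Integrable (fun s => ‖g s‖ ^ p) (volume.restrict (Set.Icc t T)) := by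
      have h := hW.2.2.2.integrable_norm_rpow (by
          simp only [ne_eq, ENNReal.ofReal_eq_zero, not_le]; linarith)
        ENNReal.ofReal_ne_top
      rwa [ENNReal.toReal_ofReal (by linarith)] at h
    set D := ∫⁻ s in Set.Icc t T, ENNReal.ofReal (β * ‖g s‖ ^ p + |γ s|) with hDdef
    have hD : D ≠ ⊤ := by
      have hint : Integrable (fun s => β * ‖g s‖ ^ p + |γ s|)
          (volume.restrict (Set.Icc t T)) := (hgp.const_mul β).add hγint.abs
      have h2 : (∫⁻ s in Set.Icc t T, ‖β * ‖g s‖ ^ p + |γ s|‖₊) < ⊤ := hint.2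
      have h3 : D ≤ ∫⁻ s in Set.Icc t T, ‖β * ‖g s‖ ^ p + |γ s|‖₊ := by
        rw [hDdef]
        apply lintegral_mono
        intro s
        dsimp only
        exact Real.ofReal_le_enorm _
      exact (lt_of_le_of_lt h3 h2).ne
    -- the sequences
    set ν : ℕ → ℝ := fun j => max ν₀ 1 + j with hνdef
    set δ : ℕ → ℝ := fun j =>
      ∫ s in Set.Icc t T, (if ν j < ‖g s‖ then ‖g s‖ / ν₀ else 0) with hδdef
    have hδ0 : ∀ j, 0 ≤ δ j := by
      intro j
      apply setIntegral_nonneg measurableSet_Icc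
      intro s _
      split_ifs with h
      · positivity
      · exact le_refl 0
    have hδto : Tendsto δ atTop (𝓝 0) := by
      have h0 : Tendsto (fun _ : ℕ => (0:ℝ)) atTop (𝓝 0) := tendsto_const_nhds
      have := tendsto_integral_of_dominated_convergence
        (F := fun j s => if ν j < ‖g s‖ then ‖g s‖ / ν₀ else 0)
        (f := fun _ => (0:ℝ)) (bound := fun s => ‖g s‖ / ν₀)
        (μ := volume.restrict (Set.Icc t T))
        (fun j => (Measurable.ite (measurableSet_lt measurable_const hgmeas.norm)
          (hgmeas.norm.div_const ν₀) measurable_const).aestronglyMeasurable)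
        (hgIntIcc.norm.div_const ν₀)
        (fun j => Filter.Eventually.of_forall (fun s => by
          rw [Real.norm_eq_abs]
          split_ifs with h
          · rw [abs_of_nonneg (by positivity)]
          · rw [abs_zero]; positivity))
        (Filter.Eventually.of_forall (fun s => by
          apply tendsto_atTop_of_eventually_const (i₀ := ⌈‖g s‖⌉₊)
          intro j hj
          have hnot : ¬ ν j < ‖g s‖ := by
            push_neg
            calc ‖g s‖ ≤ (⌈‖g s‖⌉₊ : ℝ) := Nat.le_ceil _
            _ ≤ (j : ℝ) := by exact_mod_cast hj
            _ ≤ ν j := by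
                rw [hνdef]; dsimp only
                nlinarith [le_max_right ν₀ (1:ℝ)]
          rw [if_neg hnot]))
      simpa using this
    have hδε : ∀ᶠ j in atTop, δ j ≤ ε₀ := hδto.eventually (eventually_le_nhds hε₀)
    -- C j → c
    set C : ℕ → ℝ≥0∞ := fun j =>
      ∫⁻ s in Set.Icc t T, Λ s (yc s) (g s) * LavAux.Phi t T (δ j) Ψ yc s with hCdef
    have hCto : Tendsto C atTop (𝓝 c) := by
      apply tendsto_lintegral_of_dominated_convergence
        (bound := fun s => Λ s (yc s) (g s) * (M_Ψ : ℝ≥0∞))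
      · exact fun j => hΛc.mul (LavAux.phi_meas hΨm hyccont)
      · intro j
        apply Filter.Eventually.of_forall
        intro s
        exact mul_le_mul_right (LavAux.phi_le htT (hδ0 j) hMΨ hycK s) _
      · rw [lintegral_mul_const _ hΛc]
        exact ENNReal.mul_ne_top hΛint ENNReal.coe_ne_top
      · filter_upwards [ae_restrict_mem measurableSet_Icc, hΛfin] with s hs hΛs
        exact ENNReal.Tendsto.const_mul
          (LavAux.phi_tendsto htT hδ0 hδto hMΨ (hΨc K hK) hycK hs) (Or.inr hΛs)
    -- bound j → c
    set bound : ℕ → ℝ≥0∞ := fun j =>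
      (M_Λ : ℝ≥0∞) * (M_Ψ : ℝ≥0∞) * ENNReal.ofReal (δ j)
        + (1 + ENNReal.ofReal κ * ENNReal.ofReal (δ j)) * C j
        + ENNReal.ofReal (δ j) * (M_Ψ : ℝ≥0∞) * D with hbounddef
    have ht1 : Tendsto (fun j => ENNReal.ofReal (δ j)) atTop (𝓝 0) := by
      have := ENNReal.tendsto_ofReal (m := δ) (f := atTop) hδto
      simpa using this
    have hboundto : Tendsto bound atTop (𝓝 c) := by
      have hterm1 : Tendsto (fun j => (M_Λ : ℝ≥0∞) * (M_Ψ : ℝ≥0∞) *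
          ENNReal.ofReal (δ j)) atTop (𝓝 0) := by
        have := ENNReal.Tendsto.const_mul (a := (M_Λ : ℝ≥0∞) * (M_Ψ : ℝ≥0∞)) ht1
          (Or.inr (ENNReal.mul_ne_top ENNReal.coe_ne_top ENNReal.coe_ne_top))
        simpa using this
      have hterm2a : Tendsto (fun j => 1 + ENNReal.ofReal κ * ENNReal.ofReal (δ j))
          atTop (𝓝 1) := by
        have h2 := ENNReal.Tendsto.const_mul (a := ENNReal.ofReal κ) ht1
          (Or.inr ENNReal.ofReal_ne_top)
        have h3 := Tendsto.add (tendsto_const_nhds (x := (1:ℝ≥0∞)) (f := atTop)) h2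
        simpa using h3
      have hterm2 : Tendsto (fun j => (1 + ENNReal.ofReal κ * ENNReal.ofReal (δ j)) * C j)
          atTop (𝓝 c) := by
        have := ENNReal.Tendsto.mul hterm2a (Or.inl one_ne_zero) hCto
          (Or.inr (by simp))
        simpa using this
      have hterm3 : Tendsto (fun j => ENNReal.ofReal (δ j) * (M_Ψ : ℝ≥0∞) * D)
          atTop (𝓝 0) := by
        have h4 := ENNReal.Tendsto.mul_const (b := (M_Ψ : ℝ≥0∞)) ht1
          (Or.inr ENNReal.coe_ne_top)
        rw [zero_mul] at h4
        have h5 := ENNReal.Tendsto.mul_const (b := D) h4 (Or.inr hD)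
        rwa [zero_mul] at h5
      have := Tendsto.add (Tendsto.add hterm1 hterm2) hterm3
      simpa using this
    -- conclude
    rw [hFyc]
    apply ge_of_tendsto hboundto
    filter_upwards [hδε] with j hj
    rw [hbounddef]
    exact lav_key_estimate t T htT p hp Λ Ψ hΛm hΨm X y g hgmeas hW hyt yc hyc
      hyccont K hK hycK (hΨc K hK) κ β hκ hβ γ hγmeas ε₀ hε₀ hSae ν₀ hν₀ M_Λ M_Ψ
      hMΛ hMΨ hΛfin (ν j) (le_add_of_nonneg_right (Nat.cast_nonneg j) |>.trans'
        (le_max_left _ _)) ((le_max_right ν₀ 1).trans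
        (le_add_of_nonneg_right (Nat.cast_nonneg j))) (δ j) rfl hj
end
end

section
/- (Corollary 3.2, Claim 2: non-occurrence of the Lavrentiev phenomenon for the two end point problem.) Assume Λ satisfies Condition (S), that Λ is real valued (Λ < +∞ everywhere), and that for every K > 0: Ψ is bounded on I×B_K; for every z ∈ B_K the map s ↦ Ψ(s,z) is continuous on I; there is m_{K,Ψ} > 0 such that Ψ(s,z) ≥ m_{K,Ψ} for all s ∈ I, z ∈ B_K; and for every r > 0, Λ is bounded on I×B_K×B_r. Then for every X, Y ∈ ℝⁿ, inf{ F(y) : y ∈ W^{1,p}(I;ℝⁿ), y(t)=X, y(T)=Y } = inf{ F(y) : y Lipschitz I → ℝⁿ, y(t)=X, y(T)=Y }. -/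
open MeasureTheory Set Filter ENNReal NNReal Metric

noncomputable section

section InfraSec


lemma wIntervalIntegrable {t T : ℝ} {w : ℝ → ℝ}
    (hw1 : ∀ s ∉ Set.Icc t T, w s = 1) (hwi : IntegrableOn w (Set.Icc t T) volume)
    (a b : ℝ) : IntervalIntegrable w volume a b := by
  rw [intervalIntegrable_iff]
  have h1 : IntegrableOn w (Set.uIoc a b ∩ Set.Icc t T) volume :=
    hwi.mono_set inter_subset_right
  have h2 : IntegrableOn w (Set.uIoc a b \ Set.Icc t T) volume := by
    have : IntegrableOn (fun _ : ℝ => (1 : ℝ)) (Set.uIoc a b \ Set.Icc t T) volume := by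
      refine integrableOn_const (ne_of_lt ?_)
      exact lt_of_le_of_lt (measure_mono diff_subset) measure_Ioc_lt_top
    exact this.congr_fun (fun x hx => (hw1 x hx.2).symm)
      (measurableSet_uIoc.diff measurableSet_Icc)
  exact (h1.union h2).mono_set (fun x hx => by
    by_cases h : x ∈ Set.Icc t T
    · exact Or.inl ⟨hx, h⟩
    · exact Or.inr ⟨hx, h⟩)

lemma repar_exists (t T : ℝ) (htT : t ≤ T) (w : ℝ → ℝ) (hwm : Measurable w)
    (hw : ∀ s, 1/2 ≤ w s) (hw1 : ∀ s ∉ Set.Icc t T, w s = 1)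
    (hwi : IntegrableOn w (Set.Icc t T) volume)
    (hTT : (∫ u in t..T, w u) = T - t) :
    ∃ φ : ℝ → ℝ, Measurable φ ∧ StrictMono φ ∧
      (∀ s, φ (t + ∫ u in t..s, w u) = s) ∧
      (∀ u, (t + ∫ u' in t..(φ u), w u') = u) ∧
      (∀ a b : ℝ, (fun s => t + ∫ u in t..s, w u) ⁻¹' (Set.Ioc a b) = Set.Ioc (φ a) (φ b)) ∧
      StrictMono (fun s => t + ∫ u in t..s, w u) ∧
      Measure.map (fun s => t + ∫ u in t..s, w u)
          ((volume.restrict (Set.Icc t T)).withDensity (fun s => ENNReal.ofReal (w s)))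
        = volume.restrict (Set.Icc t T) := by
  have hInt : ∀ a b : ℝ, IntervalIntegrable w volume a b := wIntervalIntegrable hw1 hwi
  set τ : ℝ → ℝ := fun s => t + ∫ u in t..s, w u with hτ
  have hτc : Continuous τ := by
    exact continuous_const.add (intervalIntegral.continuous_primitive hInt t)
  have hdiff : ∀ a b : ℝ, τ b - τ a = ∫ u in a..b, w u := by
    intro a b
    have := intervalIntegral.integral_add_adjacent_intervals (hInt t a) (hInt a b)
    simp only [hτ]
    linarith [this]
  have hsm : StrictMono τ := by
    intro a b hab
    have h2 : (∫ u in a..b, w u) ≥ ∫ u in a..b, (1/2 : ℝ) := by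
      apply intervalIntegral.integral_mono_on hab.le (intervalIntegrable_const) (hInt a b)
      intro x _; exact hw x
    rw [intervalIntegral.integral_const] at h2
    have h3 : τ b - τ a ≥ (b - a) * (1/2) := by rw [hdiff]; simpa [smul_eq_mul] using h2
    have h4 : 0 < b - a := sub_pos.2 hab
    have h5 : 0 < (b - a) * (1/2) := by positivity
    have h6 : 0 < τ b - τ a := lt_of_lt_of_le h5 h3
    exact sub_pos.mp h6
  have hmono : Monotone τ := hsm.monotone
  have hsurj : Function.Surjective τ := by
    have htop : Tendsto τ atTop atTop := by
      apply tendsto_atTop_mono' _ (_ : ∀ᶠ x in atTop, t + (x - t) * (1/2) ≤ τ x)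
      · apply tendsto_atTop_add_const_left
        apply Tendsto.atTop_mul_const (by norm_num : (0:ℝ) < 1/2) (tendsto_atTop_add_const_right _ _ tendsto_id)
      · filter_upwards [eventually_ge_atTop t] with x hx
        have h2 : (∫ u in t..x, w u) ≥ ∫ u in t..x, (1/2 : ℝ) := by
          apply intervalIntegral.integral_mono_on hx (intervalIntegrable_const) (hInt t x)
          intro y _; exact hw y
        rw [intervalIntegral.integral_const] at h2
        simp only [hτ, smul_eq_mul] at *
        linarith
    have hbot : Tendsto τ atBot atBot := by
      apply tendsto_atBot_mono' _ (_ : ∀ᶠ x in atBot, τ x ≤ t + (x - t) * (1/2))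
      · apply tendsto_atBot_add_const_left
        apply Tendsto.atBot_mul_const (by norm_num : (0:ℝ) < 1/2) (tendsto_atBot_add_const_right _ _ tendsto_id)
      · filter_upwards [eventually_le_atBot t] with x hx
        have h2 : (∫ u in x..t, w u) ≥ ∫ u in x..t, (1/2 : ℝ) := by
          apply intervalIntegral.integral_mono_on hx (intervalIntegrable_const) (hInt x t)
          intro y _; exact hw y
        rw [intervalIntegral.integral_const] at h2
        have := intervalIntegral.integral_symm x t (f := w) (μ := volume)
        simp only [hτ, smul_eq_mul] at *
        linarith
    intro y
    rcases htop.eventually_ge_atTop y |>.exists with ⟨b, hb⟩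
    rcases hbot.eventually_le_atBot y |>.exists with ⟨a, ha⟩
    exact intermediate_value_univ a b hτc ⟨ha, hb⟩
  have hτt : τ t = t := by simp [hτ]
  have hτT : τ T = T := by simp only [hτ, hTT]; ring
  set e : ℝ ≃o ℝ := StrictMono.orderIsoOfSurjective τ hsm hsurj with he
  have hec : ∀ x, e x = τ x := fun x =>
    congrFun (StrictMono.coe_orderIsoOfSurjective τ hsm hsurj) x
  set φ : ℝ → ℝ := fun u => e.symm u with hφ
  have hφsm : StrictMono φ := fun a b hab => e.symm.strictMono hab
  have hleft : ∀ s, φ (τ s) = s := by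
    intro s; simp only [hφ, ← hec s]; exact e.symm_apply_apply s
  have hright : ∀ u, τ (φ u) = u := by
    intro u; rw [show φ u = e.symm u from rfl, ← hec]; exact e.apply_symm_apply u
  have hφm : Measurable φ := hφsm.monotone.measurable
  have hτm : Measurable τ := hτc.measurable
  set ν := (volume.restrict (Set.Icc t T)).withDensity (fun s => ENNReal.ofReal (w s)) with hν
  have hwiOn : ∀ a b : ℝ, a ≤ b → IntegrableOn w (Set.Ioc a b) volume := fun a b hab =>
    (intervalIntegrable_iff_integrableOn_Ioc_of_le hab).mp (hInt a b)
  have hwnn : ∀ x, (0:ℝ) ≤ w x := fun x => le_trans (by norm_num) (hw x)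
  have hlio : ∀ c d : ℝ, c ≤ d →
      (∫⁻ s in Set.Ioc c d, ENNReal.ofReal (w s)) = ENNReal.ofReal (τ d - τ c) := by
    intro c d hcd
    rw [← ofReal_integral_eq_lintegral_ofReal (hwiOn c d hcd)
      (Eventually.of_forall hwnn), hdiff]
    congr 1
    exact (intervalIntegral.integral_of_le hcd).symm
  have haux : ∀ a b : ℝ,
      (Set.Ioc a b ∩ Set.Icc t T : Set ℝ) =ᵐ[volume]
        (Set.Ioc (max a t) (min b T) : Set ℝ) := by
    intro a b
    rw [MeasureTheory.ae_eq_set]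
    constructor
    · refine measure_mono_null ?_ (measure_singleton t)
      rintro x ⟨⟨⟨hax, hxb⟩, htx, hxT⟩, hnot⟩
      simp only [Set.mem_Ioc, not_and, not_le] at hnot
      have hx1 : x ≤ max a t := by
        by_contra h
        exact absurd (hnot (not_le.1 h)) (not_lt.2 (le_min hxb hxT))
      have hxt : x ≤ t := by
        rcases le_or_gt a t with h | h
        · simpa [max_eq_right h] using hx1
        · exfalso; rw [max_eq_left h.le] at hx1; exact absurd hx1 (not_le.2 hax)
      simp [le_antisymm hxt htx]
    · refine measure_mono_null ?_ (measure_empty (μ := volume))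
      rintro x ⟨⟨hax, hxb⟩, hnot⟩
      exact absurd ⟨⟨(max_lt_iff.1 hax).1, (le_min_iff.1 hxb).1⟩,
        (max_lt_iff.1 hax).2.le, (le_min_iff.1 hxb).2⟩ hnot
  have hpre : ∀ a b : ℝ, τ ⁻¹' (Set.Ioc a b) = Set.Ioc (φ a) (φ b) := by
    intro a b
    ext x
    simp only [Set.mem_preimage, Set.mem_Ioc]
    constructor
    · rintro ⟨h1, h2⟩
      refine ⟨?_, ?_⟩
      · have := hsm.lt_iff_lt (a := φ a) (b := x)
        rw [hright] at this
        exact this.mp h1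
      · have := hsm.le_iff_le (a := x) (b := φ b)
        rw [hright] at this
        exact this.mp h2
    · rintro ⟨h1, h2⟩
      constructor
      · have := hsm.lt_iff_lt (a := φ a) (b := x)
        rw [hright] at this
        exact this.mpr h1
      · have := hsm.le_iff_le (a := x) (b := φ b)
        rw [hright] at this
        exact this.mpr h2
  haveI hνfin : IsFiniteMeasure ν := by
    constructor
    rw [hν, withDensity_apply _ MeasurableSet.univ]
    rw [Measure.restrict_univ]
    calc (∫⁻ s, ENNReal.ofReal (w s) ∂(volume.restrict (Set.Icc t T)))
        = ∫⁻ s in Set.Icc t T, ENNReal.ofReal (w s) := rfl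
      _ = ∫⁻ s in Set.Ioc t T, ENNReal.ofReal (w s) := by
          exact (setLIntegral_congr (MeasureTheory.Ioc_ae_eq_Icc)).symm
      _ = ENNReal.ofReal (τ T - τ t) := hlio t T htT
      _ < ⊤ := ofReal_lt_top
  have hmapν : Measure.map τ ν = volume.restrict (Set.Icc t T) := by
    haveI : IsFiniteMeasure (Measure.map τ ν) := by
      constructor
      rw [Measure.map_apply hτm MeasurableSet.univ, Set.preimage_univ]
      exact measure_lt_top ν _
    refine Measure.ext_of_Ioc_finite _ _ ?_ (fun a b hab => ?_)
    · rw [Measure.map_apply hτm MeasurableSet.univ, Set.preimage_univ,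
        Measure.restrict_apply_univ]
      rw [hν, withDensity_apply _ MeasurableSet.univ, Measure.restrict_univ]
      calc (∫⁻ s, ENNReal.ofReal (w s) ∂(volume.restrict (Set.Icc t T)))
          = ∫⁻ s in Set.Ioc t T, ENNReal.ofReal (w s) :=
            (setLIntegral_congr (MeasureTheory.Ioc_ae_eq_Icc)).symm
        _ = ENNReal.ofReal (τ T - τ t) := hlio t T htT
        _ = volume (Set.Icc t T) := by
            rw [hτt, hτT, Real.volume_Icc]
    · rw [Measure.map_apply hτm measurableSet_Ioc]
      rw [hpre a b, hν, withDensity_apply _ measurableSet_Ioc,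
        Measure.restrict_restrict measurableSet_Ioc]
      have hres : volume.restrict (Set.Icc t T) (Set.Ioc a b)
          = volume (Set.Ioc (max a t) (min b T)) := by
        rw [Measure.restrict_apply measurableSet_Ioc]
        exact measure_congr (haux a b)
      rw [hres]
      have hl : (∫⁻ s in Set.Ioc (φ a) (φ b) ∩ Set.Icc t T, ENNReal.ofReal (w s))
          = ∫⁻ s in Set.Ioc (max (φ a) t) (min (φ b) T), ENNReal.ofReal (w s) :=
        setLIntegral_congr (haux (φ a) (φ b))
      rw [hl]
      rcases le_or_gt (max (φ a) t) (min (φ b) T) with hcd | hcd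
      · rw [hlio _ _ hcd]
        have h1 : τ (max (φ a) t) = max a t := by
          rw [hmono.map_max, hright, hτt]
        have h2 : τ (min (φ b) T) = min b T := by
          rw [hmono.map_min, hright, hτT]
        rw [Real.volume_Ioc, h1, h2]
      · have h1 : (b ⊓ T) < (a ⊔ t) := by
          have h2 := hsm hcd
          rwa [hmono.map_max, hmono.map_min, hright, hright, hτt, hτT] at h2
        rw [Set.Ioc_eq_empty (not_lt.2 hcd.le), Set.Ioc_eq_empty (not_lt.2 h1.le)]
        simp
  exact ⟨φ, hφm, hφsm, hleft, hright, hpre, hsm, hmapν⟩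

lemma exists_subset_measure_eq {t T : ℝ} (htT : t ≤ T) (S : Set ℝ) (hS : MeasurableSet S)
    (hsub : S ⊆ Set.Icc t T) (m₀ : ℝ) (h0 : 0 ≤ m₀)
    (hle : ENNReal.ofReal m₀ ≤ volume S) :
    ∃ G : Set ℝ, MeasurableSet G ∧ G ⊆ S ∧ volume G = ENNReal.ofReal m₀ := by
  have hfinS : volume S ≠ ⊤ := by
    refine ne_of_lt (lt_of_le_of_lt (measure_mono hsub) ?_)
    rw [Real.volume_Icc]; exact ofReal_lt_top
  have hfin : ∀ u : ℝ, volume (S ∩ Set.Icc t u) ≠ ⊤ :=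
    fun u => ne_of_lt (lt_of_le_of_lt (measure_mono inter_subset_left) hfinS.lt_top)
  set f : ℝ → ℝ := fun u => (volume (S ∩ Set.Icc t u)).toReal with hf
  have hmono : ∀ u v : ℝ, u ≤ v → f u ≤ f v := by
    intro u v huv
    exact ENNReal.toReal_mono (hfin v) (measure_mono (inter_subset_inter_right _ (Set.Icc_subset_Icc_right huv)))
  have hlip : ∀ u v : ℝ, u ≤ v → f v - f u ≤ v - u := by
    intro u v huv
    have hsub2 : S ∩ Set.Icc t v ⊆ (S ∩ Set.Icc t u) ∪ Set.Ioc u v := by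
      rintro x ⟨hxS, hxt, hxv⟩
      rcases le_or_gt x u with h | h
      · exact Or.inl ⟨hxS, hxt, h⟩
      · exact Or.inr ⟨h, hxv⟩
    have h1 : volume (S ∩ Set.Icc t v) ≤ volume (S ∩ Set.Icc t u) + ENNReal.ofReal (v - u) := by
      refine le_trans (measure_mono hsub2) (le_trans (measure_union_le _ _) ?_)
      rw [Real.volume_Ioc]
    have h2 := ENNReal.toReal_mono (by
      exact ENNReal.add_ne_top.2 ⟨hfin u, ofReal_ne_top⟩) h1
    rw [ENNReal.toReal_add (hfin u) ofReal_ne_top, ENNReal.toReal_ofReal (by linarith)] at h2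
    simp only [hf] at *
    linarith
  have hcont : Continuous f := by
    refine LipschitzWith.continuous (K := 1) (LipschitzWith.of_dist_le_mul fun u v => ?_)
    rw [Real.dist_eq, Real.dist_eq, NNReal.coe_one, one_mul]
    rcases le_total u v with h | h
    · rw [abs_sub_comm, abs_of_nonneg (by linarith [hmono u v h]), abs_of_nonpos (by linarith)]
      linarith [hlip u v h]
    · rw [abs_of_nonneg (by linarith [hmono v u h]), abs_of_nonneg (by linarith)]
      linarith [hlip v u h]
  have hft : f t = 0 := by
    have h1 : volume (S ∩ ({t} : Set ℝ)) = 0 :=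
      measure_mono_null inter_subset_right (measure_singleton t)
    simp [hf, Set.Icc_self, h1]
  have hfT : m₀ ≤ f T := by
    have : S ∩ Set.Icc t T = S := inter_eq_left.2 hsub
    rw [hf]; simp only [this]
    exact (ENNReal.ofReal_le_iff_le_toReal hfinS).1 hle
  have : m₀ ∈ Set.Icc (f t) (f T) := ⟨by rw [hft]; exact h0, hfT⟩
  obtain ⟨u, -, hu⟩ := intermediate_value_Icc htT hcont.continuousOn this
  refine ⟨S ∩ Set.Icc t u, hS.inter measurableSet_Icc, inter_subset_left, ?_⟩
  rw [← hu, hf]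
  exact (ENNReal.ofReal_toReal (hfin u)).symm


end InfraSec

set_option maxHeartbeats 1000000 in
/-- **Corollary 3.2, Claim 2** (non-occurrence of the Lavrentiev phenomenon for the two
end point problem ($\mathcal P_{X,Y}$), real valued case). -/
theorem nonoccurrence_phenomenon_two_endpoints {n : ℕ} (hn : 1 ≤ n) (t T : ℝ) (ht : t < T)
    (p : ℝ) (hp : 1 ≤ p)
    (Λ : ℝ → EN n → EN n → ℝ≥0∞) (Ψ : ℝ → EN n → ℝ≥0∞)
    (hΛm : Measurable fun q : ℝ × EN n × EN n => Λ q.1 q.2.1 q.2.2)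
    (hΨm : Measurable fun q : ℝ × EN n => Ψ q.1 q.2)
    (hS : ConditionS t T p Λ)
    -- `Λ` is real valued
    (hΛreal : ∀ s ∈ Set.Icc t T, ∀ z v : EN n, Λ s z v ≠ ⊤)
    -- (B_Ψ): for every `K > 0`, `Ψ` is bounded on `I × B_K`
    (hΨbd : ∀ K : ℝ, 0 < K → ∃ M : ℝ≥0, ∀ s ∈ Set.Icc t T,
      ∀ z ∈ Metric.closedBall (0 : EN n) K, Ψ s z ≤ M)
    -- (C_Ψ): for every `K > 0` and `z ∈ B_K`, `Ψ(·,z)` is continuous on `I`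
    (hΨc : ∀ K : ℝ, 0 < K → ∀ z ∈ Metric.closedBall (0 : EN n) K,
      ContinuousOn (fun s => Ψ s z) (Set.Icc t T))
    -- (P_Ψ): for every `K > 0` there is `m_{K,Ψ} > 0` with `Ψ ≥ m_{K,Ψ}` on `I × B_K`
    (hΨpos : ∀ K : ℝ, 0 < K → ∃ m : ℝ, 0 < m ∧ ∀ s ∈ Set.Icc t T,
      ∀ z ∈ Metric.closedBall (0 : EN n) K, ENNReal.ofReal m ≤ Ψ s z)
    -- (U_Λ): for every `K > 0` and `r > 0`, `Λ` is bounded on `I × B_K × B_r`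
    (hΛbd : ∀ K : ℝ, 0 < K → ∀ r : ℝ, 0 < r → ∃ M : ℝ≥0, ∀ s ∈ Set.Icc t T,
      ∀ z ∈ Metric.closedBall (0 : EN n) K, ∀ v ∈ Metric.closedBall (0 : EN n) r,
        Λ s z v ≤ M)
    (X Y : EN n) :
    sInf {c : ℝ≥0∞ | ∃ y y' : ℝ → EN n, MemW1p t T p y y' ∧ y t = X ∧ y T = Y ∧
        c = Func t T Λ Ψ y y'} =
    sInf {c : ℝ≥0∞ | ∃ y y' : ℝ → EN n, MemW1p t T p y y' ∧
        (∃ C : ℝ≥0, LipschitzOnWith C y (Set.Icc t T)) ∧ y t = X ∧ y T = Y ∧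
        c = Func t T Λ Ψ y y'} := by
  classical
  refine le_antisymm (le_sInf ?_) (le_sInf ?_)
  · rintro c ⟨y, y', hW, hLip, hyt, hyT, rfl⟩
    exact sInf_le ⟨y, y', hW, hyt, hyT, rfl⟩
  rintro c ⟨y, y', hW, hyt, hyT, rfl⟩
  obtain ⟨hyInt, hyid, hyL, hy'L⟩ := hW
  -- measurable representative of y'
  obtain ⟨g, hgsm, hgae⟩ : ∃ g : ℝ → EN n, StronglyMeasurable g ∧
      y' =ᵐ[volume.restrict (Set.Icc t T)] g :=
    ⟨hy'L.aestronglyMeasurable.mk y', hy'L.aestronglyMeasurable.stronglyMeasurable_mk,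
      hy'L.aestronglyMeasurable.ae_eq_mk⟩
  have hgm : Measurable g := hgsm.measurable
  have htT : t ≤ T := ht.le
  have haesub : ∀ (u v : ℝ), t ≤ u → v ≤ T → y' =ᵐ[volume.restrict (Set.Ioc u v)] g := by
    intro u v hu hv
    refine ae_restrict_of_ae_restrict_of_subset ?_ hgae
    exact fun x hx => ⟨le_trans hu hx.1.le, le_trans hx.2 hv⟩
  have hgInt : IntegrableOn g (Set.Ioc t T) volume := by
    have h1 : IntegrableOn y' (Set.Ioc t T) volume :=
      (intervalIntegrable_iff_integrableOn_Ioc_of_le htT).mp hyInt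
    exact h1.congr_fun_ae (haesub t T le_rfl le_rfl)
  have hgid : ∀ x ∈ Set.Icc t T, y x = y t + ∫ s in t..x, g s := by
    intro x hx
    rw [hyid x hx]
    congr 1
    rw [intervalIntegral.integral_of_le hx.1, intervalIntegral.integral_of_le hx.1]
    exact integral_congr_ae (haesub t x le_rfl hx.2)
  have hgLp : MemLp g (ENNReal.ofReal p) (volume.restrict (Set.Icc t T)) :=
    (memLp_congr_ae hgae).mp hy'L
  have hFeq : Func t T Λ Ψ y y' = Func t T Λ Ψ y g := by
    refine lintegral_congr_ae ?_
    filter_upwards [hgae] with s hs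
    rw [hs]
  rw [hFeq]
  set c : ℝ≥0∞ := Func t T Λ Ψ y g with hc
  by_cases hctop : c = ⊤
  · rw [hctop]; exact le_top
  have hTt : (0:ℝ) < T - t := sub_pos.2 ht
  haveI hfinIcc : IsFiniteMeasure (volume.restrict (Set.Icc t T)) := by
    constructor
    rw [Measure.restrict_apply_univ, Real.volume_Icc]
    exact ofReal_lt_top
  have hycont : ContinuousOn y (Set.Icc t T) := by
    have hInt' : IntegrableOn g (Set.uIcc t T) volume := by
      rw [Set.uIcc_of_le htT]
      exact (integrableOn_Icc_iff_integrableOn_Ioc).mpr hgInt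
    have h1 : ContinuousOn (fun x => y t + ∫ s in t..x, g s) (Set.uIcc t T) :=
      continuousOn_const.add (intervalIntegral.continuousOn_primitive_interval hInt')
    rw [Set.uIcc_of_le htT] at h1
    exact h1.congr hgid
  obtain ⟨C0, hC0⟩ := (isCompact_Icc (a := t) (b := T)).exists_bound_of_continuousOn hycont
  set K : ℝ := max C0 1 with hKdef
  have hK0 : (0:ℝ) < K := lt_of_lt_of_le one_pos (le_max_right _ _)
  have hyK : ∀ s ∈ Set.Icc t T, y s ∈ Metric.closedBall (0 : EN n) K := by
    intro s hs
    rw [Metric.mem_closedBall, dist_zero_right]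
    exact le_trans (hC0 s hs) (le_max_left _ _)
  obtain ⟨MΨ, hMΨ⟩ := hΨbd K hK0
  obtain ⟨m, hm0, hmΨ⟩ := hΨpos K hK0
  obtain ⟨κ, β, hκ0, hβ0, γ, hγi, ε₀, hε₀, hSae⟩ := hS K hK0.le
  obtain ⟨M₁, hM₁⟩ := hΛbd K hK0 1 one_pos
  have hp1 : (1:ℝ≥0∞) ≤ ENNReal.ofReal p := by
    rw [← ENNReal.ofReal_one]; exact ENNReal.ofReal_le_ofReal hp
  have hgL1 : IntegrableOn g (Set.Icc t T) volume := hgLp.integrable hp1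
  have hgnormInt : IntegrableOn (fun s => ‖g s‖) (Set.Icc t T) volume := hgL1.norm
  set R : ℝ := max 1 (4 * (∫ s in Set.Icc t T, ‖g s‖) / (T - t)) with hRdef
  have hR1 : (1:ℝ) ≤ R := le_max_left _ _
  have hR0 : (0:ℝ) < R := lt_of_lt_of_le one_pos hR1
  obtain ⟨M₂, hM₂⟩ := hΛbd K hK0 (2*R) (by positivity)
  set SR : Set ℝ := Set.Icc t T ∩ {s | ‖g s‖ ≤ R} with hSRdef
  have hSRm : MeasurableSet SR :=
    measurableSet_Icc.inter (measurableSet_le hgm.norm measurable_const)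
  have hSRsub : SR ⊆ Set.Icc t T := inter_subset_left
  -- lower bound on the measure of SR
  have hSRvol : ENNReal.ofReal ((T - t)/2) ≤ volume SR := by
    set bad : Set ℝ := Set.Icc t T ∩ {s | R < ‖g s‖} with hbaddef
    have hbadm : MeasurableSet bad :=
      measurableSet_Icc.inter (measurableSet_lt measurable_const hgm.norm)
    have hbadfin : volume bad ≠ ⊤ :=
      ne_of_lt (lt_of_le_of_lt (measure_mono inter_subset_left)
        (by rw [Real.volume_Icc]; exact ofReal_lt_top))
    have hIg0 : (0:ℝ) ≤ ∫ s in Set.Icc t T, ‖g s‖ :=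
      setIntegral_nonneg measurableSet_Icc (fun s _ => norm_nonneg _)
    have hbadbound : R * (volume bad).toReal ≤ ∫ s in Set.Icc t T, ‖g s‖ := by
      refine le_trans (setIntegral_ge_of_const_le_real hbadm hbadfin
        (fun x hx => hx.2.le) (hgnormInt.mono_set inter_subset_left)) ?_
      exact setIntegral_mono_set hgnormInt
        (Filter.Eventually.of_forall (fun s => norm_nonneg _))
        (HasSubset.Subset.eventuallyLE inter_subset_left)
    have hbadint : (volume bad).toReal ≤ (T - t)/4 := by
      have h4 : 4 * (∫ s in Set.Icc t T, ‖g s‖) / (T - t) ≤ R := le_max_right _ _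
      have h5 : 4 * (∫ s in Set.Icc t T, ‖g s‖) ≤ R * (T - t) := by
        rw [div_le_iff₀ hTt] at h4; linarith
      nlinarith [hbadbound, h5, hR0, ENNReal.toReal_nonneg (a := volume bad)]
    have hdisj : Disjoint SR bad := by
      rw [Set.disjoint_left]
      rintro x ⟨-, hx1⟩ ⟨-, hx2⟩
      simp only [Set.mem_setOf_eq] at hx1 hx2
      exact absurd hx2 (not_lt.2 hx1)
    have hunion : SR ∪ bad = Set.Icc t T := by
      ext x
      constructor
      · rintro (⟨h, -⟩ | ⟨h, -⟩) <;> exact h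
      · intro hx
        rcases le_or_gt ‖g x‖ R with h | h
        · exact Or.inl ⟨hx, h⟩
        · exact Or.inr ⟨hx, h⟩
    have hSRfin : volume SR ≠ ⊤ :=
      ne_of_lt (lt_of_le_of_lt (measure_mono hSRsub)
        (by rw [Real.volume_Icc]; exact ofReal_lt_top))
    have hsum : (volume SR).toReal + (volume bad).toReal = T - t := by
      rw [← ENNReal.toReal_add hSRfin hbadfin, ← measure_union hdisj hbadm, hunion,
        Real.volume_Icc, ENNReal.toReal_ofReal hTt.le]
    rw [ENNReal.ofReal_le_iff_le_toReal hSRfin]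
    linarith
  -- the sequence of "bad" sets and associated quantities
  set B : ℕ → Set ℝ := fun k => Set.Icc t T ∩ {s | R + k < ‖g s‖} with hBdef
  have hBm : ∀ k, MeasurableSet (B k) := fun k =>
    measurableSet_Icc.inter (measurableSet_lt measurable_const hgm.norm)
  have hBsub : ∀ k, B k ⊆ Set.Icc t T := fun k => inter_subset_left
  have hBg1 : ∀ k : ℕ, ∀ s ∈ B k, 1 ≤ ‖g s‖ := by
    intro k s hs
    have h1 : R + (k:ℝ) < ‖g s‖ := hs.2
    have h2 : (1:ℝ) ≤ R + k := le_trans hR1 (le_add_of_nonneg_right (Nat.cast_nonneg k))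
    linarith
  set Δ : ℕ → ℝ := fun k => ∫ s in B k, (‖g s‖ - 1) with hΔdef
  set bb : ℕ → ℝ≥0∞ := fun k => ∫⁻ s in B k, ENNReal.ofReal ‖g s‖ with hbbdef
  have hBInt : ∀ k, IntegrableOn (fun s => ‖g s‖) (B k) volume := fun k =>
    hgnormInt.mono_set (hBsub k)
  have hBfin : ∀ k, volume (B k) ≠ ⊤ := fun k =>
    ne_of_lt (lt_of_le_of_lt (measure_mono (hBsub k))
      (by rw [Real.volume_Icc]; exact ofReal_lt_top))
  have hB1Int : ∀ k, IntegrableOn (fun s => ‖g s‖ - 1) (B k) volume := fun k =>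
    (hBInt k).sub (integrableOn_const (hBfin k))
  have hΔnn : ∀ k, 0 ≤ Δ k := fun k =>
    setIntegral_nonneg (hBm k) (fun s hs => by linarith [hBg1 k s hs])
  have hΔbb : ∀ k, ENNReal.ofReal (Δ k) ≤ bb k := by
    intro k
    have h1 : Δ k ≤ ∫ s in B k, ‖g s‖ :=
      setIntegral_mono_on (hB1Int k) (hBInt k) (hBm k) (fun s _ => by linarith)
    refine le_trans (ENNReal.ofReal_le_ofReal h1) ?_
    rw [ofReal_integral_eq_lintegral_ofReal (hBInt k)
      (Filter.Eventually.of_forall fun s => norm_nonneg _)]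
  have hbbfin : (∫⁻ s in Set.Icc t T, ENNReal.ofReal ‖g s‖) ≠ ⊤ := by
    rw [← ofReal_integral_eq_lintegral_ofReal hgnormInt
      (Filter.Eventually.of_forall fun s => norm_nonneg _)]
    exact ofReal_ne_top
  have hbb0 : Tendsto bb atTop (nhds 0) := by
    have heq : ∀ k : ℕ, bb k =
        ∫⁻ s in Set.Icc t T, (B k).indicator (fun s => ENNReal.ofReal ‖g s‖) s := by
      intro k
      rw [lintegral_indicator (hBm k), Measure.restrict_restrict (hBm k),
        Set.inter_eq_left.2 (hBsub k)]
    have h0 : Tendsto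
        (fun k => ∫⁻ s in Set.Icc t T, (B k).indicator (fun s => ENNReal.ofReal ‖g s‖) s)
        atTop (nhds (∫⁻ _ in Set.Icc t T, (0:ℝ≥0∞))) := by
      refine tendsto_lintegral_of_dominated_convergence (fun s => ENNReal.ofReal ‖g s‖)
        (fun k => (hgm.norm.ennreal_ofReal).indicator (hBm k))
        (fun k => Filter.Eventually.of_forall fun s => Set.indicator_le_self _ _ s)
        hbbfin (Filter.Eventually.of_forall fun s => ?_)
      refine tendsto_const_nhds.congr' ?_
      filter_upwards [eventually_ge_atTop (Nat.ceil ‖g s‖)] with k hk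
      have hns : s ∉ B k := by
        rintro ⟨-, hs2⟩
        have h3 : R + (k:ℝ) < ‖g s‖ := hs2
        have h4 : ‖g s‖ ≤ (Nat.ceil ‖g s‖ : ℝ) := Nat.le_ceil _
        have h5 : (Nat.ceil ‖g s‖ : ℝ) ≤ (k:ℝ) := Nat.cast_le.2 hk
        linarith
      rw [Set.indicator_of_notMem hns]
    simpa only [lintegral_zero, ← heq] using h0
  -- finiteness of the auxiliary integrals
  have hyaem : AEMeasurable y (volume.restrict (Set.Icc t T)) :=
    hycont.aemeasurable measurableSet_Icc
  have hΛaem : AEMeasurable (fun s => Λ s (y s) (g s)) (volume.restrict (Set.Icc t T)) :=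
    hΛm.comp_aemeasurable (aemeasurable_id.prodMk (hyaem.prodMk hgm.aemeasurable))
  set LΛ : ℝ≥0∞ := ∫⁻ s in Set.Icc t T, Λ s (y s) (g s) with hLΛdef
  have hm0' : ENNReal.ofReal m ≠ 0 := (ENNReal.ofReal_pos.2 hm0).ne'
  have hminv : (ENNReal.ofReal m)⁻¹ ≠ ⊤ := by
    simp [ENNReal.inv_ne_top, hm0']
  have hLΛle : LΛ ≤ c * (ENNReal.ofReal m)⁻¹ := by
    calc LΛ ≤ ∫⁻ s in Set.Icc t T, (Λ s (y s) (g s) * Ψ s (y s)) * (ENNReal.ofReal m)⁻¹ := by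
          refine lintegral_mono_ae ?_
          filter_upwards [ae_restrict_mem measurableSet_Icc] with s hs
          have h1 : ENNReal.ofReal m ≤ Ψ s (y s) := hmΨ s hs (y s) (hyK s hs)
          have h2 : (1:ℝ≥0∞) ≤ Ψ s (y s) * (ENNReal.ofReal m)⁻¹ := by
            rw [← ENNReal.mul_inv_cancel hm0' ofReal_ne_top]
            exact mul_le_mul_left h1 _
          calc Λ s (y s) (g s) = Λ s (y s) (g s) * 1 := (mul_one _).symm
            _ ≤ Λ s (y s) (g s) * (Ψ s (y s) * (ENNReal.ofReal m)⁻¹) := mul_le_mul_right h2 _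
            _ = Λ s (y s) (g s) * Ψ s (y s) * (ENNReal.ofReal m)⁻¹ := (mul_assoc _ _ _).symm
      _ = c * (ENNReal.ofReal m)⁻¹ := lintegral_mul_const' _ _ hminv
  have hLΛne : LΛ ≠ ⊤ :=
    ne_top_of_le_ne_top (ENNReal.mul_ne_top hctop hminv) hLΛle
  set Lg : ℝ≥0∞ := ∫⁻ s in Set.Icc t T, ENNReal.ofReal (‖g s‖ ^ p) with hLgdef
  have hLgne : Lg ≠ ⊤ := by
    have hp0 : 0 < p := lt_of_lt_of_le one_pos hp
    have h1 : Integrable (fun s => ‖g s‖ ^ (ENNReal.ofReal p).toReal)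
        (volume.restrict (Set.Icc t T)) :=
      hgLp.integrable_norm_rpow (by simpa [ENNReal.ofReal_eq_zero] using hp0) ofReal_ne_top
    rw [ENNReal.toReal_ofReal hp0.le] at h1
    rw [hLgdef, ← ofReal_integral_eq_lintegral_ofReal h1
      (Filter.Eventually.of_forall fun s => Real.rpow_nonneg (norm_nonneg _) p)]
    exact ofReal_ne_top
  set Lγ : ℝ≥0∞ := ∫⁻ s in Set.Icc t T, ENNReal.ofReal (γ s) with hLγdef
  have hLγne : Lγ ≠ ⊤ := by
    refine ne_of_lt (lt_of_le_of_lt ?_ hγi.2)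
    refine lintegral_mono fun s => ?_
    rw [Real.enorm_eq_ofReal_abs]
    exact ENNReal.ofReal_le_ofReal (le_abs_self _)
  set C₀ : ℝ≥0∞ := ↑MΨ * (ENNReal.ofReal κ * LΛ + (ENNReal.ofReal β * Lg + Lγ)) with hC₀def
  have hC₀ne : C₀ ≠ ⊤ :=
    ENNReal.mul_ne_top coe_ne_top (ENNReal.add_ne_top.2
      ⟨ENNReal.mul_ne_top ofReal_ne_top hLΛne,
        ENNReal.add_ne_top.2 ⟨ENNReal.mul_ne_top ofReal_ne_top hLgne, hLγne⟩⟩)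
  -- the per-k construction
  have hconstr : ∀ k : ℕ, ∃ τ : ℝ → ℝ,
      (ENNReal.ofReal (2 * Δ k) ≤ volume SR ∧ Δ k ≤ ε₀) →
      ((∀ s ∈ Set.Icc t T, τ s ∈ Set.Icc t T ∧ |τ s - s| ≤ Δ k) ∧
       Measurable τ ∧
       ∃ cc : ℝ≥0∞,
         cc ∈ {c : ℝ≥0∞ | ∃ y y' : ℝ → EN n, MemW1p t T p y y' ∧
           (∃ C : ℝ≥0, LipschitzOnWith C y (Set.Icc t T)) ∧ y t = X ∧ y T = Y ∧
           c = Func t T Λ Ψ y y'} ∧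
         cc ≤ (∫⁻ s in Set.Icc t T, Λ s (y s) (g s) * Ψ (τ s) (y s))
            + ENNReal.ofReal (Δ k) * C₀ + (↑M₁ * ↑MΨ) * bb k
            + (↑M₂ * ↑MΨ) * ENNReal.ofReal (2 * Δ k)) := by
    intro k
    by_cases hcond : ENNReal.ofReal (2 * Δ k) ≤ volume SR ∧ Δ k ≤ ε₀
    case neg => exact ⟨id, fun h => absurd h hcond⟩
    obtain ⟨hcond1, hcond2⟩ := hcond
    -- the compression set G
    obtain ⟨G, hGm, hGsub, hGvol⟩ := exists_subset_measure_eq htT SR hSRm hSRsub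
      (2 * Δ k) (by linarith [hΔnn k]) hcond1
    have hGIcc : G ⊆ Set.Icc t T := fun x hx => hSRsub (hGsub hx)
    have hGfin : volume G ≠ ⊤ := by rw [hGvol]; exact ofReal_ne_top
    have hGB : ∀ s, s ∈ G → s ∉ B k := by
      intro s hsG hsB
      have h1 : ‖g s‖ ≤ R := (hGsub hsG).2
      have h2 : R + (k:ℝ) < ‖g s‖ := hsB.2
      have h3 : (0:ℝ) ≤ (k:ℝ) := Nat.cast_nonneg k
      linarith
    -- the speed function
    set w : ℝ → ℝ := fun s => if s ∈ B k then ‖g s‖ else if s ∈ G then 1/2 else 1 with hwdef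
    have hw12 : ∀ s, 1/2 ≤ w s := by
      intro s
      simp only [hwdef]
      split_ifs with h1 h2
      · linarith [hBg1 k s h1]
      · exact le_rfl
      · norm_num
    have hwpos : ∀ s, 0 < w s := fun s => lt_of_lt_of_le (by norm_num) (hw12 s)
    have hw1 : ∀ s ∉ Set.Icc t T, w s = 1 := by
      intro s hs
      have hb : s ∉ B k := fun h => hs (hBsub k h)
      have hg : s ∉ G := fun h => hs (hGIcc h)
      simp [hwdef, hb, hg]
    have hwm : Measurable w := by
      rw [hwdef]
      exact Measurable.ite (hBm k) hgm.norm
        (Measurable.ite hGm measurable_const measurable_const)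
    have hwi : IntegrableOn w (Set.Icc t T) volume := by
      have hdom : IntegrableOn (fun s => ‖g s‖ + 1) (Set.Icc t T) volume :=
        hgnormInt.add (integrableOn_const (ne_of_lt
          (by rw [Real.volume_Icc]; exact ofReal_lt_top)))
      refine Integrable.mono' hdom hwm.aestronglyMeasurable.restrict ?_
      refine Filter.Eventually.of_forall fun s => ?_
      rw [Real.norm_eq_abs, abs_of_pos (hwpos s)]
      simp only [hwdef]
      split_ifs with h1 h2
      · linarith [norm_nonneg (g s)]
      · linarith [norm_nonneg (g s)]
      · linarith [norm_nonneg (g s)]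
    -- decomposition of w
    set w₁ : ℝ → ℝ := (B k).indicator (fun s => ‖g s‖ - 1) with hw₁def
    set w₂ : ℝ → ℝ := G.indicator (fun _ => -(1/2 : ℝ)) with hw₂def
    have hwsum : ∀ s, w s = 1 + w₁ s + w₂ s := by
      intro s
      simp only [hwdef, hw₁def, hw₂def]
      by_cases h1 : s ∈ B k
      · rw [if_pos h1, Set.indicator_of_mem h1,
          Set.indicator_of_notMem (fun h => hGB s h h1)]
        ring
      · rw [if_neg h1, Set.indicator_of_notMem h1]
        by_cases h2 : s ∈ G
        · rw [if_pos h2, Set.indicator_of_mem h2]; ring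
        · rw [if_neg h2, Set.indicator_of_notMem h2]; ring
    have hw₁int : Integrable w₁ volume := (hB1Int k).integrable_indicator (hBm k)
    have hw₂int : Integrable w₂ volume :=
      IntegrableOn.integrable_indicator
        (integrableOn_const hGfin) hGm
    have hGtoReal : (volume G).toReal = 2 * Δ k := by
      rw [hGvol, ENNReal.toReal_ofReal (by linarith [hΔnn k])]
    have hw₁eq : (∫ s, w₁ s) = Δ k := by
      rw [hw₁def, integral_indicator (hBm k)]
    have hw₂eq : (∫ s, w₂ s) = -(Δ k) := by
      rw [hw₂def, integral_indicator hGm, setIntegral_const, measureReal_def, hGtoReal, smul_eq_mul]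
      ring
    have hw₁nn : ∀ s, 0 ≤ w₁ s := by
      intro s
      rw [hw₁def]
      by_cases h : s ∈ B k
      · rw [Set.indicator_of_mem h]; linarith [hBg1 k s h]
      · rw [Set.indicator_of_notMem h]
    have hw₂np : ∀ s, w₂ s ≤ 0 := by
      intro s
      rw [hw₂def]
      by_cases h : s ∈ G
      · rw [Set.indicator_of_mem h]; norm_num
      · rw [Set.indicator_of_notMem h]
    have hIoc_eq_glob₁ : ∀ x ∈ Set.Icc t T, (∫ s in t..x, w₁ s) ≤ Δ k ∧ 0 ≤ ∫ s in t..x, w₁ s := by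
      intro x hx
      rw [intervalIntegral.integral_of_le hx.1]
      constructor
      · rw [← hw₁eq]
        refine setIntegral_le_integral hw₁int ?_
        exact Filter.Eventually.of_forall hw₁nn
      · exact setIntegral_nonneg measurableSet_Ioc (fun s _ => hw₁nn s)
    have hIoc_eq_glob₂ : ∀ x ∈ Set.Icc t T, -(Δ k) ≤ (∫ s in t..x, w₂ s) ∧ (∫ s in t..x, w₂ s) ≤ 0 := by
      intro x hx
      rw [intervalIntegral.integral_of_le hx.1]
      constructor
      · have h5 : (∫ s in Set.Ioc t x, -w₂ s) ≤ ∫ s, -w₂ s :=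
          setIntegral_le_integral hw₂int.neg
            (Filter.Eventually.of_forall fun s => neg_nonneg.2 (hw₂np s))
        rw [integral_neg, integral_neg, hw₂eq] at h5
        linarith
      · exact setIntegral_nonpos measurableSet_Ioc (fun s _ => hw₂np s)
    have hwTT : (∫ u in t..T, w u) = T - t := by
      rw [intervalIntegral.integral_of_le htT]
      have h1 : (∫ s in Set.Ioc t T, w s) = ∫ s in Set.Ioc t T, (1 + (w₁ s + w₂ s)) := by
        refine setIntegral_congr_fun measurableSet_Ioc (fun s _ => by rw [hwsum s]; ring)
      have h2b := integral_add (μ := volume.restrict (Set.Ioc t T)) (f := fun _ => (1:ℝ))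
        (g := fun s => w₁ s + w₂ s) (integrableOn_const measure_Ioc_lt_top.ne)
        (hw₁int.integrableOn.add hw₂int.integrableOn)
      have h2c := integral_add (μ := volume.restrict (Set.Ioc t T)) (f := w₁) (g := w₂)
        hw₁int.integrableOn hw₂int.integrableOn
      rw [h1, h2b, h2c, setIntegral_const, measureReal_def, Real.volume_Ioc, ENNReal.toReal_ofReal hTt.le,
        smul_eq_mul, mul_one]
      have h2 : (∫ s in Set.Ioc t T, w₁ s) = Δ k := by
        rw [← integral_Icc_eq_integral_Ioc, ← hw₁eq]
        refine setIntegral_eq_integral_of_forall_compl_eq_zero fun x hx => ?_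
        rw [hw₁def]
        exact Set.indicator_of_notMem (fun hmem => hx (hBsub k hmem)) _
      have h3 : (∫ s in Set.Ioc t T, w₂ s) = -(Δ k) := by
        rw [← integral_Icc_eq_integral_Ioc, ← hw₂eq]
        refine setIntegral_eq_integral_of_forall_compl_eq_zero fun x hx => ?_
        rw [hw₂def]
        exact Set.indicator_of_notMem (fun hmem => hx (hGIcc hmem)) _
      rw [h2, h3]
      ring
    -- the reparametrization
    obtain ⟨φ, hφm, hφsm, hleft, hright, hpre, hτsm, hmap⟩ :=
      repar_exists t T htT w hwm hw12 hw1 hwi hwTT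
    set τ : ℝ → ℝ := fun s => t + ∫ u in t..s, w u with hτdef
    have hInt' : ∀ a b : ℝ, IntervalIntegrable w volume a b := wIntervalIntegrable hw1 hwi
    have hτm : Measurable τ :=
      (continuous_const.add (intervalIntegral.continuous_primitive hInt' t)).measurable
    have hleft' : ∀ s, φ (τ s) = s := hleft
    have hright' : ∀ u, τ (φ u) = u := hright
    have hτt : τ t = t := by simp [hτdef]
    have hτT : τ T = T := by rw [hτdef]; simp only [hwTT]; ring
    have hτmono : Monotone τ := hτsm.monotone
    have hτIcc : ∀ s ∈ Set.Icc t T, τ s ∈ Set.Icc t T := by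
      intro s hs
      constructor
      · rw [← hτt]; exact hτmono hs.1
      · rw [← hτT]; exact hτmono hs.2
    have hφt : φ t = t := by
      have h := hleft' t
      rwa [hτt] at h
    have hφT : φ T = T := by
      have h := hleft' T
      rwa [hτT] at h
    have hφIcc : ∀ x ∈ Set.Icc t T, φ x ∈ Set.Icc t T := fun x hx =>
      ⟨by rw [← hφt]; exact hφsm.monotone hx.1, by rw [← hφT]; exact hφsm.monotone hx.2⟩
    have hτnear : ∀ s ∈ Set.Icc t T, |τ s - s| ≤ Δ k := by
      intro s hs
      have h1 : τ s - s = (∫ u in t..s, w₁ u) + ∫ u in t..s, w₂ u := by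
        have h2 : τ s - s = ∫ u in t..s, (w u - 1) := by
          rw [intervalIntegral.integral_sub (hInt' t s) intervalIntegrable_const,
            intervalIntegral.integral_const, smul_eq_mul, mul_one]
          simp only [hτdef]
          ring
        rw [h2, ← intervalIntegral.integral_add hw₁int.intervalIntegrable
          hw₂int.intervalIntegrable]
        exact intervalIntegral.integral_congr fun u _ => by rw [hwsum u]; ring
      have h3 := hIoc_eq_glob₁ s hs
      have h4 := hIoc_eq_glob₂ s hs
      exact abs_le.mpr ⟨by linarith [h3.2, h4.1], by linarith [h3.1, h4.2]⟩
    -- the new competitor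
    set v : ℝ → EN n :=
      fun u => Set.indicator (Set.Icc t T) (fun u' => (w (φ u'))⁻¹ • g (φ u')) u with hvdef
    have hvm : Measurable v := by
      refine Measurable.indicator ?_ measurableSet_Icc
      exact ((hwm.comp hφm).inv).smul (hgm.comp hφm)
    set rC : ℝ := R + k + 2*R + 1 with hrCdef
    have hrC0 : 0 < rC := by
      have : (0:ℝ) ≤ (k:ℝ) := Nat.cast_nonneg k
      simp only [hrCdef]
      nlinarith [hR0]
    have hvbd : ∀ u, ‖v u‖ ≤ rC := by
      intro u
      have hk0 : (0:ℝ) ≤ (k:ℝ) := Nat.cast_nonneg k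
      simp only [hvdef]
      by_cases hu : u ∈ Set.Icc t T
      · rw [Set.indicator_of_mem hu]
        have hφu : φ u ∈ Set.Icc t T := hφIcc u hu
        rw [norm_smul, Real.norm_eq_abs, abs_of_pos (inv_pos.2 (hwpos (φ u)))]
        simp only [hwdef]
        split_ifs with h1 h2
        · rw [inv_mul_cancel₀ (by linarith [hBg1 k (φ u) h1] : ‖g (φ u)‖ ≠ 0)]
          simp only [hrCdef]
          nlinarith [hR0]
        · have h3 : ‖g (φ u)‖ ≤ R := (hGsub h2).2
          have h4 : ((1:ℝ)/2)⁻¹ = 2 := by norm_num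
          rw [h4]
          simp only [hrCdef]
          nlinarith [norm_nonneg (g (φ u))]
        · have h5 : ‖g (φ u)‖ ≤ R + k := by
            by_contra h6
            exact h1 ⟨hφu, by simpa using not_le.1 h6⟩
          rw [inv_one, one_mul]
          simp only [hrCdef]
          linarith [hR0]
      · rw [Set.indicator_of_notMem hu, norm_zero]
        exact hrC0.le
    have hvi : ∀ a b : ℝ, IntervalIntegrable v volume a b := by
      intro a b
      rw [intervalIntegrable_iff]
      exact Integrable.mono' (integrableOn_const measure_Ioc_lt_top.ne)
        hvm.aestronglyMeasurable.restrict
        (Filter.Eventually.of_forall fun u => hvbd u)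
    set yh : ℝ → EN n := fun u => y t + ∫ s' in t..u, v s' with hyhdef
    have hyhlip : LipschitzWith (Real.toNNReal rC) yh := by
      refine LipschitzWith.of_dist_le_mul fun a b => ?_
      rw [dist_eq_norm, Real.coe_toNNReal _ hrC0.le]
      have h1 : yh a - yh b = ∫ s' in b..a, v s' := by
        simp only [hyhdef]
        rw [← intervalIntegral.integral_add_adjacent_intervals (hvi t b) (hvi b a)]
        abel
      rw [h1, dist_eq_norm]
      refine le_trans (intervalIntegral.norm_integral_le_of_norm_le_const
        fun x _ => hvbd x) ?_
      rw [Real.norm_eq_abs, abs_sub_comm]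
    have hyhcont : Continuous yh := hyhlip.continuous
    have hyhm : Measurable yh := hyhcont.measurable
    have hyht : yh t = y t := by simp [hyhdef]
    -- change of variables, Bochner version
    have hcov : ∀ x ∈ Set.Icc t T, (∫ u in t..x, v u) = ∫ s' in t..(φ x), g s' := by
      intro x hx
      have hφx : φ x ∈ Set.Icc t T := hφIcc x hx
      rw [intervalIntegral.integral_of_le hx.1, intervalIntegral.integral_of_le hφx.1]
      have h1 : volume.restrict (Set.Ioc t x) =
          Measure.map τ (((volume.restrict (Set.Icc t T)).withDensity
            (fun s => ENNReal.ofReal (w s))).restrict (Set.Ioc t (φ x))) := by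
        have h2 : Set.Ioc t x ⊆ Set.Icc t T := fun u hu => ⟨hu.1.le, le_trans hu.2 hx.2⟩
        calc volume.restrict (Set.Ioc t x)
            = (volume.restrict (Set.Icc t T)).restrict (Set.Ioc t x) := by
              rw [Measure.restrict_restrict measurableSet_Ioc, Set.inter_eq_left.2 h2]
          _ = (Measure.map τ ((volume.restrict (Set.Icc t T)).withDensity
                (fun s => ENNReal.ofReal (w s)))).restrict (Set.Ioc t x) := by rw [hmap]
          _ = _ := by
              rw [Measure.restrict_map hτm measurableSet_Ioc, hpre t x, hφt]
      rw [h1, integral_map hτm.aemeasurable hvm.aestronglyMeasurable]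
      have h3 : Set.Ioc t (φ x) ⊆ Set.Icc t T := fun u hu => ⟨hu.1.le, le_trans hu.2 hφx.2⟩
      rw [restrict_withDensity measurableSet_Ioc,
        Measure.restrict_restrict measurableSet_Ioc, Set.inter_eq_left.2 h3]
      have h4 : (fun s => ENNReal.ofReal (w s)) = fun s => (((w s).toNNReal : ℝ≥0) : ℝ≥0∞) :=
        rfl
      rw [h4, integral_withDensity_eq_integral_smul hwm.real_toNNReal]
      refine setIntegral_congr_fun measurableSet_Ioc fun s hs => ?_
      have hsIcc : s ∈ Set.Icc t T := h3 hs
      have hτs : τ s ∈ Set.Icc t T := hτIcc s hsIcc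
      simp only [hvdef]
      rw [Set.indicator_of_mem hτs, hleft' s, NNReal.smul_def,
        Real.coe_toNNReal _ (hwpos s).le, smul_smul, mul_inv_cancel₀ (hwpos s).ne', one_smul]
    have hyhφ : ∀ x ∈ Set.Icc t T, yh x = y (φ x) := by
      intro x hx
      simp only [hyhdef]
      rw [hcov x hx, ← hgid (φ x) (hφIcc x hx)]
    have hyhT : yh T = y T := by
      rw [hyhφ T (Set.right_mem_Icc.2 htT), hφT]
    -- Sobolev membership of the competitor
    have hyhW : MemW1p t T p yh v := by
      refine ⟨hvi t T, fun x _ => ?_, ?_, ?_⟩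
      · simp only [hyhdef]
        rw [intervalIntegral.integral_same]
        abel_nf
      · refine MemLp.of_bound
          (hyhcont.continuousOn.aestronglyMeasurable measurableSet_Icc)
          (‖y t‖ + rC * (T - t)) ?_
        filter_upwards [ae_restrict_mem measurableSet_Icc] with u hu
        have h1 : dist (yh u) (yh t) ≤ rC * dist u t := by
          have := hyhlip.dist_le_mul u t
          rwa [Real.coe_toNNReal _ hrC0.le] at this
        have h2 : dist u t ≤ T - t := by
          rw [Real.dist_eq, abs_le]
          constructor <;> [linarith [hu.1, hu.2]; linarith [hu.1, hu.2]]
        calc ‖yh u‖ ≤ ‖yh t‖ + dist (yh u) (yh t) := by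
              rw [dist_eq_norm]
              have := norm_sub_norm_le (yh u) (yh t)
              linarith [norm_sub_norm_le (yh u) (yh t)]
          _ ≤ ‖y t‖ + rC * (T - t) := by
              rw [hyht] at h1 ⊢
              have h5 : (0:ℝ) ≤ rC := hrC0.le
              have := mul_le_mul_of_nonneg_left h2 h5
              linarith [h1]
      · refine MemLp.of_bound hvm.aestronglyMeasurable.restrict rC ?_
        exact Filter.Eventually.of_forall fun u => hvbd u
    -- change of variables for the functional
    set Q : ℝ → ℝ≥0∞ :=
      fun s => ENNReal.ofReal (w s) * (Λ (τ s) (y s) ((w s)⁻¹ • g s) * Ψ (τ s) (y s)) with hQdef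
    have hHm : Measurable (fun u => Λ u (yh u) (v u) * Ψ u (yh u)) :=
      (hΛm.comp (measurable_id.prodMk (hyhm.prodMk hvm))).mul
        (hΨm.comp (measurable_id.prodMk hyhm))
    have hFunc : Func t T Λ Ψ yh v = ∫⁻ s in Set.Icc t T, Q s := by
      calc Func t T Λ Ψ yh v
          = ∫⁻ u, (fun u => Λ u (yh u) (v u) * Ψ u (yh u)) u
              ∂(Measure.map τ ((volume.restrict (Set.Icc t T)).withDensity
                (fun s => ENNReal.ofReal (w s)))) := by rw [hmap]; rfl
        _ = ∫⁻ s, Λ (τ s) (yh (τ s)) (v (τ s)) * Ψ (τ s) (yh (τ s))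
              ∂((volume.restrict (Set.Icc t T)).withDensity (fun s => ENNReal.ofReal (w s))) :=
            lintegral_map hHm hτm
        _ = ∫⁻ s in Set.Icc t T,
              ENNReal.ofReal (w s) * (Λ (τ s) (yh (τ s)) (v (τ s)) * Ψ (τ s) (yh (τ s))) := by
            rw [lintegral_withDensity_eq_lintegral_mul _ hwm.ennreal_ofReal
              (show Measurable (fun s => Λ (τ s) (yh (τ s)) (v (τ s)) * Ψ (τ s) (yh (τ s))) from
                hHm.comp hτm)]
            rfl
        _ = ∫⁻ s in Set.Icc t T, Q s := by
            refine setLIntegral_congr_fun measurableSet_Icc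
              (fun s hs => ?_)
            have hτs : τ s ∈ Set.Icc t T := hτIcc s hs
            simp only [hQdef]
            rw [hyhφ (τ s) hτs, hleft' s]
            congr 2
            simp only [hvdef]
            rw [Set.indicator_of_mem hτs, hleft' s]
    set Rest : Set ℝ := Set.Icc t T \ (B k ∪ G) with hRestdef
    have hRestm : MeasurableSet Rest := measurableSet_Icc.diff ((hBm k).union hGm)
    have hdisjBG : Disjoint (B k) G := Set.disjoint_left.2 (fun s hsB hsG => hGB s hsG hsB)
    have hsplit : (∫⁻ s in Set.Icc t T, Q s)
        = ((∫⁻ s in B k, Q s) + ∫⁻ s in G, Q s) + ∫⁻ s in Rest, Q s := by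
      have hBG : Set.Icc t T = (B k ∪ G) ∪ Rest :=
        (Set.union_diff_cancel (Set.union_subset (hBsub k) hGIcc)).symm
      rw [hBG, lintegral_union hRestm disjoint_sdiff_self_right,
        lintegral_union hGm hdisjBG]
    have hbd1 : (∫⁻ s in B k, Q s) ≤ (↑M₁ * ↑MΨ) * bb k := by
      have h1 : ∀ s ∈ B k, Q s ≤ (↑M₁ * ↑MΨ : ℝ≥0∞) * ENNReal.ofReal ‖g s‖ := by
        intro s hs
        have hsI : s ∈ Set.Icc t T := hBsub k hs
        have hτs : τ s ∈ Set.Icc t T := hτIcc s hsI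
        have hws : w s = ‖g s‖ := by simp only [hwdef]; rw [if_pos hs]
        have hgpos : (0:ℝ) < ‖g s‖ := lt_of_lt_of_le one_pos (hBg1 k s hs)
        have hunit : (w s)⁻¹ • g s ∈ Metric.closedBall (0 : EN n) 1 := by
          rw [mem_closedBall_zero_iff, norm_smul, hws, Real.norm_eq_abs,
            abs_of_pos (inv_pos.2 hgpos), inv_mul_cancel₀ hgpos.ne']
        calc Q s ≤ ENNReal.ofReal (w s) * (↑M₁ * ↑MΨ) := by
              simp only [hQdef]
              exact mul_le_mul_right (mul_le_mul'
                (hM₁ (τ s) hτs (y s) (hyK s hsI) _ hunit)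
                (hMΨ (τ s) hτs (y s) (hyK s hsI))) _
          _ = (↑M₁ * ↑MΨ) * ENNReal.ofReal ‖g s‖ := by rw [hws, mul_comm]
      calc (∫⁻ s in B k, Q s)
          ≤ ∫⁻ s in B k, (↑M₁ * ↑MΨ : ℝ≥0∞) * ENNReal.ofReal ‖g s‖ := by
            refine lintegral_mono_ae ?_
            filter_upwards [ae_restrict_mem (hBm k)] with s hs using h1 s hs
        _ = (↑M₁ * ↑MΨ) * bb k := by
            rw [hbbdef]
            exact lintegral_const_mul' _ _ (ENNReal.mul_ne_top coe_ne_top coe_ne_top)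
    have hbd2 : (∫⁻ s in G, Q s) ≤ (↑M₂ * ↑MΨ) * ENNReal.ofReal (2 * Δ k) := by
      have h1 : ∀ s ∈ G, Q s ≤ (↑M₂ * ↑MΨ : ℝ≥0∞) := by
        intro s hs
        have hsI : s ∈ Set.Icc t T := hGIcc hs
        have hτs : τ s ∈ Set.Icc t T := hτIcc s hsI
        have hsB : s ∉ B k := hGB s hs
        have hws : w s = 1/2 := by simp only [hwdef]; rw [if_neg hsB, if_pos hs]
        have hnm : (w s)⁻¹ • g s ∈ Metric.closedBall (0 : EN n) (2*R) := by
          rw [mem_closedBall_zero_iff, norm_smul, hws, Real.norm_eq_abs]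
          have h2 : ((1:ℝ)/2)⁻¹ = 2 := by norm_num
          rw [h2, abs_of_pos (by norm_num : (0:ℝ) < 2)]
          have h3 : ‖g s‖ ≤ R := (hGsub hs).2
          nlinarith [norm_nonneg (g s)]
        calc Q s ≤ 1 * (↑M₂ * ↑MΨ) := by
              simp only [hQdef]
              refine mul_le_mul' ?_ (mul_le_mul'
                (hM₂ (τ s) hτs (y s) (hyK s hsI) _ hnm)
                (hMΨ (τ s) hτs (y s) (hyK s hsI)))
              rw [hws]
              exact ENNReal.ofReal_le_one.2 (by norm_num)
          _ = ↑M₂ * ↑MΨ := one_mul _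
      calc (∫⁻ s in G, Q s)
          ≤ ∫⁻ _ in G, (↑M₂ * ↑MΨ : ℝ≥0∞) := by
            refine lintegral_mono_ae ?_
            filter_upwards [ae_restrict_mem hGm] with s hs using h1 s hs
        _ = (↑M₂ * ↑MΨ) * volume G := setLIntegral_const G _
        _ = (↑M₂ * ↑MΨ) * ENNReal.ofReal (2 * Δ k) := by rw [hGvol]
    have hyaem' : AEMeasurable y (volume.restrict Rest) :=
      hyaem.mono_measure (Measure.restrict_mono Set.diff_subset le_rfl)
    have hΛaem' : AEMeasurable (fun s => Λ s (y s) (g s)) (volume.restrict Rest) :=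
      hΛaem.mono_measure (Measure.restrict_mono Set.diff_subset le_rfl)
    have hΨτaem : AEMeasurable (fun s => Ψ (τ s) (y s)) (volume.restrict Rest) :=
      hΨm.comp_aemeasurable (hτm.aemeasurable.prodMk hyaem')
    have hbd3 : (∫⁻ s in Rest, Q s)
        ≤ (∫⁻ s in Set.Icc t T, Λ s (y s) (g s) * Ψ (τ s) (y s))
          + ENNReal.ofReal (Δ k) * C₀ := by
      have hae : ∀ᵐ s ∂(volume.restrict Rest),
          Q s ≤ Λ s (y s) (g s) * Ψ (τ s) (y s)
            + (ENNReal.ofReal (Δ k) * ↑MΨ) * (ENNReal.ofReal κ * Λ s (y s) (g s)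
                + (ENNReal.ofReal β * ENNReal.ofReal (‖g s‖ ^ p) + ENNReal.ofReal (γ s))) := by
        have hSae' := ae_restrict_of_ae_restrict_of_subset
          (Set.diff_subset : Rest ⊆ Set.Icc t T) hSae
        filter_upwards [hSae', ae_restrict_mem hRestm] with s hsS hsR
        obtain ⟨hsI, hsBG⟩ := hsR
        have hws : w s = 1 := by
          simp only [hwdef]
          rw [if_neg (fun h => hsBG (Or.inl h)), if_neg (fun h => hsBG (Or.inr h))]
        have hτs : τ s ∈ Set.Icc t T := hτIcc s hsI
        have hnear := hτnear s hsI
        have hτwin : τ s ∈ Set.Icc (s - ε₀) (s + ε₀) ∩ Set.Icc t T := by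
          rw [abs_le] at hnear
          exact ⟨⟨by linarith [hcond2], by linarith [hcond2]⟩, hτs⟩
        have hswin : s ∈ Set.Icc (s - ε₀) (s + ε₀) ∩ Set.Icc t T :=
          ⟨⟨by linarith [hε₀], by linarith [hε₀]⟩, hsI⟩
        have hfin : Λ s (y s) (g s) < ⊤ := (hΛreal s hsI (y s) (g s)).lt_top
        have hkey := hsS s hswin (τ s) hτwin (y s) (hyK s hsI) (g s) hfin
        have h2 : Λ (τ s) (y s) (g s) ≤ Λ s (y s) (g s)
            + (ENNReal.ofReal κ * Λ s (y s) (g s) + ENNReal.ofReal (β * ‖g s‖ ^ p + γ s))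
              * ENNReal.ofReal (Δ k) := by
          have h3 : Λ (τ s) (y s) (g s) - Λ s (y s) (g s)
              ≤ (ENNReal.ofReal κ * Λ s (y s) (g s) + ENNReal.ofReal (β * ‖g s‖ ^ p + γ s))
                * ENNReal.ofReal |τ s - s| := le_trans le_sup_left hkey
          have h4 := tsub_le_iff_left.mp h3
          refine le_trans h4 ?_
          exact add_le_add_right (mul_le_mul_right (ENNReal.ofReal_le_ofReal hnear) _) _
        have h5 : Q s = Λ (τ s) (y s) (g s) * Ψ (τ s) (y s) := by
          simp only [hQdef]
          rw [hws]
          simp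
        rw [h5]
        calc Λ (τ s) (y s) (g s) * Ψ (τ s) (y s)
            ≤ (Λ s (y s) (g s)
                + (ENNReal.ofReal κ * Λ s (y s) (g s) + ENNReal.ofReal (β * ‖g s‖ ^ p + γ s))
                  * ENNReal.ofReal (Δ k)) * Ψ (τ s) (y s) := mul_le_mul_left h2 _
          _ ≤ Λ s (y s) (g s) * Ψ (τ s) (y s)
              + (ENNReal.ofReal κ * Λ s (y s) (g s) + ENNReal.ofReal (β * ‖g s‖ ^ p + γ s))
                * ENNReal.ofReal (Δ k) * ↑MΨ := by
              rw [add_mul]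
              exact add_le_add_right
                (mul_le_mul_right (hMΨ (τ s) hτs (y s) (hyK s hsI)) _) _
          _ ≤ _ := by
              refine add_le_add_right ?_ _
              have h6 : ENNReal.ofReal (β * ‖g s‖ ^ p + γ s)
                  ≤ ENNReal.ofReal β * ENNReal.ofReal (‖g s‖ ^ p) + ENNReal.ofReal (γ s) := by
                refine le_trans ENNReal.ofReal_add_le ?_
                rw [ENNReal.ofReal_mul hβ0]
              calc (ENNReal.ofReal κ * Λ s (y s) (g s) + ENNReal.ofReal (β * ‖g s‖ ^ p + γ s))
                    * ENNReal.ofReal (Δ k) * ↑MΨ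
                  ≤ (ENNReal.ofReal κ * Λ s (y s) (g s)
                      + (ENNReal.ofReal β * ENNReal.ofReal (‖g s‖ ^ p) + ENNReal.ofReal (γ s)))
                    * ENNReal.ofReal (Δ k) * ↑MΨ :=
                    mul_le_mul_left (mul_le_mul_left (add_le_add_right h6 _) _) _
                _ = (ENNReal.ofReal (Δ k) * ↑MΨ) * (ENNReal.ofReal κ * Λ s (y s) (g s)
                      + (ENNReal.ofReal β * ENNReal.ofReal (‖g s‖ ^ p) + ENNReal.ofReal (γ s))) := by
                    ring
      have hIne : (ENNReal.ofReal (Δ k) * (↑MΨ : ℝ≥0∞)) ≠ ⊤ :=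
        ENNReal.mul_ne_top ofReal_ne_top coe_ne_top
      calc (∫⁻ s in Rest, Q s)
          ≤ ∫⁻ s in Rest, (Λ s (y s) (g s) * Ψ (τ s) (y s)
              + (ENNReal.ofReal (Δ k) * ↑MΨ) * (ENNReal.ofReal κ * Λ s (y s) (g s)
                + (ENNReal.ofReal β * ENNReal.ofReal (‖g s‖ ^ p) + ENNReal.ofReal (γ s)))) :=
            lintegral_mono_ae hae
        _ = (∫⁻ s in Rest, Λ s (y s) (g s) * Ψ (τ s) (y s))
            + ∫⁻ s in Rest, (ENNReal.ofReal (Δ k) * ↑MΨ) * (ENNReal.ofReal κ * Λ s (y s) (g s)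
                + (ENNReal.ofReal β * ENNReal.ofReal (‖g s‖ ^ p) + ENNReal.ofReal (γ s))) :=
            lintegral_add_left' (hΛaem'.mul hΨτaem) _
        _ ≤ (∫⁻ s in Set.Icc t T, Λ s (y s) (g s) * Ψ (τ s) (y s))
            + (ENNReal.ofReal (Δ k) * ↑MΨ) * ∫⁻ s in Rest, (ENNReal.ofReal κ * Λ s (y s) (g s)
                + (ENNReal.ofReal β * ENNReal.ofReal (‖g s‖ ^ p) + ENNReal.ofReal (γ s))) := by
            refine add_le_add (lintegral_mono_set Set.diff_subset) ?_
            rw [lintegral_const_mul' _ _ hIne]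
        _ ≤ (∫⁻ s in Set.Icc t T, Λ s (y s) (g s) * Ψ (τ s) (y s))
            + (ENNReal.ofReal (Δ k) * ↑MΨ) * ∫⁻ s in Set.Icc t T,
                (ENNReal.ofReal κ * Λ s (y s) (g s)
                + (ENNReal.ofReal β * ENNReal.ofReal (‖g s‖ ^ p) + ENNReal.ofReal (γ s))) :=
            add_le_add_right (mul_le_mul_right (lintegral_mono_set Set.diff_subset) _) _
        _ = (∫⁻ s in Set.Icc t T, Λ s (y s) (g s) * Ψ (τ s) (y s))
            + ENNReal.ofReal (Δ k) * C₀ := by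
            congr 1
            have h7 : (∫⁻ s in Set.Icc t T, (ENNReal.ofReal κ * Λ s (y s) (g s)
                + (ENNReal.ofReal β * ENNReal.ofReal (‖g s‖ ^ p) + ENNReal.ofReal (γ s))))
                = ENNReal.ofReal κ * LΛ + (ENNReal.ofReal β * Lg + Lγ) := by
              rw [lintegral_add_left' (hΛaem.const_mul _) _]
              congr 1
              · exact lintegral_const_mul' _ _ ofReal_ne_top
              · rw [lintegral_add_left' ((hgm.norm.pow_const p).ennreal_ofReal.aemeasurable.const_mul _) _]
                congr 1
                exact lintegral_const_mul' _ _ ofReal_ne_top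
            rw [h7, hC₀def]
            ring
    have hccle : Func t T Λ Ψ yh v
        ≤ (∫⁻ s in Set.Icc t T, Λ s (y s) (g s) * Ψ (τ s) (y s))
          + ENNReal.ofReal (Δ k) * C₀ + (↑M₁ * ↑MΨ) * bb k
          + (↑M₂ * ↑MΨ) * ENNReal.ofReal (2 * Δ k) := by
      rw [hFunc, hsplit]
      calc ((∫⁻ s in B k, Q s) + ∫⁻ s in G, Q s) + ∫⁻ s in Rest, Q s
          ≤ ((↑M₁ * ↑MΨ) * bb k + (↑M₂ * ↑MΨ) * ENNReal.ofReal (2 * Δ k))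
            + ((∫⁻ s in Set.Icc t T, Λ s (y s) (g s) * Ψ (τ s) (y s))
              + ENNReal.ofReal (Δ k) * C₀) :=
            add_le_add (add_le_add hbd1 hbd2) hbd3
        _ = _ := by ring
    exact ⟨τ, fun _ => ⟨fun s hs => ⟨hτIcc s hs, hτnear s hs⟩, hτm,
      Func t T Λ Ψ yh v,
      ⟨yh, v, hyhW, ⟨Real.toNNReal rC, hyhlip.lipschitzOnWith (s := Set.Icc t T)⟩,
        by rw [hyht, hyt], by rw [hyhT, hyT], rfl⟩, hccle⟩⟩



  -- choose the reparametrizations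
  choose τs hτprops using hconstr
  set A : ℕ → ℝ≥0∞ :=
    fun k => ∫⁻ s in Set.Icc t T, Λ s (y s) (g s) * Ψ (τs k s) (y s) with hAdef
  -- basic limits
  have hofΔ0 : Tendsto (fun k => ENNReal.ofReal (Δ k)) atTop (nhds 0) :=
    tendsto_of_tendsto_of_tendsto_of_le_of_le tendsto_const_nhds hbb0
      (fun k => by positivity) hΔbb
  have hΔ0 : Tendsto Δ atTop (nhds (0:ℝ)) := by
    have h1 := (ENNReal.tendsto_toReal (a := (0:ℝ≥0∞)) (by simp)).comp hofΔ0
    have h2 : ENNReal.toReal (0:ℝ≥0∞) = (0:ℝ) := by simp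
    rw [h2] at h1
    exact h1.congr fun k => ENNReal.toReal_ofReal (hΔnn k)
  have h2Δbb : ∀ k, ENNReal.ofReal (2 * Δ k) ≤ 2 * bb k := by
    intro k
    rw [ENNReal.ofReal_mul (by norm_num : (0:ℝ) ≤ 2), ENNReal.ofReal_ofNat]
    exact mul_le_mul_right (hΔbb k) _
  have h2bb0 : Tendsto (fun k => 2 * bb k) atTop (nhds 0) := by
    have := ENNReal.Tendsto.const_mul (a := (2:ℝ≥0∞)) hbb0 (Or.inr (by norm_num))
    simpa using this
  have hof2Δ0 : Tendsto (fun k => ENNReal.ofReal (2 * Δ k)) atTop (nhds 0) :=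
    tendsto_of_tendsto_of_tendsto_of_le_of_le tendsto_const_nhds h2bb0
      (fun k => by positivity) h2Δbb
  -- the conditions eventually hold
  have hSRpos : (0:ℝ≥0∞) < volume SR :=
    lt_of_lt_of_le (ENNReal.ofReal_pos.2 (by linarith)) hSRvol
  have hcondev : ∀ᶠ k in atTop, ENNReal.ofReal (2 * Δ k) ≤ volume SR ∧ Δ k ≤ ε₀ := by
    have hev1 : ∀ᶠ k in atTop, ENNReal.ofReal (2 * Δ k) < volume SR :=
      hof2Δ0.eventually_lt_const hSRpos
    have hev2 : ∀ᶠ k in atTop, Δ k < ε₀ := hΔ0.eventually_lt_const hε₀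
    filter_upwards [hev1, hev2] with k h1 h2
    exact ⟨h1.le, h2.le⟩
  obtain ⟨N₀, hN₀⟩ := eventually_atTop.1 hcondev
  have hshift : Tendsto (fun j : ℕ => N₀ + j) atTop atTop := by
    simpa [add_comm] using tendsto_add_atTop_nat N₀
  have hLΛMne : LΛ * (↑MΨ : ℝ≥0∞) ≠ ⊤ := ENNReal.mul_ne_top hLΛne coe_ne_top
  -- convergence of the main term
  have hAtend : Tendsto (fun j : ℕ => A (N₀ + j)) atTop (nhds c) := by
    have hprops : ∀ j : ℕ, ∀ s ∈ Set.Icc t T,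
        τs (N₀ + j) s ∈ Set.Icc t T ∧ |τs (N₀ + j) s - s| ≤ Δ (N₀ + j) :=
      fun j => (hτprops _ (hN₀ _ (Nat.le_add_right _ _))).1
    have hτmeas : ∀ j : ℕ, Measurable (τs (N₀ + j)) :=
      fun j => (hτprops _ (hN₀ _ (Nat.le_add_right _ _))).2.1
    have hcc : c = ∫⁻ s in Set.Icc t T, Λ s (y s) (g s) * Ψ s (y s) := rfl
    rw [hcc]
    refine tendsto_lintegral_of_dominated_convergence'
      (bound := fun s => Λ s (y s) (g s) * ↑MΨ)
      (fun j => hΛaem.mul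
        (hΨm.comp_aemeasurable ((hτmeas j).aemeasurable.prodMk hyaem))) ?_ ?_ ?_
    · intro j
      filter_upwards [ae_restrict_mem measurableSet_Icc] with s hs
      exact mul_le_mul_right (hMΨ _ ((hprops j s hs).1) _ (hyK s hs)) _
    · rw [lintegral_mul_const' _ _ coe_ne_top]
      exact ENNReal.mul_ne_top hLΛne coe_ne_top
    · filter_upwards [ae_restrict_mem measurableSet_Icc] with s hs
      have hΛne : Λ s (y s) (g s) ≠ ⊤ := hΛreal s hs (y s) (g s)
      have hΔsh : Tendsto (fun j : ℕ => Δ (N₀ + j)) atTop (nhds 0) := hΔ0.comp hshift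
      have htends : Tendsto (fun j : ℕ => τs (N₀ + j) s) atTop (nhds s) := by
        have h1 : Tendsto (fun j : ℕ => τs (N₀ + j) s - s) atTop (nhds 0) := by
          refine squeeze_zero_norm (fun j => ?_) hΔsh
          rw [Real.norm_eq_abs]
          exact (hprops j s hs).2
        have h2 := h1.add (tendsto_const_nhds (x := s) (f := (atTop : Filter ℕ)))
        simpa using h2
      have happroach : Tendsto (fun j : ℕ => τs (N₀ + j) s) atTop
          (nhdsWithin s (Set.Icc t T)) := by
        rw [tendsto_nhdsWithin_iff]
        exact ⟨htends, Filter.Eventually.of_forall fun j => (hprops j s hs).1⟩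
      have hcw : ContinuousWithinAt (fun σ => Ψ σ (y s)) (Set.Icc t T) s :=
        (hΨc K hK0 (y s) (hyK s hs)) s hs
      have hΨtd : Tendsto (fun j : ℕ => Ψ (τs (N₀ + j) s) (y s)) atTop
          (nhds (Ψ s (y s))) := hcw.tendsto.comp happroach
      exact ENNReal.Tendsto.const_mul hΨtd (Or.inr hΛne)
  -- conclusion
  refine ENNReal.le_of_forall_pos_le_add fun δ hδ _ => ?_
  have hδ40 : (0:ℝ≥0∞) < ↑δ / 4 := by
    refine ENNReal.div_pos ?_ (by norm_num)
    exact_mod_cast hδ.ne'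
  have hev1 : ∀ᶠ j : ℕ in atTop, A (N₀ + j) < c + ↑δ/4 := by
    refine hAtend.eventually_lt_const ?_
    exact ENNReal.lt_add_right hctop hδ40.ne'
  have hev2 : ∀ᶠ k : ℕ in atTop, ENNReal.ofReal (Δ k) * C₀ < ↑δ/4 := by
    refine Filter.Tendsto.eventually_lt_const hδ40 ?_
    simpa using ENNReal.Tendsto.mul_const hofΔ0 (Or.inr hC₀ne)
  have hev3 : ∀ᶠ k : ℕ in atTop, (↑M₁ * ↑MΨ : ℝ≥0∞) * bb k < ↑δ/4 := by
    refine Filter.Tendsto.eventually_lt_const hδ40 ?_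
    simpa using ENNReal.Tendsto.const_mul (a := (↑M₁ * ↑MΨ : ℝ≥0∞)) hbb0
      (Or.inr (ENNReal.mul_ne_top coe_ne_top coe_ne_top))
  have hev4 : ∀ᶠ k : ℕ in atTop, (↑M₂ * ↑MΨ : ℝ≥0∞) * ENNReal.ofReal (2 * Δ k) < ↑δ/4 := by
    refine Filter.Tendsto.eventually_lt_const hδ40 ?_
    simpa using ENNReal.Tendsto.const_mul (a := (↑M₂ * ↑MΨ : ℝ≥0∞)) hof2Δ0
      (Or.inr (ENNReal.mul_ne_top coe_ne_top coe_ne_top))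
  obtain ⟨j, h1, h2, h3, h4⟩ :=
    (hev1.and ((hshift.eventually hev2).and
      ((hshift.eventually hev3).and (hshift.eventually hev4)))).exists
  obtain ⟨hprop, hτmk, cc, hccmem, hccle⟩ :=
    hτprops (N₀ + j) (hN₀ _ (Nat.le_add_right _ _))
  calc sInf {c : ℝ≥0∞ | ∃ y y' : ℝ → EN n, MemW1p t T p y y' ∧
        (∃ C : ℝ≥0, LipschitzOnWith C y (Set.Icc t T)) ∧ y t = X ∧ y T = Y ∧
        c = Func t T Λ Ψ y y'} ≤ cc := sInf_le hccmem
    _ ≤ A (N₀ + j) + ENNReal.ofReal (Δ (N₀ + j)) * C₀ + (↑M₁ * ↑MΨ) * bb (N₀ + j)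
        + (↑M₂ * ↑MΨ) * ENNReal.ofReal (2 * Δ (N₀ + j)) := hccle
    _ ≤ (c + ↑δ/4) + ↑δ/4 + ↑δ/4 + ↑δ/4 :=
        add_le_add (add_le_add (add_le_add h1.le h2.le) h3.le) h4.le
    _ = c + ↑δ := by
        rw [add_assoc, add_assoc, add_assoc]
        congr 1
        rw [show (↑δ/4 + (↑δ/4 + (↑δ/4 + ↑δ/4)) : ℝ≥0∞) = ↑δ/4 * 4 by ring]
        exact ENNReal.div_mul_cancel (by norm_num) (by norm_num)
end
end

section
/- (Manià's example: non-occurrence of the Lavrentiev gap with only the final end point condition.) Let F(z) = ∫_0^1 (z(s)³ − s)²·(z'(s))⁶ ds and y(s) = s^{1/3}. For each integer h ≥ 1 define y_h(s) = h^{−1/3} for s ∈ [0, 1/h] and y_h(s) = s^{1/3} for s ∈ (1/h, 1]. Then each y_h is Lipschitz on [0,1], y_h(1) = 1 = y(1), F(y_h) = 0 = F(y) for every h, and y_h → y in W^{1,1}([0,1]) (i.e. y_h → y uniformly and y_h' → y' in L¹). In particular inf{ F(z) : z Lipschitz on [0,1], z(1)=1 } = 0, so the Lavrentiev phenomenon does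 not occur for the problem with the single end point condition z(1)=1. -/
open MeasureTheory Set Filter ENNReal NNReal

noncomputable section

/-- `z` belongs to `W^{1,1}([0,1];ℝ)` with derivative `z'`. -/
def MemW11 (z z' : ℝ → ℝ) : Prop :=
  IntervalIntegrable z' volume 0 1 ∧
  ∀ x ∈ Set.Icc (0:ℝ) 1, z x = z 0 + ∫ s in (0:ℝ)..x, z' s

/-- The Manià functional `F(z) = ∫_0^1 (z³ − s)² (z')⁶ ds`. -/
def ManiaF (z z' : ℝ → ℝ) : ℝ≥0∞ :=
  ∫⁻ s in Set.Icc (0:ℝ) 1, ENNReal.ofReal ((z s ^ 3 - s) ^ 2 * z' s ^ 6)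

/-- The truncated functions `y_h`. -/
def maniaYh (h : ℕ) (s : ℝ) : ℝ :=
  if s ≤ 1 / (h : ℝ) then (h : ℝ) ^ (-(1:ℝ)/3) else s ^ ((1:ℝ)/3)

/-- The (a.e.) derivatives of the truncated functions `y_h`. -/
def maniaYh' (h : ℕ) (s : ℝ) : ℝ :=
  if s ≤ 1 / (h : ℝ) then 0 else (1/3) * s ^ (-(2:ℝ)/3)

lemma inv_rpow_third {h : ℕ} (hh : 1 ≤ h) :
    (1 / (h : ℝ)) ^ ((1:ℝ)/3) = (h : ℝ) ^ (-(1:ℝ)/3) := by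
  have h0 : (0:ℝ) ≤ h := by positivity
  rw [one_div, Real.inv_rpow h0, neg_div, Real.rpow_neg h0]

lemma maniaYh'_bound {h : ℕ} (hh : 1 ≤ h) (s : ℝ) : |maniaYh' h s| ≤ (h:ℝ) := by
  have h1 : (1:ℝ) ≤ h := by exact_mod_cast hh
  unfold maniaYh'
  split_ifs with hs
  · simp only [abs_zero]; positivity
  · push_neg at hs
    have hinv : (0:ℝ) < 1/h := by positivity
    have hs0 : (0:ℝ) < s := lt_trans hinv hs
    rw [abs_of_nonneg (by positivity)]
    have hb : s ^ (-(2:ℝ)/3) ≤ (1/(h:ℝ)) ^ (-(2:ℝ)/3) :=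
      Real.rpow_le_rpow_of_nonpos hinv hs.le (by norm_num)
    have h2 : (1/(h:ℝ)) ^ (-(2:ℝ)/3) = (h:ℝ) ^ ((2:ℝ)/3) := by
      rw [one_div, Real.inv_rpow (by positivity), ← Real.rpow_neg (by positivity)]
      norm_num
    have h3 : (h:ℝ) ^ ((2:ℝ)/3) ≤ (h:ℝ) ^ (1:ℝ) :=
      Real.rpow_le_rpow_of_exponent_le h1 (by norm_num)
    rw [Real.rpow_one] at h3
    rw [h2] at hb
    nlinarith

lemma maniaYh'_meas (h : ℕ) : Measurable (maniaYh' h) := by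
  unfold maniaYh'
  exact Measurable.ite (measurableSet_le measurable_id measurable_const)
    measurable_const (by fun_prop)

lemma maniaYh'_intInt {h : ℕ} (hh : 1 ≤ h) (a b : ℝ) :
    IntervalIntegrable (maniaYh' h) volume a b := by
  rw [intervalIntegrable_iff]
  refine Integrable.mono' (g := fun _ => (h:ℝ))
    (integrableOn_const ?_) ((maniaYh'_meas h).aestronglyMeasurable) ?_
  · rw [Set.uIoc]; exact measure_Ioc_lt_top.ne
  · exact Filter.Eventually.of_forall fun s => by
      simpa [Real.norm_eq_abs] using maniaYh'_bound hh s

lemma maniaYh_ftc {h : ℕ} (hh : 1 ≤ h) {x : ℝ} (hx : x ∈ Set.Icc (0:ℝ) 1) :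
    ∫ s in (0:ℝ)..x, maniaYh' h s = maniaYh h x - (h:ℝ) ^ (-(1:ℝ)/3) := by
  have h1 : (1:ℝ) ≤ h := by exact_mod_cast hh
  have hinv : (0:ℝ) < 1/h := by positivity
  have hzero : ∀ c : ℝ, 0 ≤ c → c ≤ 1/(h:ℝ) → (∫ s in (0:ℝ)..c, maniaYh' h s) = 0 := by
    intro c hc0 hc
    rw [intervalIntegral.integral_congr (g := fun _ => (0:ℝ)) ?_, intervalIntegral.integral_zero]
    intro s hs
    rw [Set.uIcc_of_le hc0] at hs
    rw [maniaYh', if_pos (hs.2.trans hc)]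
  by_cases hxh : x ≤ 1/(h:ℝ)
  · rw [hzero x hx.1 hxh, maniaYh, if_pos hxh]; ring
  · push_neg at hxh
    rw [← intervalIntegral.integral_add_adjacent_intervals
        (maniaYh'_intInt hh 0 (1/(h:ℝ))) (maniaYh'_intInt hh (1/(h:ℝ)) x),
      hzero (1/(h:ℝ)) hinv.le le_rfl]
    have hcong : (∫ s in (1/(h:ℝ))..x, maniaYh' h s)
        = ∫ s in (1/(h:ℝ))..x, (1/3) * s ^ (-(2:ℝ)/3) := by
      apply intervalIntegral.integral_congr_ae
      filter_upwards with s hs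
      rw [Set.uIoc_of_le hxh.le] at hs
      rw [maniaYh', if_neg (not_le.2 hs.1)]
    rw [hcong, intervalIntegral.integral_const_mul,
      integral_rpow (Or.inl (by norm_num))]
    have e : (-(2:ℝ)/3 + 1) = (1:ℝ)/3 := by norm_num
    rw [e, inv_rpow_third hh, maniaYh, if_neg (not_le.2 hxh)]
    ring

lemma maniaYh_memW11 {h : ℕ} (hh : 1 ≤ h) : MemW11 (maniaYh h) (maniaYh' h) := by
  refine ⟨maniaYh'_intInt hh 0 1, fun x hx => ?_⟩
  have h0 : maniaYh h 0 = (h:ℝ) ^ (-(1:ℝ)/3) := by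
    rw [maniaYh, if_pos (by positivity)]
  rw [maniaYh_ftc hh hx, h0]; ring

lemma maniaYh_lip {h : ℕ} (hh : 1 ≤ h) :
    LipschitzOnWith (h : ℝ≥0) (maniaYh h) (Set.Icc 0 1) := by
  apply LipschitzOnWith.of_dist_le_mul
  intro x hx y hy
  rw [Real.dist_eq, Real.dist_eq]
  have key : maniaYh h x - maniaYh h y = ∫ s in y..x, maniaYh' h s := by
    rw [← intervalIntegral.integral_interval_sub_left
        (maniaYh'_intInt hh 0 x) (maniaYh'_intInt hh 0 y),
      maniaYh_ftc hh hx, maniaYh_ftc hh hy]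
    ring
  have hb := intervalIntegral.norm_integral_le_of_norm_le_const
    (C := (h:ℝ)) (f := maniaYh' h) (a := y) (b := x)
    (fun s _ => by simpa [Real.norm_eq_abs] using maniaYh'_bound hh s)
  calc |maniaYh h x - maniaYh h y| = |∫ s in y..x, maniaYh' h s| := by rw [key]
    _ ≤ (h:ℝ) * |x - y| := by simpa [Real.norm_eq_abs] using hb
    _ = ((h : ℝ≥0) : ℝ) * |x - y| := by norm_num

lemma rpow_third_cube {s : ℝ} (hs : 0 ≤ s) : (s ^ ((1:ℝ)/3)) ^ (3:ℕ) = s := by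
  rw [← Real.rpow_natCast (s ^ ((1:ℝ)/3)) 3, ← Real.rpow_mul hs]
  norm_num

lemma maniaF_yh_zero {h : ℕ} (hh : 1 ≤ h) : ManiaF (maniaYh h) (maniaYh' h) = 0 := by
  refine le_antisymm ?_ zero_le
  have hpt : ∀ s ∈ Set.Icc (0:ℝ) 1,
      ENNReal.ofReal ((maniaYh h s ^ 3 - s) ^ 2 * maniaYh' h s ^ 6) ≤ 0 := by
    intro s hs
    by_cases hsh : s ≤ 1/(h:ℝ)
    · rw [maniaYh', if_pos hsh]; simp
    · rw [maniaYh, maniaYh', if_neg hsh, if_neg hsh, rpow_third_cube hs.1]; simp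
  calc ManiaF (maniaYh h) (maniaYh' h)
      ≤ ∫⁻ _ in Set.Icc (0:ℝ) 1, 0 := setLIntegral_mono' measurableSet_Icc hpt
    _ = 0 := lintegral_zero

lemma maniaF_y_zero :
    ManiaF (fun s : ℝ => s ^ ((1:ℝ)/3)) (fun s : ℝ => (1/3) * s ^ (-(2:ℝ)/3)) = 0 := by
  refine le_antisymm ?_ zero_le
  have hpt : ∀ s ∈ Set.Icc (0:ℝ) 1,
      ENNReal.ofReal (((s ^ ((1:ℝ)/3)) ^ 3 - s) ^ 2 * ((1/3) * s ^ (-(2:ℝ)/3)) ^ 6) ≤ 0 := by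
    intro s hs
    rw [rpow_third_cube hs.1]; simp
  calc ManiaF (fun s : ℝ => s ^ ((1:ℝ)/3)) (fun s : ℝ => (1/3) * s ^ (-(2:ℝ)/3))
      ≤ ∫⁻ _ in Set.Icc (0:ℝ) 1, 0 := setLIntegral_mono' measurableSet_Icc hpt
    _ = 0 := lintegral_zero

lemma mania_deriv_L1 {h : ℕ} (hh : 1 ≤ h) :
    ∫ s in Set.Icc (0:ℝ) 1, |maniaYh' h s - (1/3) * s ^ (-(2:ℝ)/3)|
      = (h:ℝ) ^ (-(1:ℝ)/3) := by
  have h1 : (1:ℝ) ≤ h := by exact_mod_cast hh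
  have hinv0 : (0:ℝ) < 1/h := by positivity
  have hinv1 : (1:ℝ)/h ≤ 1 := by
    rw [div_le_one (by positivity)]; exact h1
  have hint1 : IntegrableOn (fun s : ℝ => |maniaYh' h s - (1/3) * s ^ (-(2:ℝ)/3)|)
      (Set.Ioc 0 (1/(h:ℝ))) volume := by
    have hbase : IntegrableOn (fun s : ℝ => (1/3) * s ^ (-(2:ℝ)/3))
        (Set.Ioc 0 (1/(h:ℝ))) volume :=
      ((intervalIntegral.intervalIntegrable_rpow' (by norm_num)).const_mul (1/3 : ℝ)).1
    refine hbase.congr_fun (fun s hs => ?_) measurableSet_Ioc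
    have hs0 : (0:ℝ) < s := hs.1
    rw [maniaYh', if_pos hs.2, zero_sub, abs_neg, abs_of_nonneg (by positivity)]
  have hint2 : IntegrableOn (fun s : ℝ => |maniaYh' h s - (1/3) * s ^ (-(2:ℝ)/3)|)
      (Set.Ioc (1/(h:ℝ)) 1) volume := by
    refine (integrableOn_zero :
      IntegrableOn (fun _ : ℝ => (0:ℝ)) _ _).congr_fun (fun s hs => ?_) measurableSet_Ioc
    rw [maniaYh', if_neg (not_le.2 hs.1)]
    simp
  rw [MeasureTheory.integral_Icc_eq_integral_Ioc,
    ← Set.Ioc_union_Ioc_eq_Ioc hinv0.le hinv1,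
    MeasureTheory.setIntegral_union (Set.Ioc_disjoint_Ioc_of_le le_rfl) measurableSet_Ioc hint1 hint2]
  have e1 : ∫ s in Set.Ioc (0:ℝ) (1/(h:ℝ)), |maniaYh' h s - (1/3) * s ^ (-(2:ℝ)/3)|
      = ∫ s in Set.Ioc (0:ℝ) (1/(h:ℝ)), (1/3) * s ^ (-(2:ℝ)/3) := by
    refine setIntegral_congr_fun measurableSet_Ioc fun s hs => ?_
    have hs0 : (0:ℝ) < s := hs.1
    rw [maniaYh', if_pos hs.2, zero_sub, abs_neg, abs_of_nonneg (by positivity)]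
  have e2 : ∫ s in Set.Ioc ((1:ℝ)/(h:ℝ)) 1, |maniaYh' h s - (1/3) * s ^ (-(2:ℝ)/3)|
      = 0 := by
    rw [setIntegral_congr_fun measurableSet_Ioc
      (g := fun _ : ℝ => (0:ℝ)) (fun s hs => by rw [maniaYh', if_neg (not_le.2 hs.1)]; simp)]
    simp
  rw [e1, e2, ← intervalIntegral.integral_of_le hinv0.le,
    intervalIntegral.integral_const_mul, integral_rpow (Or.inl (by norm_num))]
  have e : (-(2:ℝ)/3 + 1) = (1:ℝ)/3 := by norm_num
  rw [e, inv_rpow_third hh, Real.zero_rpow (by norm_num)]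
  ring

lemma mania_tendsto_zero :
    Tendsto (fun h : ℕ => ((h:ℝ)) ^ (-(1:ℝ)/3)) atTop (nhds 0) := by
  have h1 : Tendsto (fun x : ℝ => x ^ (-((1:ℝ)/3))) atTop (nhds 0) :=
    tendsto_rpow_neg_atTop (by norm_num)
  have h2 := h1.comp (tendsto_natCast_atTop_atTop (R := ℝ))
  simpa [neg_div, Function.comp_def] using h2

lemma maniaYh_one {h : ℕ} (hh : 1 ≤ h) : maniaYh h 1 = 1 := by
  have h1 : (1:ℝ) ≤ h := by exact_mod_cast hh
  by_cases hc : (1:ℝ) ≤ 1/(h:ℝ)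
  · have hle : (h:ℝ) ≤ 1 := by
      rw [le_div_iff₀ (by positivity)] at hc; linarith
    have heq : (h:ℝ) = 1 := le_antisymm hle h1
    rw [maniaYh, if_pos hc, heq, Real.one_rpow]
  · rw [maniaYh, if_neg hc, Real.one_rpow]

/-- **Manià's example: non-occurrence of the Lavrentiev gap with only the final end
point condition `z(1) = 1`.** -/
theorem mania_no_gap_final_condition :
    (∀ h : ℕ, 1 ≤ h → ∃ C : ℝ≥0, LipschitzOnWith C (maniaYh h) (Set.Icc 0 1)) ∧
    (∀ h : ℕ, 1 ≤ h → MemW11 (maniaYh h) (maniaYh' h)) ∧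
    (∀ h : ℕ, 1 ≤ h → maniaYh h 1 = 1 ∧ (1:ℝ) ^ ((1:ℝ)/3) = 1) ∧
    (∀ h : ℕ, 1 ≤ h → ManiaF (maniaYh h) (maniaYh' h) = 0 ∧
      ManiaF (fun s : ℝ => s ^ ((1:ℝ)/3)) (fun s : ℝ => (1/3) * s ^ (-(2:ℝ)/3)) = 0) ∧
    -- uniform convergence `y_h → y` on `[0,1]`
    TendstoUniformlyOn (fun h s => maniaYh h s) (fun s : ℝ => s ^ ((1:ℝ)/3))
      atTop (Set.Icc 0 1) ∧
    -- convergence of the derivatives in `L¹([0,1])`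
    Tendsto (fun h => ∫ s in Set.Icc (0:ℝ) 1,
      |maniaYh' h s - (1/3) * s ^ (-(2:ℝ)/3)|) atTop (nhds 0) ∧
    -- non-occurrence of the Lavrentiev phenomenon for the single end point problem
    sInf {c : ℝ≥0∞ | ∃ z z' : ℝ → ℝ, MemW11 z z' ∧
      (∃ C : ℝ≥0, LipschitzOnWith C z (Set.Icc 0 1)) ∧ z 1 = 1 ∧ c = ManiaF z z'} = 0 := by
  refine ⟨fun h hh => ⟨(h : ℝ≥0), maniaYh_lip hh⟩,
    fun h hh => maniaYh_memW11 hh,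
    fun h hh => ⟨maniaYh_one hh, Real.one_rpow _⟩,
    fun h hh => ⟨maniaF_yh_zero hh, maniaF_y_zero⟩, ?_, ?_, ?_⟩
  · -- uniform convergence
    rw [Metric.tendstoUniformlyOn_iff]
    intro ε hε
    filter_upwards [eventually_ge_atTop 1,
      mania_tendsto_zero.eventually_lt_const hε] with h hh hlt
    intro x hx
    rw [Real.dist_eq]
    by_cases hxh : x ≤ 1/(h:ℝ)
    · have hx3 : x ^ ((1:ℝ)/3) ≤ (h:ℝ)^(-(1:ℝ)/3) := by
        rw [← inv_rpow_third hh]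
        exact Real.rpow_le_rpow hx.1 hxh (by norm_num)
      have hpos : 0 ≤ x ^ ((1:ℝ)/3) := Real.rpow_nonneg hx.1 _
      have hpos2 : 0 ≤ (h:ℝ)^(-(1:ℝ)/3) := Real.rpow_nonneg (by positivity) _
      rw [maniaYh, if_pos hxh]
      refine lt_of_le_of_lt ?_ hlt
      rw [abs_le]
      constructor <;> linarith
    · rw [maniaYh, if_neg hxh]
      simpa using hε
  · -- L¹ convergence of derivatives
    refine Tendsto.congr' ?_ mania_tendsto_zero
    filter_upwards [eventually_ge_atTop 1] with h hh
    exact (mania_deriv_L1 hh).symm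
  · -- the infimum is zero
    refine le_antisymm (sInf_le ?_) zero_le
    exact ⟨maniaYh 1, maniaYh' 1, maniaYh_memW11 le_rfl,
      ⟨(1 : ℝ≥0), by exact_mod_cast maniaYh_lip le_rfl⟩,
      maniaYh_one le_rfl, (maniaF_yh_zero le_rfl).symm⟩
end
end

section
/- (Manià's example: occurrence of the Lavrentiev phenomenon with both end point conditions.) Let F(z) = ∫_0^1 (z(s)³ − s)²·(z'(s))⁶ ds. There exists ε > 0 such that F(z) ≥ ε for every Lipschitz function z : [0,1] → ℝ with z(0)=0 and z(1)=1. Hence 0 = min{ F(z) : z ∈ W^{1,1}([0,1]), z(0)=0, z(1)=1 } < inf{ F(z) : z Lipschitz on [0,1], z(0)=0, z(1)=1 }. -/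
open MeasureTheory Set Filter ENNReal NNReal

noncomputable section

lemma ofReal_max_zero' (x : ℝ) : ENNReal.ofReal (max x 0) = ENNReal.ofReal x := by
  rcases le_total x 0 with h|h
  · rw [max_eq_right h, ENNReal.ofReal_zero, eq_comm, ENNReal.ofReal_eq_zero]; exact h
  · rw [max_eq_left h]

lemma ofReal_integral_le' {α} [MeasurableSpace α] {μ : Measure α} {f : α → ℝ}
    (hf : Integrable f μ) :
    ENNReal.ofReal (∫ x, f x ∂μ) ≤ ∫⁻ x, ENNReal.ofReal (f x) ∂μ := by
  calc ENNReal.ofReal (∫ x, f x ∂μ) ≤ ENNReal.ofReal (∫ x, max (f x) 0 ∂μ) :=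
        ENNReal.ofReal_le_ofReal (integral_mono hf hf.pos_part (fun x => le_max_left _ _))
    _ = ∫⁻ x, ENNReal.ofReal (max (f x) 0) ∂μ :=
        ofReal_integral_eq_lintegral_ofReal hf.pos_part
          (Eventually.of_forall fun x => le_max_right _ _)
    _ = ∫⁻ x, ENNReal.ofReal (f x) ∂μ := by simp [ofReal_max_zero']

lemma sixth_tangent (x l : ℝ) : 6*l^5*x - 5*l^6 ≤ x^6 := by
  nlinarith [sq_nonneg (x - l), sq_nonneg (x^2 + l*x), sq_nonneg (x + l), sq_nonneg l,
    mul_nonneg (sq_nonneg (x - l)) (sq_nonneg (x^2 + l*x)),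
    mul_nonneg (sq_nonneg (x - l)) (sq_nonneg (x + l)),
    mul_nonneg (mul_nonneg (sq_nonneg (x - l)) (sq_nonneg l)) (sq_nonneg l),
    mul_nonneg (mul_nonneg (sq_nonneg (x - l)) (sq_nonneg (x+l))) (sq_nonneg l)]

lemma cube_rpow_third {s : ℝ} (hs : 0 ≤ s) : (s ^ (1/3:ℝ)) ^ 3 = s := by
  rw [← Real.rpow_natCast (s ^ (1/3:ℝ)) 3, ← Real.rpow_mul hs]
  norm_num

set_option maxHeartbeats 1000000 in
lemma mania_lower (z z' : ℝ → ℝ) (hW : MemW11 z z')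
    (hLip : ∃ C : ℝ≥0, LipschitzOnWith C z (Set.Icc 0 1)) (h0 : z 0 = 0) (h1 : z 1 = 1) :
    ENNReal.ofReal (49/8000000) ≤ ManiaF z z' := by
  obtain ⟨C, hC⟩ := hLip
  set K : ℝ := max (C:ℝ) 1 with hKdef
  have hK1 : 1 ≤ K := le_max_right _ _
  have hK0 : 0 < K := lt_of_lt_of_le one_pos hK1
  -- Lipschitz bound near 0
  have hzK : ∀ s ∈ Icc (0:ℝ) 1, z s ≤ K * s := by
    intro s hs
    have hd := hC.dist_le_mul s hs 0 (by constructor <;> norm_num)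
    rw [Real.dist_eq, Real.dist_eq, h0, sub_zero, sub_zero] at hd
    calc z s ≤ |z s| := le_abs_self _
      _ ≤ (C:ℝ) * |s| := hd
      _ = (C:ℝ) * s := by rw [abs_of_nonneg hs.1]
      _ ≤ K * s := mul_le_mul_of_nonneg_right (le_max_left _ _) hs.1
  set s₀ : ℝ := min 1 ((4*K)⁻¹^3) with hs₀def
  have hs₀0 : 0 < s₀ := lt_min one_pos (by positivity)
  have hs₀1 : s₀ ≤ 1 := min_le_left _ _
  -- below the threshold on (0, s₀]
  have hsmall : ∀ s : ℝ, 0 < s → s ≤ s₀ → K * s ≤ (1/4) * s ^ (1/3:ℝ) := by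
    intro s hs hss
    have e1 : s ^ (2/3:ℝ) ≤ ((4*K)⁻¹)^2 := by
      calc s ^ (2/3:ℝ) ≤ (((4*K)⁻¹)^3) ^ (2/3:ℝ) :=
            Real.rpow_le_rpow hs.le (le_trans hss (min_le_right _ _)) (by norm_num)
        _ = ((4*K)⁻¹)^2 := by
            rw [← Real.rpow_natCast ((4*K)⁻¹) 3, ← Real.rpow_mul (by positivity),
              ← Real.rpow_natCast ((4*K)⁻¹) 2]
            norm_num
    have e2 : s ^ (1/3:ℝ) * s ^ (2/3:ℝ) = s := by
      rw [← Real.rpow_add hs]; norm_num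
    have h13 : 0 < s ^ (1/3:ℝ) := Real.rpow_pos_of_pos hs _
    have hinv : ((4*K)⁻¹)^2 = 1/(16*K^2) := by
      rw [inv_pow]; ring_nf
    rw [hinv] at e1
    calc K * s = K * (s ^ (1/3:ℝ) * s ^ (2/3:ℝ)) := by rw [e2]
      _ ≤ K * (s ^ (1/3:ℝ) * (1/(16*K^2))) := by
          apply mul_le_mul_of_nonneg_left _ hK0.le
          exact mul_le_mul_of_nonneg_left e1 h13.le
      _ = s ^ (1/3:ℝ) / (16*K) := by field_simp
      _ ≤ (1/4) * s ^ (1/3:ℝ) := by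
          rw [div_le_iff₀ (by positivity)]
          nlinarith
  -- the first crossing of the level (1/2) s^{1/3} past s₀
  set T : Set ℝ := {s ∈ Icc s₀ 1 | (1/2) * s ^ (1/3:ℝ) ≤ z s} with hTdef
  have hT1 : (1:ℝ) ∈ T := by
    refine ⟨⟨hs₀1, le_refl 1⟩, ?_⟩
    rw [Real.one_rpow, h1]; norm_num
  have hTsub : T ⊆ Icc s₀ 1 := fun x hx => hx.1
  have hTclosed : IsClosed T := by
    have : T = Icc s₀ 1 ∩ (fun s => z s - (1/2) * s ^ (1/3:ℝ)) ⁻¹' (Ici 0) := by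
      ext x; simp only [hTdef, mem_setOf_eq, mem_inter_iff, mem_preimage, mem_Ici, sub_nonneg]
    rw [this]
    refine ContinuousOn.preimage_isClosed_of_isClosed ?_ isClosed_Icc isClosed_Ici
    refine ContinuousOn.sub ?_ ?_
    · exact hC.continuousOn.mono (Icc_subset_Icc_left hs₀0.le)
    · exact (continuous_const.mul (Real.continuous_rpow_const (by norm_num))).continuousOn
  have hTcpt : IsCompact T := isCompact_Icc.of_isClosed_subset hTclosed hTsub
  set b : ℝ := sInf T with hbdef
  have hbT : b ∈ T := hTcpt.sInf_mem ⟨1, hT1⟩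
  have hbs₀ : s₀ ≤ b := hbT.1.1
  have hb0 : 0 < b := lt_of_lt_of_le hs₀0 hbs₀
  have hb1 : b ≤ 1 := hbT.1.2
  have hbz : (1/2) * b ^ (1/3:ℝ) ≤ z b := hbT.2
  -- strictly below threshold before b
  have hbelow : ∀ s : ℝ, 0 < s → s < b → z s ≤ (1/2) * s ^ (1/3:ℝ) := by
    intro s hs hsb
    have hs1 : s ≤ 1 := le_trans hsb.le hb1
    have h13 : 0 < s ^ (1/3:ℝ) := Real.rpow_pos_of_pos hs _
    rcases le_or_gt s s₀ with h | h
    · have := hsmall s hs h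
      have := hzK s ⟨hs.le, hs1⟩
      linarith
    · by_contra hcon
      push_neg at hcon
      have hsT : s ∈ T := ⟨⟨h.le, hs1⟩, hcon.le⟩
      have : b ≤ s := csInf_le hTcpt.bddBelow hsT
      linarith
  -- s₀ < b
  have hs₀b : s₀ < b := by
    rcases eq_or_lt_of_le hbs₀ with h | h
    · exfalso
      have h13 : 0 < s₀ ^ (1/3:ℝ) := Real.rpow_pos_of_pos hs₀0 _
      have e1 := hsmall s₀ hs₀0 (le_refl _)
      have e2 := hzK s₀ ⟨hs₀0.le, hs₀1⟩
      rw [← h] at hbz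
      linarith
    · exact h
  clear hs₀b
  -- B = b^{1/3}
  set B : ℝ := b ^ (1/3:ℝ) with hBdef
  have hB0 : 0 < B := Real.rpow_pos_of_pos hb0 _
  have hB1 : B ≤ 1 := Real.rpow_le_one hb0.le hb1 (by norm_num)
  have hB3 : B^3 = b := cube_rpow_third hb0.le
  -- Δ = z b - z (b/2) ≥ B/10
  have hhalf0 : 0 < b/2 := half_pos hb0
  have hhalfb : b/2 < b := half_lt_self hb0
  set Δ : ℝ := z b - z (b/2) with hΔdef
  have hΔ : B/10 ≤ Δ := by
    have h2 : z (b/2) ≤ (1/2) * (b/2) ^ (1/3:ℝ) := hbelow (b/2) hhalf0 hhalfb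
    have h3 : (b/2 : ℝ) ^ (1/3:ℝ) = B * (1/2:ℝ) ^ (1/3:ℝ) := by
      rw [show (b/2 : ℝ) = b * (1/2) by ring, Real.mul_rpow hb0.le (by norm_num)]
    have h4 : ((1:ℝ)/2) ^ (1/3:ℝ) ≤ 4/5 := by
      calc ((1:ℝ)/2) ^ (1/3:ℝ) ≤ (((4:ℝ)/5)^3) ^ (1/3:ℝ) :=
            Real.rpow_le_rpow (by norm_num) (by norm_num) (by norm_num)
        _ = 4/5 := by
            rw [← Real.rpow_natCast ((4:ℝ)/5) 3, ← Real.rpow_mul (by norm_num)]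
            norm_num
    have h5 : (b/2 : ℝ) ^ (1/3:ℝ) ≤ (4/5) * B := by
      rw [h3]; nlinarith
    nlinarith
  -- the integral of z' over (b/2, b) is Δ
  have i01 : IntervalIntegrable z' volume 0 1 := hW.1
  have ib : IntervalIntegrable z' volume 0 b := by
    apply i01.mono_set
    rw [uIcc_of_le hb0.le, uIcc_of_le zero_le_one]
    exact Icc_subset_Icc_right hb1
  have ib2 : IntervalIntegrable z' volume 0 (b/2) := by
    apply i01.mono_set
    rw [uIcc_of_le hhalf0.le, uIcc_of_le zero_le_one]
    exact Icc_subset_Icc_right (le_trans hhalfb.le hb1)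
  have ihalf : IntervalIntegrable z' volume (b/2) b := by
    apply ib.mono_set
    rw [uIcc_of_le hhalfb.le, uIcc_of_le hb0.le]
    exact Icc_subset_Icc_left hhalf0.le
  have izo : IntegrableOn z' (Ioo (b/2) b) volume :=
    ihalf.1.mono_set Ioo_subset_Ioc_self
  have hΔint : ∫ s in Ioo (b/2) b, z' s = Δ := by
    have e1 := intervalIntegral.integral_interval_sub_left ib ib2
    have e2 := hW.2 b ⟨hb0.le, hb1⟩
    have e3 := hW.2 (b/2) ⟨hhalf0.le, le_trans hhalfb.le hb1⟩
    have e4 : ∫ s in (b/2)..b, z' s = Δ := by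
      rw [← e1, hΔdef, e2, e3]; ring
    rw [← e4, intervalIntegral.integral_of_le hhalfb.le, integral_Ioc_eq_integral_Ioo]
  -- tangent parameter
  set l : ℝ := 1/(5*B^2) with hldef
  have hl0 : 0 < l := by positivity
  set g : ℝ → ℝ := fun s => (49/256) * B^6 * (6*l^5 * z' s - 5*l^6) with hgdef
  have hgint : IntegrableOn g (Ioo (b/2) b) volume := by
    apply Integrable.const_mul
    apply Integrable.sub (izo.const_mul _)
    exact integrableOn_const measure_Ioo_lt_top.ne
  -- pointwise bound
  have hpt : ∀ s ∈ Ioo (b/2) b, g s ≤ (z s ^ 3 - s)^2 * z' s ^ 6 := by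
    intro s hs
    have hs0 : 0 < s := lt_trans hhalf0 hs.1
    have hzs : z s ≤ (1/2) * s ^ (1/3:ℝ) := hbelow s hs0 hs.2
    have hcube : (s ^ (1/3:ℝ)) ^ 3 = s := cube_rpow_third hs0.le
    have hz3 : z s ^ 3 ≤ s/8 := by
      rcases le_or_gt (z s) 0 with h | h
      · have : z s ^ 3 ≤ 0 := Odd.pow_nonpos ⟨1, by norm_num⟩ h
        linarith
      · nlinarith [pow_le_pow_left₀ h.le hzs 3, hcube]
    have hsB : B^3/2 < s := by rw [hB3]; exact hs.1
    have hsq : (49/256) * B^6 ≤ (z s ^ 3 - s)^2 := by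
      have hu : (7/8)*s ≤ s - z s^3 := by linarith
      have h2 : ((7/8)*s)^2 ≤ (s - z s^3)^2 := pow_le_pow_left₀ (by positivity) hu 2
      have h3 : (B^3/2)^2 ≤ s^2 := pow_le_pow_left₀ (by positivity) hsB.le 2
      nlinarith [h2, h3]
    have htan : 6*l^5 * z' s - 5*l^6 ≤ z' s ^ 6 := sixth_tangent (z' s) l
    have hz6 : (0:ℝ) ≤ z' s ^ 6 := by positivity
    calc g s ≤ (49/256) * B^6 * z' s ^ 6 := by
          apply mul_le_mul_of_nonneg_left htan (by positivity)
      _ ≤ (z s ^ 3 - s)^2 * z' s ^ 6 := mul_le_mul_of_nonneg_right hsq hz6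
  -- value of ∫ g
  have hgval : ∫ s in Ioo (b/2) b, g s =
      (49/256) * B^6 * (6*l^5 * Δ - 5*l^6 * (b - b/2)) := by
    rw [hgdef]
    simp only
    rw [integral_const_mul]
    congr 1
    rw [integral_sub (izo.const_mul _) (integrableOn_const measure_Ioo_lt_top.ne),
      integral_const_mul, hΔint, setIntegral_const, Real.volume_real_Ioo_of_le (by linarith), smul_eq_mul]
    ring
  -- arithmetic lower bound
  have harith : (49:ℝ)/8000000 ≤ ∫ s in Ioo (b/2) b, g s := by
    rw [hgval, hldef, ← hB3]
    have h2 : (0:ℝ) < B^2 := by positivity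
    have key : 1/(31250*B^9) ≤ 6*(1/(5*B^2))^5 * Δ - 5*(1/(5*B^2))^6 * (B^3 - B^3/2) := by
      have e5 : (1/(5*B^2))^5 = 1/(3125 * B^10) := by
        rw [div_pow, one_pow]; ring_nf
      have e6 : (1/(5*B^2))^6 = 1/(15625 * B^12) := by
        rw [div_pow, one_pow]; ring_nf
      rw [e5, e6]
      have hB10 : (0:ℝ) < B^10 := by positivity
      have hB12 : (0:ℝ) < B^12 := by positivity
      have t1 : 6 * (1/(3125 * B^10)) * Δ ≥ 6 * (1/(3125 * B^10)) * (B/10) := by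
        apply mul_le_mul_of_nonneg_left hΔ (by positivity)
      have t2 : 6 * (1/(3125 * B^10)) * (B/10) = 3/(15625 * B^9) := by
        field_simp; ring
      have t3 : 5 * (1/(15625 * B^12)) * (B^3 - B^3/2) = 1/(6250 * B^9) := by
        field_simp; ring
      have t4 : 3/(15625 * B^9) - 1/(6250 * B^9) = 1/(31250*B^9) := by
        field_simp; ring
      linarith
    have hB9 : (0:ℝ) < B^9 := by positivity
    have hB3' : B^3 ≤ 1 := pow_le_one₀ hB0.le hB1
    have step1 := mul_le_mul_of_nonneg_left key (show (0:ℝ) ≤ 49/256*B^6 by positivity)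
    have e7 : (49:ℝ)/256 * B^6 * (1/(31250*B^9)) = 49/(8000000*B^3) := by
      field_simp; ring
    have e8 : (49:ℝ)/8000000 ≤ 49/(8000000*B^3) := by
      rw [div_le_div_iff₀ (by norm_num) (by positivity)]
      nlinarith
    rw [e7] at step1
    linarith
  -- chain
  calc ENNReal.ofReal (49/8000000)
      ≤ ENNReal.ofReal (∫ s in Ioo (b/2) b, g s) := ENNReal.ofReal_le_ofReal harith
    _ ≤ ∫⁻ s in Ioo (b/2) b, ENNReal.ofReal (g s) := ofReal_integral_le' hgint
    _ ≤ ∫⁻ s in Ioo (b/2) b, ENNReal.ofReal ((z s ^ 3 - s)^2 * z' s ^ 6) := by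
        apply lintegral_mono_ae
        rw [ae_restrict_iff' measurableSet_Ioo]
        exact ae_of_all _ fun s hs => ENNReal.ofReal_le_ofReal (hpt s hs)
    _ ≤ ManiaF z z' := by
        apply lintegral_mono_set
        intro x hx
        exact ⟨le_trans hhalf0.le hx.1.le, le_trans hx.2.le hb1⟩

lemma cuberoot_mem : MemW11 (fun s => s ^ (1/3 : ℝ)) (fun s => (1/3) * s ^ (-2/3 : ℝ)) := by
  constructor
  · exact (intervalIntegral.intervalIntegrable_rpow' (by norm_num)).const_mul _
  · intro x hx
    have h0 : (0:ℝ) ^ (1/3:ℝ) = 0 := by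
      rw [Real.zero_rpow]; norm_num
    rw [intervalIntegral.integral_const_mul, integral_rpow (Or.inl (by norm_num))]
    have h1 : (-2/3 : ℝ) + 1 = 1/3 := by norm_num
    rw [h1]
    simp only [h0]
    ring

lemma cuberoot_zero : ManiaF (fun s => s ^ (1/3 : ℝ)) (fun s => (1/3) * s ^ (-2/3 : ℝ)) = 0 := by
  unfold ManiaF
  rw [setLIntegral_congr_fun measurableSet_Icc
    (fun s hs => ?_), lintegral_zero]
  have : (s ^ (1/3:ℝ)) ^ 3 = s := by
    rw [← Real.rpow_natCast (s ^ (1/3:ℝ)) 3, ← Real.rpow_mul hs.1]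
    norm_num
  rw [this]
  simp

lemma zero_mem : (0 : ℝ≥0∞) ∈ {c : ℝ≥0∞ | ∃ z z' : ℝ → ℝ, MemW11 z z' ∧ z 0 = 0 ∧ z 1 = 1 ∧
      c = ManiaF z z'} := by
  refine ⟨_, _, cuberoot_mem, ?_, ?_, cuberoot_zero.symm⟩
  · show (0:ℝ) ^ (1/3:ℝ) = 0
    rw [Real.zero_rpow]; norm_num
  · show (1:ℝ) ^ (1/3:ℝ) = 1
    exact Real.one_rpow _

/-- **Manià's example: occurrence of the Lavrentiev phenomenon with both end point
conditions `z(0)=0`, `z(1)=1`.** -/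
theorem mania_lavrentiev_phenomenon :
    (∃ ε : ℝ, 0 < ε ∧ ∀ z z' : ℝ → ℝ, MemW11 z z' →
      (∃ C : ℝ≥0, LipschitzOnWith C z (Set.Icc 0 1)) → z 0 = 0 → z 1 = 1 →
      ENNReal.ofReal ε ≤ ManiaF z z') ∧
    -- the minimum over `W^{1,1}` is `0` and it is attained
    (0 : ℝ≥0∞) ∈ {c : ℝ≥0∞ | ∃ z z' : ℝ → ℝ, MemW11 z z' ∧ z 0 = 0 ∧ z 1 = 1 ∧
      c = ManiaF z z'} ∧
    sInf {c : ℝ≥0∞ | ∃ z z' : ℝ → ℝ, MemW11 z z' ∧ z 0 = 0 ∧ z 1 = 1 ∧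
      c = ManiaF z z'} = 0 ∧
    -- the infimum over Lipschitz functions is strictly positive
    0 < sInf {c : ℝ≥0∞ | ∃ z z' : ℝ → ℝ, MemW11 z z' ∧
      (∃ C : ℝ≥0, LipschitzOnWith C z (Set.Icc 0 1)) ∧ z 0 = 0 ∧ z 1 = 1 ∧
      c = ManiaF z z'} := by
  refine ⟨⟨49/8000000, by norm_num, fun z z' hW hL h0 h1 => mania_lower z z' hW hL h0 h1⟩,
    zero_mem, le_antisymm (sInf_le zero_mem) zero_le, ?_⟩
  have hle : ENNReal.ofReal (49/8000000) ≤ sInf {c : ℝ≥0∞ | ∃ z z' : ℝ → ℝ, MemW11 z z' ∧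
      (∃ C : ℝ≥0, LipschitzOnWith C z (Set.Icc 0 1)) ∧ z 0 = 0 ∧ z 1 = 1 ∧
      c = ManiaF z z'} := by
    refine le_sInf fun c hc => ?_
    obtain ⟨z, z', hW, hL, h0, h1, rfl⟩ := hc
    exact mania_lower z z' hW hL h0 h1
  refine lt_of_lt_of_le ?_ hle
  rw [ENNReal.ofReal_pos]
  norm_num
end
end
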